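/- arXiv:1505.01379 — 9 statements merged into one kernel-verified Lean document; each statement's English description precedes it below -/
import Mathlib

section
/- Let κ be a field and P(X,Y) ∈ κ[X,Y] a polynomial with P(0,0) = 0 and ∂P/∂Y(0,0) = 0. Let f(X) = Σ_{n≥1} f_n X^n ∈ κ[[X]] be a formal power series with zero constant term satisfying f(X) = P(X, f(X)). Then for every n ≥ 1, the family of coefficients c_m := [X^n Y^{m-1}] ((1 − ∂P/∂Y(X,Y)) · P(X,Y)^m), indexed by m ≥ 1, has finite support, and f_n = Σ_{m≥1} [X^n Y^{m-1}] ((1 − ∂P/∂Y(X,Y)) · P(X,Y)^m). -/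
open Polynomial PowerSeries

noncomputable section FSAux
open HahnSeries Polynomial
abbrev Gm : Type := ℤ ×ₗ ℤ
abbrev KK (κ : Type*) [Field κ] : Type _ := HahnSeries Gm κ

def dbl : ℤ →+ Gm where
  toFun i := toLex (2*i, 0)
  map_zero' := by simp
  map_add' a b := by rw [← toLex_add]; congr 1; simp [mul_add]

lemma dbl_inj : Function.Injective dbl := by
  intro a b h
  have := congrArg (fun g => (ofLex g).1) h
  simp only [dbl, AddMonoidHom.coe_mk, ZeroHom.coe_mk, ofLex_toLex] at this
  omega

lemma dbl_mono : ∀ g g' : ℤ, dbl g ≤ dbl g' ↔ g ≤ g' := by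
  intro g g'
  simp only [dbl, AddMonoidHom.coe_mk, ZeroHom.coe_mk, Prod.Lex.le_iff, ofLex_toLex]
  omega

variable {κ : Type*} [Field κ]

def Psi (κ : Type*) [Field κ] : PowerSeries κ →+* KK κ :=
  (embDomainRingHom dbl dbl_inj dbl_mono).comp (ofPowerSeries ℤ κ)

lemma Psi_coeff (F : PowerSeries κ) (a : ℕ) :
    (Psi κ F).coeff (toLex (2 * (a : ℤ), 0)) = PowerSeries.coeff a F := by
  have h1 : toLex (2 * (a : ℤ), (0:ℤ)) = dbl (a : ℤ) := rfl
  rw [h1]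
  have : (Psi κ F).coeff (dbl (a:ℤ)) = (ofPowerSeries ℤ κ F).coeff (a : ℤ) := by
    simpa [Psi, embDomainRingHom] using
      (embDomain_mk_coeff (f := ⇑dbl) dbl_inj dbl_mono (x := ofPowerSeries ℤ κ F) (a := (a:ℤ)))
  rw [this, ofPowerSeries_apply_coeff]

lemma Psi_support (F : PowerSeries κ) :
    (Psi κ F).support ⊆ {g | ∃ a : ℕ, g = toLex (2 * (a:ℤ), 0)} := by
  intro g hg
  have h1 := support_embDomain_subset hg
  obtain ⟨i, hi, rfl⟩ := h1
  have h2 := support_embDomain_subset hi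
  obtain ⟨a, _, rfl⟩ := h2
  exact ⟨a, rfl⟩

lemma mem_supp {a : KK κ} {g : Gm} : g ∈ a.support ↔ a.coeff g ≠ 0 := Iff.rfl

def yK (κ : Type*) [Field κ] : KK κ := single (toLex (1,1)) 1
def yiv (κ : Type*) [Field κ] : KK κ := single (toLex (-1,-1)) 1

lemma one_eq_single : (1 : KK κ) = single 0 1 := rfl

lemma y_mul_yiv : (yK κ) * (yiv κ) = 1 := by
  rw [yK, yiv, single_mul_single, one_eq_single, one_mul]
  congr 1

/-- region predicates -/
def Wge (r : ℤ) (a : KK κ) : Prop := ∀ g ∈ a.support, r ≤ (ofLex g).1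
def Jge (r : ℤ) (a : KK κ) : Prop := ∀ g ∈ a.support, r ≤ (ofLex g).2
def Jle (r : ℤ) (a : KK κ) : Prop := ∀ g ∈ a.support, (ofLex g).2 ≤ r
def Sreg (a : KK κ) : Prop := ∀ g ∈ a.support, 0 ≤ (ofLex g).2 ∧ (ofLex g).2 ≤ (ofLex g).1

lemma coeff_zero_of_Wge {r : ℤ} {a : KK κ} (h : Wge r a) {g : Gm} (hg : (ofLex g).1 < r) :
    a.coeff g = 0 := by
  by_contra hc; exact absurd (h g hc) (not_le.mpr hg)

lemma coeff_zero_of_Jge {r : ℤ} {a : KK κ} (h : Jge r a) {g : Gm} (hg : (ofLex g).2 < r) :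
    a.coeff g = 0 := by
  by_contra hc; exact absurd (h g hc) (not_le.mpr hg)

lemma coeff_zero_of_Jle {r : ℤ} {a : KK κ} (h : Jle r a) {g : Gm} (hg : r < (ofLex g).2) :
    a.coeff g = 0 := by
  by_contra hc; exact absurd (h g hc) (not_le.mpr hg)

lemma Wge.mul {r s : ℤ} {a b : KK κ} (ha : Wge r a) (hb : Wge s b) : Wge (r+s) (a*b) := by
  intro g hg
  obtain ⟨i, hi, j, hj, rfl⟩ := support_mul_subset hg
  exact add_le_add (ha i hi) (hb j hj)

lemma Jge.mul {r s : ℤ} {a b : KK κ} (ha : Jge r a) (hb : Jge s b) : Jge (r+s) (a*b) := by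
  intro g hg
  obtain ⟨i, hi, j, hj, rfl⟩ := support_mul_subset hg
  exact add_le_add (ha i hi) (hb j hj)

lemma Jle.mul {r s : ℤ} {a b : KK κ} (ha : Jle r a) (hb : Jle s b) : Jle (r+s) (a*b) := by
  intro g hg
  obtain ⟨i, hi, j, hj, rfl⟩ := support_mul_subset hg
  exact add_le_add (ha i hi) (hb j hj)

lemma Sreg.mul {a b : KK κ} (ha : Sreg a) (hb : Sreg b) : Sreg (a*b) := by
  intro g hg
  obtain ⟨i, hi, j, hj, rfl⟩ := support_mul_subset hg
  obtain ⟨h1, h2⟩ := ha i hi; obtain ⟨h3, h4⟩ := hb j hj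
  constructor
  · exact add_nonneg h1 h3
  · exact add_le_add h2 h4

lemma Sreg.one : Sreg (1 : KK κ) := by
  intro g hg
  rw [one_eq_single] at hg
  have := support_single_subset hg
  subst this
  constructor <;> simp

lemma Wge_one : Wge 0 (1 : KK κ) := by
  intro g hg
  rw [one_eq_single] at hg
  have := support_single_subset hg
  subst this; simp

lemma Wge.pow {r : ℤ} {a : KK κ} (ha : Wge r a) : ∀ k : ℕ, Wge (k * r) (a ^ k) := by
  intro k; induction k with
  | zero => simpa using Wge_one
  | succ k ih =>
      have := ih.mul ha
      rw [pow_succ]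
      have he : ((k:ℤ)+1) * r = (k:ℤ) * r + r := by ring
      rw [Nat.cast_add, Nat.cast_one, he]
      exact this

lemma Jle_one : Jle 0 (1 : KK κ) := by
  intro g hg
  rw [one_eq_single] at hg
  have := support_single_subset hg
  subst this; simp

lemma Jle.pow {r : ℤ} {a : KK κ} (ha : Jle r a) : ∀ k : ℕ, Jle (k * r) (a ^ k) := by
  intro k; induction k with
  | zero => simpa using Jle_one
  | succ k ih =>
      have := ih.mul ha
      rw [pow_succ]
      have he : ((k:ℤ)+1) * r = (k:ℤ) * r + r := by ring
      rw [Nat.cast_add, Nat.cast_one, he]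
      exact this

lemma orderTop_pos_of_support {a : KK κ} (h : ∀ g ∈ a.support, (0:Gm) < g) :
    0 < a.orderTop := by
  by_cases ha : a = 0
  · rw [ha, orderTop_zero]; exact WithTop.top_pos  -- maybe `WithTop.coe_lt_top`? try
  · rw [orderTop_of_ne_zero ha]
    exact_mod_cast h _ (a.isWF_support.min_mem (support_nonempty_iff.2 ha))

/-- positivity from the Wge 1 region -/
lemma orderTop_pos_of_Wge {a : KK κ} (h : Wge 1 a) : 0 < a.orderTop := by
  apply orderTop_pos_of_support
  intro g hg
  have h1 := h g hg
  have : (0:Gm) = toLex (0,0) := rfl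
  rw [this, show g = toLex (ofLex g) from rfl]
  exact Prod.Lex.lt_iff.mpr (Or.inl (by simp only [ofLex_toLex]; omega))

lemma hsum_Wge {α : Type} {r : ℤ} {s : SummableFamily Gm κ α} (h : ∀ i, Wge r (s i)) :
    Wge r s.hsum := by
  intro g hg
  rw [mem_supp, SummableFamily.coeff_hsum] at hg
  by_contra hc
  apply hg
  apply finsum_eq_zero_of_forall_eq_zero
  intro i
  exact coeff_zero_of_Wge (h i) (not_le.mp hc)

lemma hsum_Jge {α : Type} {r : ℤ} {s : SummableFamily Gm κ α} (h : ∀ i, Jge r (s i)) :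
    Jge r s.hsum := by
  intro g hg
  rw [mem_supp, SummableFamily.coeff_hsum] at hg
  by_contra hc
  apply hg
  apply finsum_eq_zero_of_forall_eq_zero
  intro i
  exact coeff_zero_of_Jge (h i) (not_le.mp hc)

def theta (κ : Type*) [Field κ] : Polynomial κ →+* KK κ :=
  (Psi κ).comp (Polynomial.coeToPowerSeries.ringHom)

lemma theta_coeff (q : Polynomial κ) (a : ℕ) :
    (theta κ q).coeff (toLex (2 * (a:ℤ), 0)) = q.coeff a := by
  rw [theta, RingHom.comp_apply, Psi_coeff]
  simp [Polynomial.coeToPowerSeries.ringHom_apply]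

lemma theta_support (q : Polynomial κ) :
    (theta κ q).support ⊆ {g | ∃ a : ℕ, g = toLex (2 * (a:ℤ), 0)} :=
  Psi_support _

def coeffHom (g : Gm) : KK κ →+ κ where
  toFun a := a.coeff g
  map_zero' := rfl
  map_add' := by intros; simp

lemma yK_pow (b : ℕ) : (yK κ) ^ b = single (toLex ((b:ℤ),(b:ℤ))) 1 := by
  rw [yK, single_pow, one_pow]
  have : b • toLex ((1:ℤ),(1:ℤ)) = toLex ((b:ℤ),(b:ℤ)) := by
    show toLex (b • ((1:ℤ),(1:ℤ))) = _
    congr 1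
    exact Prod.ext (by simp) (by simp)
  rw [this]

lemma term_coeff (q : Polynomial κ) (b : ℕ) (g : Gm) :
    (theta κ q * (yK κ) ^ b).coeff g = (theta κ q).coeff (g - toLex ((b:ℤ),(b:ℤ))) := by
  rw [yK_pow]
  have h := coeff_mul_single_add (r := (1:κ)) (x := theta κ q)
    (a := g - toLex ((b:ℤ),(b:ℤ))) (b := toLex ((b:ℤ),(b:ℤ)))
  rw [sub_add_cancel] at h
  rw [h, mul_one]

lemma evalK_coeff_sum (A : Polynomial (Polynomial κ)) (g : Gm) :
    (Polynomial.eval₂ (theta κ) (yK κ) A).coeff g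
      = ∑ b ∈ A.support, (theta κ (A.coeff b)).coeff (g - toLex ((b:ℤ),(b:ℤ))) := by
  rw [Polynomial.eval₂_eq_sum, Polynomial.sum]
  rw [show ∀ x : KK κ, x.coeff g = coeffHom g x from fun _ => rfl, map_sum]
  apply Finset.sum_congr rfl
  intro b _
  exact term_coeff _ _ _

lemma evalK_coeff (A : Polynomial (Polynomial κ)) (a b : ℕ) :
    (Polynomial.eval₂ (theta κ) (yK κ) A).coeff (toLex (2*(a:ℤ)+(b:ℤ), (b:ℤ)))
      = (A.coeff b).coeff a := by
  rw [evalK_coeff_sum]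
  rw [Finset.sum_eq_single b]
  · have : toLex (2*(a:ℤ)+(b:ℤ), (b:ℤ)) - toLex ((b:ℤ),(b:ℤ)) = toLex (2*(a:ℤ), 0) := by
      rw [← toLex_sub]; congr 1; simp
    rw [this, theta_coeff]
  · intro e _ he
    by_contra hc
    have hg := theta_support _ (mem_supp.mpr hc)
    obtain ⟨a', ha'⟩ := hg
    have : toLex (2*(a:ℤ)+(b:ℤ), (b:ℤ)) - toLex ((e:ℤ),(e:ℤ)) = toLex (2*(a:ℤ)+(b:ℤ)-e, (b:ℤ)-e) := by
      rw [← toLex_sub]; congr 1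
    rw [this] at ha'
    have := congrArg (fun g => (ofLex g).2) ha'
    simp at this
    omega
  · intro hb
    rw [Polynomial.notMem_support_iff.mp hb]
    simp [theta]

lemma evalK_support (A : Polynomial (Polynomial κ)) :
    (Polynomial.eval₂ (theta κ) (yK κ) A).support ⊆
      {g | ∃ a b : ℕ, g = toLex (2*(a:ℤ)+(b:ℤ), (b:ℤ)) ∧ (A.coeff b).coeff a ≠ 0} := by
  intro g hg
  rw [mem_supp, evalK_coeff_sum] at hg
  obtain ⟨b, _, hb⟩ := Finset.exists_ne_zero_of_sum_ne_zero hg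
  obtain ⟨a, ha⟩ := theta_support _ (mem_supp.mpr hb)
  have hgab : g = toLex (2*(a:ℤ)+(b:ℤ), (b:ℤ)) := by
    have : g - toLex ((b:ℤ),(b:ℤ)) = toLex (2*(a:ℤ),0) := ha
    have h2 := congrArg (fun z => z + toLex ((b:ℤ),(b:ℤ))) this
    simp only [sub_add_cancel] at h2
    rw [h2, ← toLex_add]; congr 1; exact Prod.ext (by simp) (by simp)
  refine ⟨a, b, hgab, ?_⟩
  rw [ha, theta_coeff] at hb
  exact hb

lemma Wge.mono {r r' : ℤ} {a : KK κ} (h : Wge r a) (hr : r' ≤ r) : Wge r' a :=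
  fun g hg => le_trans hr (h g hg)

lemma Wge.add {r : ℤ} {a b : KK κ} (ha : Wge r a) (hb : Wge r b) : Wge r (a + b) := by
  intro g hg
  rcases HahnSeries.support_add_subset _ _ hg with h | h
  exacts [ha g h, hb g h]

lemma Wge.neg {r : ℤ} {a : KK κ} (ha : Wge r a) : Wge r (-a) := by
  intro g hg; rw [HahnSeries.support_neg] at hg; exact ha g hg

lemma Wge.sub {r : ℤ} {a b : KK κ} (ha : Wge r a) (hb : Wge r b) : Wge r (a - b) := by
  rw [sub_eq_add_neg]; exact ha.add hb.neg

lemma Jge.add {r : ℤ} {a b : KK κ} (ha : Jge r a) (hb : Jge r b) : Jge r (a + b) := by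
  intro g hg
  rcases HahnSeries.support_add_subset _ _ hg with h | h
  exacts [ha g h, hb g h]

lemma Jge.neg {r : ℤ} {a : KK κ} (ha : Jge r a) : Jge r (-a) := by
  intro g hg; rw [HahnSeries.support_neg] at hg; exact ha g hg

lemma Jge.sub {r : ℤ} {a b : KK κ} (ha : Jge r a) (hb : Jge r b) : Jge r (a - b) := by
  rw [sub_eq_add_neg]; exact ha.add hb.neg

lemma Jge_one : Jge 0 (1 : KK κ) := by
  intro g hg
  rw [one_eq_single] at hg
  have := support_single_subset hg
  subst this; simp

lemma Jge.pow {r : ℤ} {a : KK κ} (ha : Jge r a) : ∀ k : ℕ, Jge (k * r) (a ^ k) := by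
  intro k; induction k with
  | zero => simpa using Jge_one
  | succ k ih =>
      have := ih.mul ha
      rw [pow_succ]
      have he : ((k:ℤ)+1) * r = (k:ℤ) * r + r := by ring
      rw [Nat.cast_add, Nat.cast_one, he]
      exact this

lemma Wge_single {r : ℤ} {g0 : Gm} {c : κ} (h : r ≤ (ofLex g0).1) : Wge r (single g0 c) := by
  intro g hg
  have := support_single_subset hg
  subst this; exact h

lemma Jge_single {r : ℤ} {g0 : Gm} {c : κ} (h : r ≤ (ofLex g0).2) : Jge r (single g0 c) := by
  intro g hg
  have := support_single_subset hg
  subst this; exact h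

lemma Jle_single {r : ℤ} {g0 : Gm} {c : κ} (h : (ofLex g0).2 ≤ r) : Jle r (single g0 c) := by
  intro g hg
  have := support_single_subset hg
  subst this; exact h

lemma Sreg.zero : Sreg (0 : KK κ) := by intro g hg; simp [HahnSeries.support_zero] at hg

lemma Sreg.add {a b : KK κ} (ha : Sreg a) (hb : Sreg b) : Sreg (a + b) := by
  intro g hg
  rcases HahnSeries.support_add_subset _ _ hg with h | h
  exacts [ha g h, hb g h]

lemma Sreg.neg {a : KK κ} (ha : Sreg a) : Sreg (-a) := by
  intro g hg; rw [HahnSeries.support_neg] at hg; exact ha g hg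

lemma Sreg.pow {a : KK κ} (ha : Sreg a) : ∀ k : ℕ, Sreg (a ^ k) := by
  intro k; induction k with
  | zero => simpa using Sreg.one
  | succ k ih => rw [pow_succ]; exact ih.mul ha

lemma Sreg.sum {α : Type*} {s : Finset α} {F : α → KK κ} (h : ∀ b ∈ s, Sreg (F b)) :
    Sreg (∑ b ∈ s, F b) := by
  classical
  induction s using Finset.induction_on with
  | empty => simpa using Sreg.zero
  | @insert a s' hx ih =>
      rw [Finset.sum_insert hx]
      exact (h a (Finset.mem_insert_self a s')).add
        (ih fun b hb => h b (Finset.mem_insert_of_mem hb))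

def SS (κ : Type*) [Field κ] : Subring (KK κ) where
  carrier := {a | Sreg a}
  mul_mem' := Sreg.mul
  one_mem' := Sreg.one
  add_mem' := Sreg.add
  zero_mem' := Sreg.zero
  neg_mem' := Sreg.neg

lemma Sreg_theta (q : Polynomial κ) : Sreg (theta κ q) := by
  intro g hg
  obtain ⟨a, rfl⟩ := theta_support q hg
  constructor <;> simp [Int.mul_nonneg]

lemma Sreg_yK : Sreg (yK κ) := by
  rw [yK]
  intro g hg
  have := support_single_subset hg
  subst this; exact ⟨by norm_num, by norm_num⟩

lemma Sreg.toJge {a : KK κ} (ha : Sreg a) : Jge 0 a := fun g hg => (ha g hg).1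

lemma Jge0_evalK (A : Polynomial (Polynomial κ)) :
    Jge 0 (Polynomial.eval₂ (theta κ) (yK κ) A) := by
  intro g hg
  obtain ⟨a, b, rfl, -⟩ := evalK_support A hg
  simp

lemma yiv_pow (b : ℕ) : (yiv κ) ^ b = single (toLex (-(b:ℤ),-(b:ℤ))) 1 := by
  rw [yiv, single_pow, one_pow]
  have : b • toLex ((-1:ℤ),(-1:ℤ)) = toLex ((-(b:ℤ)),(-(b:ℤ))) := by
    show toLex (b • ((-1:ℤ),(-1:ℤ))) = _
    congr 1
    exact Prod.ext (by simp) (by simp)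
  rw [this]

set_option maxHeartbeats 2000000 in
theorem main_thm {κ : Type*} [Field κ] (P : Polynomial (Polynomial κ))
    (h1 : (P.coeff 0).coeff 0 = 0) (h2 : (P.coeff 1).coeff 0 = 0)
    (f : PowerSeries κ) (hf0 : PowerSeries.constantCoeff f = 0)
    (hf : Polynomial.eval₂ Polynomial.coeToPowerSeries.ringHom f P = f) (n : ℕ) :
    {m : ℕ | 1 ≤ m ∧
        (((1 - Polynomial.derivative P) * P ^ m).coeff (m - 1)).coeff n ≠ 0}.Finite ∧
    PowerSeries.coeff n f =
      ∑ᶠ (m : ℕ) (_ : 1 ≤ m),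
        (((1 - Polynomial.derivative P) * P ^ m).coeff (m - 1)).coeff n := by
  classical
  set c : ℕ → κ := fun m => (((1 - Polynomial.derivative P) * P ^ m).coeff (m - 1)).coeff n
    with hc_def
  set g₀ : Gm := toLex (2*(n:ℤ) - 1, -1) with hg₀_def
  set p : KK κ := Polynomial.eval₂ (theta κ) (yK κ) P with hp_def
  set p' : KK κ := Polynomial.eval₂ (theta κ) (yK κ) (Polynomial.derivative P) with hp'_def
  set τ : KK κ := Psi κ f with hτ_def
  -- region facts
  have hpW : Wge 2 p := by
    intro g hg
    obtain ⟨a, b, rfl, hcne⟩ := evalK_support P hg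
    have hb0 : b = 0 → a ≠ 0 := fun hb ha => hcne (by rw [hb, ha]; exact h1)
    have hb1 : b = 1 → a ≠ 0 := fun hb ha => hcne (by rw [hb, ha]; exact h2)
    simp only [ofLex_toLex]
    omega
  have hp'W : Wge 1 p' := by
    intro g hg
    obtain ⟨a, b, rfl, hcne⟩ := evalK_support (Polynomial.derivative P) hg
    have hab : ¬(a = 0 ∧ b = 0) := by
      rintro ⟨ha, hb⟩
      apply hcne
      rw [ha, hb, Polynomial.coeff_derivative]
      simp [h2]
    simp only [ofLex_toLex]
    omega
  have hτsupp : ∀ g ∈ τ.support, ∃ a : ℕ, 1 ≤ a ∧ g = toLex (2*(a:ℤ), 0) := by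
    intro g hg
    obtain ⟨a, rfl⟩ := Psi_support f hg
    refine ⟨a, ?_, rfl⟩
    rcases Nat.eq_zero_or_pos a with ha | ha
    · exfalso
      apply mem_supp.mp hg
      subst ha
      rw [hτ_def, Psi_coeff]
      simpa [PowerSeries.coeff_zero_eq_constantCoeff] using hf0
    · exact ha
  have hτW : Wge 2 τ := by
    intro g hg
    obtain ⟨a, ha, rfl⟩ := hτsupp g hg
    simp only [ofLex_toLex]
    omega
  have hτJge : Jge 0 τ := by
    intro g hg; obtain ⟨a, -, rfl⟩ := hτsupp g hg; simp
  have hτJle : Jle 0 τ := by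
    intro g hg; obtain ⟨a, -, rfl⟩ := hτsupp g hg; simp
  have hτS : Sreg τ := by
    intro g hg; obtain ⟨a, -, rfl⟩ := hτsupp g hg
    constructor <;> simp [Int.mul_nonneg]
  -- the functional equation in KK
  have E1 : Polynomial.eval₂ (theta κ) τ P = τ := by
    have h := congrArg (Psi κ) hf
    rw [Polynomial.hom_eval₂] at h
    exact h
  -- division
  have hθmem : ∀ q : Polynomial κ, theta κ q ∈ SS κ := Sreg_theta
  set θ' : Polynomial κ →+* SS κ := (theta κ).codRestrict (SS κ) hθmem with hθ'_def
  have hθ'c : (SS κ).subtype.comp θ' = theta κ := RingHom.ext fun q => rfl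
  set τ' : SS κ := ⟨τ, hτS⟩ with hτ'_def
  set Q0 : Polynomial (SS κ) := Polynomial.X - P.map θ' with hQ0_def
  have hQmap : Q0.map (SS κ).subtype = Polynomial.X - P.map (theta κ) := by
    rw [hQ0_def, Polynomial.map_sub, Polynomial.map_X, Polynomial.map_map, hθ'c]
  have hroot : Q0.IsRoot τ' := by
    have hval : (SS κ).subtype (Q0.eval τ') = 0 := by
      rw [← Polynomial.eval₂_hom, ← Polynomial.eval_map, hQmap]
      rw [Polynomial.eval_sub, Polynomial.eval_X, Polynomial.eval_map]
      show τ - Polynomial.eval₂ (theta κ) τ P = 0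
      rw [E1, sub_self]
    exact Subtype.ext hval
  obtain ⟨u0, hu0⟩ := Polynomial.dvd_iff_isRoot.mpr hroot
  set upoly : Polynomial (KK κ) := u0.map (SS κ).subtype with hupoly_def
  have hKfact : Polynomial.X - P.map (theta κ) = (Polynomial.X - Polynomial.C τ) * upoly := by
    rw [← hQmap, hu0, Polynomial.map_mul, Polynomial.map_sub, Polynomial.map_X, Polynomial.map_C]
    rfl
  set u : KK κ := upoly.eval (yK κ) with hu_def
  set u' : KK κ := (Polynomial.derivative upoly).eval (yK κ) with hu'_def
  have F1 : yK κ - p = (yK κ - τ) * u := by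
    have h := congrArg (Polynomial.eval (yK κ)) hKfact
    simpa [Polynomial.eval_map, hp_def] using h
  have F2 : (1 : KK κ) - p' = u + (yK κ - τ) * u' := by
    have hD := congrArg Polynomial.derivative hKfact
    rw [Polynomial.derivative_sub, Polynomial.derivative_X, Polynomial.derivative_map,
      Polynomial.derivative_mul, Polynomial.derivative_sub, Polynomial.derivative_X,
      Polynomial.derivative_C, sub_zero, one_mul] at hD
    have h := congrArg (Polynomial.eval (yK κ)) hD
    simpa [Polynomial.eval_map, hp'_def] using h
  -- Sreg for u, u'
  have hSreg_evalmap : ∀ v : Polynomial (SS κ), Sreg ((v.map (SS κ).subtype).eval (yK κ)) := by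
    intro v
    rw [Polynomial.eval_eq_sum, Polynomial.sum]
    apply Sreg.sum
    intro b _
    apply Sreg.mul
    · rw [Polynomial.coeff_map]
      exact (v.coeff b).2
    · exact Sreg_yK.pow b
  have hSu : Sreg u := hSreg_evalmap u0
  have hSu' : Sreg u' := by
    rw [hu'_def, hupoly_def, Polynomial.derivative_map]
    exact hSreg_evalmap (Polynomial.derivative u0)
  -- nonzeroness
  have hyiv_ne : yiv κ ≠ 0 := by rw [yiv]; exact single_ne_zero one_ne_zero
  have hyiv_inv : (yiv κ)⁻¹ = yK κ := inv_eq_of_mul_eq_one_left y_mul_yiv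
  have hyp_ne : yK κ - p ≠ 0 := by
    intro h
    have hco : (yK κ - p).coeff (toLex (1,1)) = 1 := by
      rw [HahnSeries.coeff_sub, coeff_zero_of_Wge hpW (by norm_num), sub_zero, yK, HahnSeries.coeff_single_same]
    rw [h] at hco
    simp at hco
  have hyτ_ne : yK κ - τ ≠ 0 := by
    intro h
    have hco : (yK κ - τ).coeff (toLex (1,1)) = 1 := by
      rw [HahnSeries.coeff_sub, coeff_zero_of_Wge hτW (by norm_num), sub_zero, yK, HahnSeries.coeff_single_same]
    rw [h] at hco
    simp at hco
  have hu_ne : u ≠ 0 := by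
    intro h
    apply hyp_ne
    rw [F1, h, mul_zero]
  -- z's
  set zp : KK κ := p * yiv κ with hzp_def
  set zτ : KK κ := τ * yiv κ with hzτ_def
  have hyivW : Wge (-1) (yiv κ) := by rw [yiv]; exact Wge_single (by norm_num)
  have hyivJle : Jle (-1) (yiv κ) := by rw [yiv]; exact Jle_single (by norm_num)
  have hzpW : Wge 1 zp := by have := hpW.mul hyivW; norm_num at this; exact this
  have hzτW : Wge 1 zτ := by have := hτW.mul hyivW; norm_num at this; exact this
  have hzτJle : Jle (-1) zτ := by have := hτJle.mul hyivJle; norm_num at this; exact this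
  have hzp : 0 < zp.orderTop := orderTop_pos_of_Wge hzpW
  have hzτ : 0 < zτ.orderTop := orderTop_pos_of_Wge hzτW
  have s1p : (1 : KK κ) - zp = (yK κ - p) * yiv κ := by rw [sub_mul, y_mul_yiv]
  have s1τ : (1 : KK κ) - zτ = (yK κ - τ) * yiv κ := by rw [sub_mul, y_mul_yiv]
  have hinvp : ((1:KK κ) - zp)⁻¹ = (SummableFamily.powers zp).hsum :=
    inv_eq_of_mul_eq_one_right (SummableFamily.one_sub_self_mul_hsum_powers hzp)
  have hinvτ : ((1:KK κ) - zτ)⁻¹ = (SummableFamily.powers zτ).hsum :=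
    inv_eq_of_mul_eq_one_right (SummableFamily.one_sub_self_mul_hsum_powers hzτ)
  have hg₀ne0 : g₀ ≠ 0 := by
    intro h
    have := congrArg (fun g : Gm => (ofLex g).2) h
    rw [hg₀_def] at this
    simpa using this
  have hone_g₀ : (1 : KK κ).coeff g₀ = 0 := by
    rw [one_eq_single, HahnSeries.coeff_single, if_neg hg₀ne0]
  have hone_0 : (1 : KK κ).coeff 0 = 1 := by
    rw [one_eq_single, HahnSeries.coeff_single_same]
  have hg₀2 : (ofLex g₀).2 = -1 := by rw [hg₀_def]; rfl
  have hg₀1 : (ofLex g₀).1 = 2*(n:ℤ) - 1 := by rw [hg₀_def]; rfl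
  -- RES2
  have hyτinv : yK κ * (yK κ - τ)⁻¹ = ((1:KK κ) - zτ)⁻¹ := by
    rw [s1τ, mul_inv, hyiv_inv]
    ring
  have RES2 : (yK κ * (yK κ - τ)⁻¹).coeff g₀ = PowerSeries.coeff n f := by
    rw [hyτinv, hinvτ, SummableFamily.coeff_hsum]
    rw [finsum_eq_single _ 1 ?_]
    · have hadd : toLex (2*(n:ℤ), 0) + toLex ((-1:ℤ),(-1:ℤ)) = g₀ := by
        rw [← toLex_add, hg₀_def]
        exact congrArg toLex (Prod.ext (by simp; ring) (by simp))
      rw [SummableFamily.powers_of_orderTop_pos hzτ, pow_one, hzτ_def, yiv, ← hadd,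
        coeff_mul_single_add, mul_one, hτ_def, Psi_coeff]
    · intro k hk
      rw [SummableFamily.powers_of_orderTop_pos hzτ]
      match k, hk with
      | 0, _ => rw [pow_zero]; exact hone_g₀
      | (k+2), _ =>
        refine coeff_zero_of_Jle (hzτJle.pow (k+2)) ?_
        rw [hg₀2]
        push_cast
        omega
  -- u coefficient at 0
  have huτ : u = ((1:KK κ) - zp) * (SummableFamily.powers zτ).hsum := by
    have hue : u = (yK κ - p) * (yK κ - τ)⁻¹ := by
      rw [F1, mul_comm (yK κ - τ) u, mul_assoc, mul_inv_cancel₀ hyτ_ne, mul_one]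
    rw [← hinvτ, s1p, s1τ, mul_inv, hyiv_inv, hue]
    linear_combination (-((yK κ - p) * (yK κ - τ)⁻¹)) * y_mul_yiv (κ := κ)
  have hH0 : (SummableFamily.powers zτ).hsum.coeff 0 = 1 := by
    rw [SummableFamily.coeff_hsum]
    rw [finsum_eq_single _ 0 ?_]
    · rw [SummableFamily.powers_of_orderTop_pos hzτ, pow_zero]; exact hone_0
    · intro k hk
      rw [SummableFamily.powers_of_orderTop_pos hzτ]
      refine coeff_zero_of_Jle (hzτJle.pow k) ?_
      show (k:ℤ) * (-1) < (0:ℤ)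
      omega
  have hucoeff0 : u.coeff 0 = 1 := by
    rw [huτ, sub_mul, one_mul, HahnSeries.coeff_sub, hH0]
    have hzpH : (zp * (SummableFamily.powers zτ).hsum).coeff 0 = 0 := by
      refine coeff_zero_of_Wge (hzpW.mul (hsum_Wge (r := 0) fun k => ?_))
        (by show (0:ℤ) < 1 + 0; norm_num)
      rw [SummableFamily.powers_of_orderTop_pos hzτ]
      exact (hzτW.pow k).mono (by positivity)
    rw [hzpH, sub_zero]
  have hw : 0 < ((1:KK κ) - u).orderTop := by
    apply orderTop_pos_of_support
    intro g hg
    rcases eq_or_ne g 0 with rfl | hne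
    · exfalso
      apply mem_supp.mp hg
      rw [HahnSeries.coeff_sub, hucoeff0, hone_0, sub_self]
    · have hgu : g ∈ u.support := by
        rw [mem_supp] at hg ⊢
        intro h0
        apply hg
        rw [HahnSeries.coeff_sub, h0, one_eq_single, HahnSeries.coeff_single, if_neg hne, sub_zero]
      obtain ⟨hj, hjw⟩ := hSu g hgu
      have hco : ofLex g ≠ ((0:ℤ),(0:ℤ)) := fun hh => hne (by
        rw [show g = toLex (ofLex g) from rfl, hh]; rfl)
      have hW : 0 < (ofLex g).1 := by
        have h1 : (ofLex g).1 ≠ 0 ∨ (ofLex g).2 ≠ 0 := by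
          by_contra hq
          push_neg at hq
          exact hco (Prod.ext hq.1 hq.2)
        omega
      rw [show g = toLex (ofLex g) from rfl, show (0:Gm) = toLex ((0:ℤ),(0:ℤ)) from rfl]
      exact Prod.Lex.lt_iff.mpr (Or.inl hW)
  have hu_inv : u⁻¹ = (SummableFamily.powers ((1:KK κ) - u)).hsum := by
    apply inv_eq_of_mul_eq_one_right
    have h := SummableFamily.one_sub_self_mul_hsum_powers hw
    rwa [sub_sub_cancel] at h
  have hJuinv : Jge 0 (u⁻¹) := by
    rw [hu_inv]
    apply hsum_Jge
    intro k
    rw [SummableFamily.powers_of_orderTop_pos hw]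
    have h := (Jge_one.sub hSu.toJge).pow k
    simpa using h
  have RES3 : (yK κ * u' * u⁻¹).coeff g₀ = 0 := by
    have h1 : Jge 1 (yK κ) := by rw [yK]; exact Jge_single (by norm_num)
    have hJ := (h1.mul hSu'.toJge).mul hJuinv
    refine coeff_zero_of_Jge hJ ?_
    rw [hg₀2]
    norm_num
  have RES1 : ((1:KK κ) - p').coeff g₀ = 0 := by
    refine coeff_zero_of_Jge (Jge_one.sub (Jge0_evalK (Polynomial.derivative P))) ?_
    rw [hg₀2]
    norm_num
  -- MAIN algebraic identity
  have stepA : zp * ((1:KK κ) - zp)⁻¹ = p * (yK κ - p)⁻¹ := by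
    rw [s1p, mul_inv, hyiv_inv, hzp_def]
    linear_combination (p * ((yK κ - p)⁻¹)) * y_mul_yiv (κ := κ)
  have stepB : p * (yK κ - p)⁻¹ = yK κ * (yK κ - p)⁻¹ - 1 := by
    have h := mul_inv_cancel₀ hyp_ne
    linear_combination -h
  have stepC : ((1:KK κ) - p') * (yK κ * (yK κ - p)⁻¹)
      = yK κ * (yK κ - τ)⁻¹ + yK κ * u' * u⁻¹ := by
    have hpi : (yK κ - p)⁻¹ = (yK κ - τ)⁻¹ * u⁻¹ := by rw [F1, mul_inv]
    rw [F2, hpi]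
    have hA := mul_inv_cancel₀ hyτ_ne
    have hB := mul_inv_cancel₀ hu_ne
    linear_combination (yK κ * (yK κ - τ)⁻¹) * hB + (yK κ * u' * u⁻¹) * hA
  have MAIN : ((1:KK κ) - p') * zp * ((1:KK κ) - zp)⁻¹
      = yK κ * (yK κ - τ)⁻¹ + yK κ * u' * u⁻¹ - ((1:KK κ) - p') := by
    calc ((1:KK κ) - p') * zp * ((1:KK κ) - zp)⁻¹
        = ((1:KK κ) - p') * (zp * ((1:KK κ) - zp)⁻¹) := by ring
      _ = ((1:KK κ) - p') * (yK κ * (yK κ - p)⁻¹ - 1) := by rw [stepA, stepB]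
      _ = ((1:KK κ) - p') * (yK κ * (yK κ - p)⁻¹) - ((1:KK κ) - p') := by ring
      _ = yK κ * (yK κ - τ)⁻¹ + yK κ * u' * u⁻¹ - ((1:KK κ) - p') := by rw [stepC]
  -- the key coefficient identity
  have KEY : PowerSeries.coeff n f
      = ∑ᶠ k : ℕ, (((1:KK κ) - p') * zp ^ (k+1)).coeff g₀ := by
    have e1 : (((1:KK κ) - p') * zp * ((1:KK κ) - zp)⁻¹).coeff g₀
        = PowerSeries.coeff n f := by
      rw [MAIN, HahnSeries.coeff_sub, HahnSeries.coeff_add, RES2, RES3, RES1, add_zero, sub_zero]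
    rw [← e1, hinvp, ← SummableFamily.hsum_smul, SummableFamily.coeff_hsum]
    apply finsum_congr
    intro k
    congr 1
    rw [SummableFamily.smul_apply]
    show (((1:KK κ) - p') * zp) * ((SummableFamily.powers zp) k) = _
    rw [SummableFamily.powers_of_orderTop_pos hzp]
    ring
  -- coefficient matching
  have STEPI : ∀ b : ℕ, c (b+1) = (((1:KK κ) - p') * zp ^ (b+1)).coeff g₀ := by
    intro b
    have hevA : Polynomial.eval₂ (theta κ) (yK κ)
        ((1 - Polynomial.derivative P) * P ^ (b+1)) = ((1:KK κ) - p') * p ^ (b+1) := by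
      rw [Polynomial.eval₂_mul, Polynomial.eval₂_sub, Polynomial.eval₂_one,
        Polynomial.eval₂_pow]
    have hsingle : zp ^ (b+1) = p ^ (b+1) * single (toLex (-(((b:ℤ))+1), -(((b:ℤ))+1))) 1 := by
      rw [hzp_def, mul_pow, yiv_pow]
      push_cast
      ring_nf
    have hadd : toLex (2*(n:ℤ)+(b:ℤ), (b:ℤ)) + toLex (-(((b:ℤ))+1), -(((b:ℤ))+1)) = g₀ := by
      rw [← toLex_add, hg₀_def]
      exact congrArg toLex (Prod.ext (by simp; ring) (by simp))
    have hR : (((1:KK κ) - p') * zp ^ (b+1)).coeff g₀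
        = (((1 - Polynomial.derivative P) * P ^ (b+1)).coeff b).coeff n := by
      rw [hsingle, ← mul_assoc, ← hevA, ← hadd, coeff_mul_single_add, mul_one]
      exact evalK_coeff _ n b
    rw [hR, hc_def]
    simp
  have STEPII : ∀ m : ℕ, 2*n ≤ m → (((1:KK κ) - p') * zp ^ m).coeff g₀ = 0 := by
    intro m hm
    have hWm : Wge (0 + m) (((1:KK κ) - p') * zp ^ m) := by
      refine (Wge_one.sub (hp'W.mono (by norm_num))).mul ?_
      have h := hzpW.pow m
      simpa using h
    refine coeff_zero_of_Wge hWm ?_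
    rw [hg₀1]
    omega
  constructor
  · apply Set.Finite.subset (Set.finite_Iio (2*n))
    rintro m ⟨hm1, hmne⟩
    rcases lt_or_ge m (2*n) with h | h
    · exact h
    · exfalso
      apply hmne
      obtain ⟨b, rfl⟩ : ∃ b, m = b + 1 := ⟨m - 1, by omega⟩
      show c (b+1) = 0
      rw [STEPI b]
      exact STEPII _ h
  · rw [KEY]
    have hsupp1 : Function.support (fun k : ℕ => (((1:KK κ) - p') * zp ^ (k+1)).coeff g₀)
        ⊆ ↑(Finset.range (2*n)) := by
      intro k hk
      simp only [Finset.coe_range, Set.mem_Iio]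
      by_contra hq
      exact hk (STEPII (k+1) (by omega))
    rw [finsum_eq_finset_sum_of_support_subset _ hsupp1]
    have hif : (fun m : ℕ => ∑ᶠ _ : 1 ≤ m, c m) = fun m : ℕ => if 1 ≤ m then c m else 0 :=
      funext fun m => finsum_eq_if
    rw [finsum_congr (fun m => congrFun hif m)]
    have hsupp2 : Function.support (fun m : ℕ => if 1 ≤ m then c m else 0)
        ⊆ ↑(Finset.range (2*n+1)) := by
      intro m hm
      simp only [Finset.coe_range, Set.mem_Iio]
      by_contra hq
      apply hm
      have hm1 : 1 ≤ m := by omega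
      show (if 1 ≤ m then c m else 0) = 0
      rw [if_pos hm1]
      obtain ⟨b, rfl⟩ : ∃ b, m = b + 1 := ⟨m - 1, by omega⟩
      rw [STEPI b]
      exact STEPII _ (by omega)
    rw [finsum_eq_finset_sum_of_support_subset _ hsupp2, Finset.sum_range_succ']
    simp only [if_neg (by norm_num : ¬ (1:ℕ) ≤ 0), add_zero]
    apply Finset.sum_congr rfl
    intro k _
    rw [if_pos (by omega : 1 ≤ k + 1), STEPI k]


end FSAux

/-- **Generalized Flajolet–Soria formula** (Theorem 6 of the paper).
A two-variable polynomial `P(X,Y)` over a field `κ` is encoded as an element of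
`(κ[X])[Y]`, i.e. `Polynomial (Polynomial κ)` whose outer variable is `Y`.
The coefficient `[X^n Y^m] A` is `(A.coeff m).coeff n`, and `∂P/∂Y` is
`Polynomial.derivative P`. -/
theorem flajolet_soria_general (κ : Type*) [Field κ]
    (P : Polynomial (Polynomial κ))
    (hP00 : (P.eval 0).eval 0 = 0)
    (hPY00 : ((Polynomial.derivative P).eval 0).eval 0 = 0)
    (f : PowerSeries κ)
    (hf0 : PowerSeries.constantCoeff f = 0)
    (hf : Polynomial.eval₂ Polynomial.coeToPowerSeries.ringHom f P = f) :
    ∀ n : ℕ, 1 ≤ n →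
      {m : ℕ | 1 ≤ m ∧
          (((1 - Polynomial.derivative P) * P ^ m).coeff (m - 1)).coeff n ≠ 0}.Finite ∧
      PowerSeries.coeff n f =
        ∑ᶠ (m : ℕ) (_ : 1 ≤ m),
          (((1 - Polynomial.derivative P) * P ^ m).coeff (m - 1)).coeff n := by
  intro n _
  have h1 : (P.coeff 0).coeff 0 = 0 := by
    have e1 : P.coeff 0 = P.eval 0 := Polynomial.coeff_zero_eq_eval_zero P
    rw [e1, Polynomial.coeff_zero_eq_eval_zero]
    exact hP00
  have h2 : (P.coeff 1).coeff 0 = 0 := by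
    have e2 : (Polynomial.derivative P).coeff 0 = P.coeff 1 := by
      rw [Polynomial.coeff_derivative]
      simp
    calc (P.coeff 1).coeff 0 = ((Polynomial.derivative P).coeff 0).coeff 0 := by rw [e2]
      _ = ((Polynomial.derivative P).eval 0).coeff 0 := by
          rw [← Polynomial.coeff_zero_eq_eval_zero]
      _ = ((Polynomial.derivative P).eval 0).eval 0 :=
          Polynomial.coeff_zero_eq_eval_zero _
      _ = 0 := hPY00
  exact main_thm P h1 h2 f hf0 hf n
end

section
/- Let P(X,Y) be a polynomial over the complex numbers ℂ with P(0,0) = 0 and ∂P/∂Y(0,0) = 0, and let f(X) = Σ_{n≥1} f_n X^n ∈ ℂ[[X]] be a power series with zero constant term defined implicitly by f(X) = P(X, f(X)). Then for every n ≥ 1, the family m ↦ [X^n Y^{m-1}]((1 − ∂P/∂Y(X,Y)) · P(X,Y)^m) (m ≥ 1) has finite support and f_n = Σ_{m≥1} [X^n Y^{m-1}] ((1 − ∂P/∂Y(X,Y)) · P(X,Y)^m). -/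
open Polynomial PowerSeries

namespace FSaux

variable {R : Type*} [CommRing R]

/-- Auxiliary ideal: generated by `a^i * b^j` with `2i + j ≥ s`. -/
def Jid (a b : R) (s : ℕ) : Ideal R :=
  Ideal.span {x | ∃ i j : ℕ, s ≤ 2 * i + j ∧ x = a ^ i * b ^ j}

theorem Jid_mono (a b : R) {s t : ℕ} (h : s ≤ t) : Jid a b t ≤ Jid a b s :=
  Ideal.span_mono (by rintro x ⟨i, j, hij, rfl⟩; exact ⟨i, j, h.trans hij, rfl⟩)

theorem Jid_zero (a b : R) : Jid a b 0 = ⊤ :=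
  Ideal.eq_top_iff_one _ |>.2 (Ideal.subset_span ⟨0, 0, le_refl 0, by simp⟩)

theorem mem_Jid_a (a b : R) : a ∈ Jid a b 2 :=
  Ideal.subset_span ⟨1, 0, by omega, by simp⟩

theorem mem_Jid_b (a b : R) : b ∈ Jid a b 1 :=
  Ideal.subset_span ⟨0, 1, by omega, by simp⟩

theorem Jid_mul_Jid (a b : R) (u v : ℕ) : Jid a b u * Jid a b v ≤ Jid a b (u + v) := by
  rw [Jid, Jid, Ideal.span_mul_span']
  apply Ideal.span_le.2
  rintro x hx
  rw [Set.mem_mul] at hx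
  obtain ⟨y, ⟨i, j, hij, rfl⟩, z, ⟨i', j', hij', rfl⟩, rfl⟩ := hx
  exact Ideal.subset_span ⟨i + i', j + j', by omega, by ring⟩

theorem Jid_bot {a b : R} {N : ℕ} (hN : 2 ≤ N) (ha : a ^ N = 0) (hb : b ^ N = 0)
    {s : ℕ} (hs : 3 * N - 2 ≤ s) : Jid a b s = ⊥ := by
  rw [eq_bot_iff]
  apply Ideal.span_le.2
  rintro x ⟨i, j, hij, rfl⟩
  simp only [SetLike.mem_coe, Ideal.mem_bot]
  rcases le_or_gt N i with h | h
  · obtain ⟨k, rfl⟩ := Nat.exists_eq_add_of_le h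
    rw [pow_add, ha, zero_mul, zero_mul]
  · rcases le_or_gt N j with h' | h'
    · obtain ⟨k, rfl⟩ := Nat.exists_eq_add_of_le h'
      rw [pow_add, hb, zero_mul, mul_zero]
    · omega

theorem coeff_pow_mem (p : R[X]) : ∀ (m d s : ℕ), d + s ≤ 2 * m →
    (p ^ m).coeff d ∈ Jid (p.coeff 0) (p.coeff 1) s := by
  intro m
  induction m with
  | zero =>
    intro d s h
    have hd : d = 0 := by omega
    have hs : s = 0 := by omega
    subst hd hs
    rw [Jid_zero]
    exact Submodule.mem_top
  | succ m ih =>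
    intro d s h
    rcases Nat.eq_zero_or_pos s with rfl | hs
    · rw [Jid_zero]; exact Submodule.mem_top
    rw [pow_succ', Polynomial.coeff_mul]
    apply Ideal.sum_mem
    rintro ⟨e1, e2⟩ hmem
    have he : e1 + e2 = d := Finset.HasAntidiagonal.mem_antidiagonal.1 hmem
    match e1, he with
    | 0, he =>
      rcases le_or_gt 2 s with h2 | h2
      · have hc := ih e2 (s - 2) (by omega)
        have := Jid_mul_Jid (p.coeff 0) (p.coeff 1) 2 (s - 2)
          (Ideal.mul_mem_mul (mem_Jid_a _ _) hc)
        have hss : 2 + (s - 2) = s := by omega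
        rwa [hss] at this
      · exact Ideal.mul_mem_right _ _ (Jid_mono _ _ (by omega) (mem_Jid_a (p.coeff 0) (p.coeff 1)))
    | 1, he =>
      have hc := ih e2 (s - 1) (by omega)
      have := Jid_mul_Jid (p.coeff 0) (p.coeff 1) 1 (s - 1)
        (Ideal.mul_mem_mul (mem_Jid_b _ _) hc)
      have hss : 1 + (s - 1) = s := by omega
      rwa [hss] at this
    | (e + 2), he =>
      exact Ideal.mul_mem_left _ _ (ih e2 s (by omega))

theorem coeff_mul_pow_eq_zero (p g : R[X]) {N : ℕ} (hN : 2 ≤ N)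
    (ha : p.coeff 0 ^ N = 0) (hb : p.coeff 1 ^ N = 0)
    {m d : ℕ} (h : d + 3 * N ≤ 2 * m + 2) : (g * p ^ m).coeff d = 0 := by
  rw [Polynomial.coeff_mul]
  apply Finset.sum_eq_zero
  rintro ⟨e1, e2⟩ hmem
  have he : e1 + e2 = d := Finset.HasAntidiagonal.mem_antidiagonal.1 hmem
  have hc := coeff_pow_mem p m e2 (3 * N - 2) (by omega)
  rw [Jid_bot hN ha hb (le_refl _)] at hc
  rw [Ideal.mem_bot] at hc
  rw [hc, mul_zero]

theorem main_aux (p : R[X]) (F : R) (N : ℕ) (hN : 2 ≤ N)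
    (ha : p.coeff 0 ^ N = 0) (hb : p.coeff 1 ^ N = 0) (hF : F ^ N = 0)
    (hfix : p.eval F = F) :
    ∑ m ∈ Finset.Icc 1 (4 * N), ((1 - Polynomial.derivative p) * p ^ m).coeff (m - 1) = F := by
  set M := 4 * N with hM
  set q : R[X] := Polynomial.X - p with hqdef
  have hq' : Polynomial.derivative q = 1 - Polynomial.derivative p := by
    rw [hqdef, derivative_sub, Polynomial.derivative_X]
  have hroot : q.IsRoot F := by
    simp [hqdef, IsRoot, hfix]
  set w : R[X] := Polynomial.X - Polynomial.C F with hwdef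
  obtain ⟨u, hu⟩ := dvd_iff_isRoot.2 hroot
  rw [← hwdef] at hu
  set E : R[X] := ∑ i ∈ Finset.range N, Polynomial.X ^ i * (Polynomial.C F) ^ (N - 1 - i)
    with hEdef
  have hEw : E * w = Polynomial.X ^ N := by
    rw [hEdef, hwdef, geom_sum₂_mul, ← C_pow, hF, C_0, sub_zero]
  set D : R[X] := ∑ i ∈ Finset.range M, Polynomial.X ^ i * p ^ (M - 1 - i) with hDdef
  have hDq : D * q = Polynomial.X ^ M - p ^ M := by
    rw [hDdef, hqdef, geom_sum₂_mul]
  -- the constant coefficient of u is a unit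
  have h1 : q.coeff 1 = u.coeff 0 - F * u.coeff 1 := by
    conv_lhs => rw [hu]
    rw [hwdef, sub_mul, Polynomial.coeff_sub,
      show (1:ℕ) = 0 + 1 from rfl, Polynomial.coeff_X_mul, Polynomial.coeff_C_mul]
  have h2 : q.coeff 1 = 1 - p.coeff 1 := by
    rw [hqdef, Polynomial.coeff_sub, Polynomial.coeff_X_one]
  have hu1 : u.coeff 0 = 1 - p.coeff 1 + F * u.coeff 1 := by
    rw [h2] at h1
    linear_combination -h1
  have hu0 : IsUnit (u.coeff 0) := by
    rw [hu1]
    have hnil : IsNilpotent (-p.coeff 1 + F * u.coeff 1) := by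
      apply Commute.isNilpotent_add (Commute.all _ _)
      · exact IsNilpotent.neg ⟨N, hb⟩
      · exact ⟨N, by rw [mul_pow, hF, zero_mul]⟩
    have h2 := hnil.isUnit_one_add
    convert h2 using 1
    ring
  -- pass to power series
  set cc : R[X] →+* PowerSeries R := coeToPowerSeries.ringHom with hcc
  have hccX : cc Polynomial.X = PowerSeries.X := by
    simp [hcc]
  have hccC : cc (Polynomial.C F) = PowerSeries.C F := by
    simp [hcc]
  obtain ⟨V, hV⟩ : ∃ V, cc u * V = 1 := by
    have hun : IsUnit (cc u) := by
      rw [PowerSeries.isUnit_iff_constantCoeff]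
      have hc : constantCoeff (cc u) = u.coeff 0 := by
        simp [hcc]
      rwa [hc]
    exact hun.exists_right_inv
  -- regularity of cc w
  have hreg : ∀ g : PowerSeries R, cc w * g = 0 → g = 0 := by
    intro g hg
    have hXg : (PowerSeries.X : PowerSeries R) * g = PowerSeries.C F * g := by
      have hcw : cc w = PowerSeries.X - PowerSeries.C F := by
        rw [hwdef, map_sub, hccX, hccC]
      rw [hcw, sub_mul, sub_eq_zero] at hg
      exact hg
    have hpow : ∀ k : ℕ, (PowerSeries.X : PowerSeries R) ^ k * g
        = (PowerSeries.C F) ^ k * g := by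
      intro k
      induction k with
      | zero => simp
      | succ k ihk =>
        calc (PowerSeries.X : PowerSeries R) ^ (k + 1) * g
            = PowerSeries.X ^ k * (PowerSeries.X * g) := by ring
          _ = PowerSeries.X ^ k * (PowerSeries.C F * g) := by rw [hXg]
          _ = PowerSeries.C F * (PowerSeries.X ^ k * g) := by ring
          _ = PowerSeries.C F * (PowerSeries.C F ^ k * g) := by rw [ihk]
          _ = PowerSeries.C F ^ (k + 1) * g := by ring
    have hN0 : (PowerSeries.X : PowerSeries R) ^ N * g = 0 := by
      rw [hpow N, ← map_pow, hF, map_zero, zero_mul]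
    ext d
    have hco := congrArg (PowerSeries.coeff (d + N)) hN0
    rwa [PowerSeries.coeff_X_pow_mul, map_zero] at hco
  have hregq : ∀ g h : PowerSeries R, g * cc q = h * cc q → g = h := by
    intro g h hgh
    have hqc : cc q = cc w * cc u := by rw [hu, map_mul]
    have h0 : cc w * ((g - h) * cc u) = 0 := by
      have h1 : (g - h) * cc q = 0 := by rw [sub_mul, hgh, sub_self]
      rw [hqc] at h1
      linear_combination h1
    have h2 := hreg _ h0
    have h3 : (g - h) * (cc u * V) = 0 := by
      rw [← mul_assoc, h2, zero_mul]
    rw [hV, mul_one, sub_eq_zero] at h3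
    exact h3
  -- rewrite the goal in terms of `derivative q`
  rw [show (1 : R[X]) - Polynomial.derivative p = Polynomial.derivative q from hq'.symm]
  -- coercion facts
  have hEwc : cc E * cc w = PowerSeries.X ^ N := by
    rw [← map_mul, hEw, map_pow, hccX]
  have hqc : cc q = cc w * cc u := by rw [hu, map_mul]
  -- KEY identity
  have KEY : cc (Polynomial.derivative q * p * D) * PowerSeries.X ^ N
      = cc (Polynomial.derivative q * p * (Polynomial.X ^ M - p ^ M)) * V * cc E := by
    apply hregq
    have hDqc : cc D * cc q = cc (Polynomial.X ^ M) - cc (p ^ M) := by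
      rw [← map_mul, hDq, map_sub]
    calc cc (Polynomial.derivative q * p * D) * PowerSeries.X ^ N * cc q
        = cc (Polynomial.derivative q) * cc p * (cc D * cc q) * PowerSeries.X ^ N := by
          rw [map_mul, map_mul]; ring
      _ = cc (Polynomial.derivative q) * cc p *
            (cc (Polynomial.X ^ M) - cc (p ^ M)) * PowerSeries.X ^ N := by rw [hDqc]
      _ = cc (Polynomial.derivative q) * cc p * (cc (Polynomial.X ^ M) - cc (p ^ M)) *
            (cc u * V) * (cc E * cc w) := by rw [hV, hEwc]; ring
      _ = cc (Polynomial.derivative q * p * (Polynomial.X ^ M - p ^ M)) * V * cc E * cc q := by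
          rw [hqc]
          simp only [map_mul, map_sub, map_pow]
          ring
  have hKc := congrArg (PowerSeries.coeff (M + N - 1)) KEY
  have hL : PowerSeries.coeff (M + N - 1)
        (cc (Polynomial.derivative q * p * D) * PowerSeries.X ^ N)
      = (Polynomial.derivative q * p * D).coeff (M - 1) := by
    rw [mul_comm, show M + N - 1 = (M - 1) + N by omega, PowerSeries.coeff_X_pow_mul]
    simp only [hcc, coeToPowerSeries.ringHom_apply, Polynomial.coeff_coe]
  have hsplit : cc (Polynomial.derivative q * p * (Polynomial.X ^ M - p ^ M)) * V * cc E
      = cc (Polynomial.derivative q * p) * PowerSeries.X ^ M * V * cc E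
        - cc (Polynomial.derivative q * p ^ (M + 1)) * V * cc E := by
    have hr : Polynomial.derivative q * p * (Polynomial.X ^ M - p ^ M)
        = Polynomial.derivative q * p * Polynomial.X ^ M
          - Polynomial.derivative q * p ^ (M + 1) := by ring
    rw [hr, map_sub, map_mul, map_pow, hccX, sub_mul, sub_mul]
  have hT2 : PowerSeries.coeff (M + N - 1)
      (cc (Polynomial.derivative q * p ^ (M + 1)) * V * cc E) = 0 := by
    have hdvd : (PowerSeries.X : PowerSeries R) ^ (M + N)
        ∣ cc (Polynomial.derivative q * p ^ (M + 1)) := by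
      rw [PowerSeries.X_pow_dvd_iff]
      intro d hd
      have hcd : PowerSeries.coeff d (cc (Polynomial.derivative q * p ^ (M + 1)))
          = (Polynomial.derivative q * p ^ (M + 1)).coeff d := by
        simp only [hcc, coeToPowerSeries.ringHom_apply, Polynomial.coeff_coe]
      rw [hcd]
      exact coeff_mul_pow_eq_zero p (Polynomial.derivative q) hN ha hb (by omega)
    obtain ⟨h2, hh2⟩ := hdvd
    rw [hh2]
    have hdvd2 : (PowerSeries.X : PowerSeries R) ^ (M + N)
        ∣ PowerSeries.X ^ (M + N) * h2 * V * cc E := ⟨h2 * V * cc E, by ring⟩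
    exact PowerSeries.X_pow_dvd_iff.1 hdvd2 (M + N - 1) (by omega)
  have hT1 : PowerSeries.coeff (M + N - 1)
        (cc (Polynomial.derivative q * p) * PowerSeries.X ^ M * V * cc E)
      = PowerSeries.coeff (N - 1) (cc (Polynomial.derivative q * p) * V * cc E) := by
    rw [show cc (Polynomial.derivative q * p) * PowerSeries.X ^ M * V * cc E
        = PowerSeries.X ^ M * (cc (Polynomial.derivative q * p) * V * cc E) by ring,
      show M + N - 1 = (N - 1) + M by omega, PowerSeries.coeff_X_pow_mul]
  -- compute the residual term
  have hwd : Polynomial.derivative w = 1 := by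
    rw [hwdef, derivative_sub, Polynomial.derivative_X, Polynomial.derivative_C, sub_zero]
  have hq'u : Polynomial.derivative q = u + w * Polynomial.derivative u := by
    have hd := congrArg Polynomial.derivative hu
    rwa [derivative_mul, hwd, one_mul] at hd
  have hpwu : p = Polynomial.X - w * u := by
    rw [← hu, hqdef]; ring
  have hG : cc (Polynomial.derivative q * p) * V * cc E
      = cc (Polynomial.X * E)
        + PowerSeries.X ^ N * (cc (Polynomial.derivative u) * PowerSeries.X * V)
        - PowerSeries.X ^ N * cc u
        - PowerSeries.X ^ N * (cc (Polynomial.derivative u) * cc w) := by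
    have e1 : cc (Polynomial.derivative q * p)
        = (cc u + cc w * cc (Polynomial.derivative u)) *
          (PowerSeries.X - cc w * cc u) := by
      rw [map_mul, hq'u]
      conv_lhs => rw [hpwu]
      simp only [map_add, map_mul, map_sub, hccX]
    calc cc (Polynomial.derivative q * p) * V * cc E
        = (cc u * V) * (PowerSeries.X * cc E)
          + (cc (Polynomial.derivative u) * PowerSeries.X * V) * (cc E * cc w)
          - (cc u * (cc u * V)) * (cc E * cc w)
          - (cc (Polynomial.derivative u) * cc w * (cc u * V)) * (cc E * cc w) := by
          rw [e1]; ring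
      _ = cc (Polynomial.X * E)
          + PowerSeries.X ^ N * (cc (Polynomial.derivative u) * PowerSeries.X * V)
          - PowerSeries.X ^ N * cc u
          - PowerSeries.X ^ N * (cc (Polynomial.derivative u) * cc w) := by
          rw [hV, hEwc, map_mul, hccX]; ring
  have hzero : ∀ g : PowerSeries R,
      PowerSeries.coeff (N - 1) (PowerSeries.X ^ N * g) = 0 := by
    intro g
    exact PowerSeries.X_pow_dvd_iff.1 ⟨g, rfl⟩ (N - 1) (by omega)
  have hXE : PowerSeries.coeff (N - 1) (cc (Polynomial.X * E)) = F := by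
    have h1 : PowerSeries.coeff (N - 1) (cc (Polynomial.X * E))
        = (Polynomial.X * E).coeff (N - 1) := by
      simp only [hcc, coeToPowerSeries.ringHom_apply, Polynomial.coeff_coe]
    rw [h1, show N - 1 = (N - 2) + 1 by omega, Polynomial.coeff_X_mul]
    rw [hEdef, Polynomial.finset_sum_coeff]
    rw [Finset.sum_eq_single (N - 2)]
    · rw [← Polynomial.C_pow, mul_comm, Polynomial.coeff_C_mul, Polynomial.coeff_X_pow,
        if_pos rfl, mul_one, show N - 1 - (N - 2) = 1 by omega, pow_one]
    · intro i hi hne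
      rw [← Polynomial.C_pow, mul_comm, Polynomial.coeff_C_mul, Polynomial.coeff_X_pow,
        if_neg (fun hc => hne hc.symm), mul_zero]
    · intro hh
      exact absurd (Finset.mem_range.2 (by omega)) hh
  have hGN : PowerSeries.coeff (N - 1)
      (cc (Polynomial.derivative q * p) * V * cc E) = F := by
    rw [hG, map_sub, map_sub, map_add, hzero, hzero, hzero, hXE]
    ring
  have hMAIN : (Polynomial.derivative q * p * D).coeff (M - 1) = F := by
    rw [← hL, hKc, hsplit, map_sub, hT2, sub_zero, hT1, hGN]
  -- expand D
  have hsum : (Polynomial.derivative q * p * D).coeff (M - 1)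
      = ∑ i ∈ Finset.range M, (Polynomial.derivative q * p ^ (M - i)).coeff (M - 1 - i) := by
    rw [hDdef, Finset.mul_sum, Polynomial.finset_sum_coeff]
    apply Finset.sum_congr rfl
    intro i hi
    have hiM : i < M := Finset.mem_range.1 hi
    have h1 : Polynomial.derivative q * p * (Polynomial.X ^ i * p ^ (M - 1 - i))
        = Polynomial.derivative q * p ^ (M - i) * Polynomial.X ^ i := by
      rw [show M - i = (M - 1 - i) + 1 by omega, pow_succ]
      ring
    rw [h1, Polynomial.coeff_mul_X_pow', if_pos (by omega : i ≤ M - 1)]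
  have himg : Finset.Icc 1 M = Finset.image (fun i => M - i) (Finset.range M) := by
    ext m
    simp only [Finset.mem_Icc, Finset.mem_image, Finset.mem_range]
    constructor
    · rintro ⟨hm1, hm2⟩
      exact ⟨M - m, by omega, by omega⟩
    · rintro ⟨i, hi, rfl⟩
      omega
  have hre : ∑ m ∈ Finset.Icc 1 M, (Polynomial.derivative q * p ^ m).coeff (m - 1)
      = ∑ i ∈ Finset.range M, (Polynomial.derivative q * p ^ (M - i)).coeff (M - 1 - i) := by
    rw [himg, Finset.sum_image (fun x hx y hy hxy => by
      have hx' := Finset.mem_range.1 hx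
      have hy' := Finset.mem_range.1 hy
      omega)]
    apply Finset.sum_congr rfl
    intro i hi
    rw [show M - i - 1 = M - 1 - i by omega]
  rw [hre, ← hsum, hMAIN]


end FSaux

open FSaux in
/-- **Flajolet–Soria formula** over the complex numbers (Theorem 5 of the paper).
A two-variable polynomial `P(X,Y)` over `ℂ` is encoded as an element of
`(κ[X])[Y]`, i.e. `Polynomial (Polynomial ℂ)` whose outer variable is `Y`.
The coefficient `[X^n Y^m] A` is `(A.coeff m).coeff n`, and `∂P/∂Y` is
`Polynomial.derivative P`. -/
theorem flajolet_soria_complex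
    (P : Polynomial (Polynomial ℂ))
    (hP00 : (P.eval 0).eval 0 = 0)
    (hPY00 : ((Polynomial.derivative P).eval 0).eval 0 = 0)
    (f : PowerSeries ℂ)
    (hf0 : PowerSeries.constantCoeff f = 0)
    (hf : Polynomial.eval₂ Polynomial.coeToPowerSeries.ringHom f P = f) :
    ∀ n : ℕ, 1 ≤ n →
      {m : ℕ | 1 ≤ m ∧
          (((1 - Polynomial.derivative P) * P ^ m).coeff (m - 1)).coeff n ≠ 0}.Finite ∧
      PowerSeries.coeff n f =
        ∑ᶠ (m : ℕ) (_ : 1 ≤ m),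
          (((1 - Polynomial.derivative P) * P ^ m).coeff (m - 1)).coeff n := by
  intro n hn
  set N : ℕ := n + 1 with hNdef
  have hN2 : 2 ≤ N := by omega
  set I : Ideal (PowerSeries ℂ) := Ideal.span {(PowerSeries.X : PowerSeries ℂ) ^ N} with hIdef
  set π : PowerSeries ℂ →+* (PowerSeries ℂ ⧸ I) := Ideal.Quotient.mk I with hπdef
  set φ : Polynomial ℂ →+* (PowerSeries ℂ ⧸ I) := π.comp coeToPowerSeries.ringHom with hφdef
  set p : Polynomial (PowerSeries ℂ ⧸ I) := P.map φ with hpdef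
  -- basic facts about π
  have hπ0 : ∀ g : PowerSeries ℂ, π g = 0 ↔ (PowerSeries.X : PowerSeries ℂ) ^ N ∣ g := by
    intro g
    rw [hπdef, Ideal.Quotient.eq_zero_iff_mem, hIdef, Ideal.mem_span_singleton]
  have hcoeffn : ∀ g : PowerSeries ℂ, π g = 0 → PowerSeries.coeff n g = 0 := by
    intro g hg
    exact PowerSeries.X_pow_dvd_iff.1 ((hπ0 g).1 hg) n (by omega)
  have hnil : ∀ g : PowerSeries ℂ, constantCoeff g = 0 → (π g) ^ N = 0 := by
    intro g hg
    rw [← map_pow, hπ0]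
    exact pow_dvd_pow_of_dvd (PowerSeries.X_dvd_iff.2 hg) N
  -- hypotheses of main_aux
  have ha : p.coeff 0 ^ N = 0 := by
    rw [hpdef, Polynomial.coeff_map, hφdef, RingHom.comp_apply]
    apply hnil
    rw [coeToPowerSeries.ringHom_apply, Polynomial.constantCoeff_coe,
      Polynomial.coeff_zero_eq_eval_zero, Polynomial.coeff_zero_eq_eval_zero]
    exact hP00
  have hbder : (Polynomial.derivative P).coeff 0 = P.coeff 1 := by
    rw [Polynomial.coeff_derivative]
    simp
  have hb : p.coeff 1 ^ N = 0 := by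
    rw [hpdef, Polynomial.coeff_map, hφdef, RingHom.comp_apply]
    apply hnil
    rw [coeToPowerSeries.ringHom_apply, Polynomial.constantCoeff_coe, ← hbder,
      Polynomial.coeff_zero_eq_eval_zero, Polynomial.coeff_zero_eq_eval_zero]
    exact hPY00
  have hF : (π f) ^ N = 0 := hnil f hf0
  have hfix : p.eval (π f) = π f := by
    have h1 := congrArg π hf
    rwa [Polynomial.hom_eval₂, ← hφdef, ← Polynomial.eval_map, ← hpdef] at h1
  -- the coefficient functions
  set c : ℕ → Polynomial ℂ :=
    fun m => ((1 - Polynomial.derivative P) * P ^ m).coeff (m - 1) with hcdef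
  set g : ℕ → ℂ := fun m => (c m).coeff n with hgdef
  have hcomm : ∀ m : ℕ,
      ((1 - Polynomial.derivative p) * p ^ m).coeff (m - 1) = φ (c m) := by
    intro m
    have h1 : (1 - Polynomial.derivative p) * p ^ m
        = ((1 - Polynomial.derivative P) * P ^ m).map φ := by
      rw [Polynomial.map_mul, Polynomial.map_sub, Polynomial.map_one, Polynomial.map_pow,
        hpdef, Polynomial.derivative_map]
    rw [h1, Polynomial.coeff_map, hcdef]
  -- vanishing for large m
  have hvanish : ∀ m : ℕ, 3 * N ≤ m → g m = 0 := by
    intro m hm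
    have h1 : ((1 - Polynomial.derivative p) * p ^ m).coeff (m - 1) = 0 :=
      coeff_mul_pow_eq_zero p (1 - Polynomial.derivative p) hN2 ha hb (by omega)
    rw [hcomm m] at h1
    have h2 : π ((c m : Polynomial ℂ) : PowerSeries ℂ) = 0 := h1
    have h3 := hcoeffn _ h2
    rwa [Polynomial.coeff_coe] at h3
  -- finiteness
  have hfin : {m : ℕ | 1 ≤ m ∧ g m ≠ 0}.Finite := by
    apply (Set.finite_Iio (3 * N)).subset
    rintro m ⟨hm1, hm2⟩
    by_contra hc
    exact hm2 (hvanish m (by simpa [Set.mem_Iio, not_lt] using hc))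
  constructor
  · exact hfin
  -- the sum
  have hmain := main_aux p (π f) N hN2 ha hb hF hfix
  have hsum : PowerSeries.coeff n f = ∑ m ∈ Finset.Icc 1 (4 * N), g m := by
    have h1 : ∑ m ∈ Finset.Icc 1 (4 * N), ((1 - Polynomial.derivative p) * p ^ m).coeff (m - 1)
        = π ((∑ m ∈ Finset.Icc 1 (4 * N), c m : Polynomial ℂ) : PowerSeries ℂ) := by
      rw [Finset.sum_congr rfl (fun m _ => hcomm m)]
      rw [← map_sum φ c (Finset.Icc 1 (4 * N))]
      rfl
    rw [h1] at hmain
    have h2 : π (((∑ m ∈ Finset.Icc 1 (4 * N), c m : Polynomial ℂ) : PowerSeries ℂ) - f) = 0 := by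
      rw [map_sub, hmain, sub_self]
    have h3 := hcoeffn _ h2
    rw [map_sub, sub_eq_zero] at h3
    rw [← h3, Polynomial.coeff_coe, Polynomial.finset_sum_coeff]
  rw [hsum]
  symm
  apply finsum_mem_eq_sum_of_subset
  · rintro m ⟨hm1, hm2⟩
    rw [Function.mem_support] at hm2
    have hm3 : m < 3 * N := by
      by_contra hc
      exact hm2 (hvanish m (by omega))
    simp only [Finset.coe_Icc, Set.mem_Icc]
    constructor
    · exact hm1
    · omega
  · intro m hm
    simp only [Finset.coe_Icc, Set.mem_Icc] at hm
    exact hm.1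
end

section
/- Let κ be a field, P(X,Y) ∈ κ[X,Y] a polynomial, and φ(X) = Σ_{n≥1} c_n X^n ∈ κ[[X]] a formal power series with zero constant term such that P(X, φ(X)) = 0 and ∂P/∂Y(0,0) ≠ 0. Then the two-variable polynomial P(XY, Y) is divisible by Y in κ[X,Y], say P(XY,Y) = Y·S(X,Y); the polynomial S has nonzero constant term S(0,0) = ∂P/∂Y(0,0), hence is invertible as a formal power series in κ[[X,Y]]; and for every n ≥ 1, c_n equals the coefficient of X^n Y^n in the formal power series Y · (∂P/∂Y)(XY, Y) · S(X,Y)^{-1} ∈ κ[[X,Y]]. (Equivalently, φ is the diagonal of Y² (∂P/∂Y)(XY,Y) / P(XY,Y).) -/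
open MvPolynomial

namespace Furstenberg

variable {κ : Type*} [Field κ]

/-! ### Finsupp `Fin 2` helpers -/

noncomputable def diag (n : ℕ) : Fin 2 →₀ ℕ := Finsupp.single 0 n + Finsupp.single 1 n

@[simp] lemma diag_apply0 (n : ℕ) : (diag n) 0 = n := by simp [diag, Finsupp.single_apply]
@[simp] lemma diag_apply1 (n : ℕ) : (diag n) 1 = n := by simp [diag, Finsupp.single_apply]

lemma fin2_ext {d e : Fin 2 →₀ ℕ} (h0 : d 0 = e 0) (h1 : d 1 = e 1) : d = e := by
  ext i; fin_cases i <;> assumption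

lemma eq_diag {d : Fin 2 →₀ ℕ} (h : d 0 = d 1) : d = diag (d 0) :=
  fin2_ext (by simp) (by simp [h])

@[simp] lemma diag_zero : diag 0 = 0 := by
  apply fin2_ext <;> simp

lemma diag_add (m n : ℕ) : diag (m + n) = diag m + diag n := by
  apply fin2_ext <;> simp

lemma diag_eq_iff {d : Fin 2 →₀ ℕ} {n : ℕ} : d = diag n ↔ d 0 = d 1 ∧ d 0 = n := by
  constructor
  · rintro rfl; simp
  · rintro ⟨h1, h2⟩; rw [eq_diag h1, h2]

noncomputable def offd (n : ℕ) : Fin 2 →₀ ℕ := Finsupp.single 0 n + Finsupp.single 1 (n - 1)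
@[simp] lemma offd_apply0 (n : ℕ) : (offd n) 0 = n := by simp [offd, Finsupp.single_apply]
@[simp] lemma offd_apply1 (n : ℕ) : (offd n) 1 = n - 1 := by simp [offd, Finsupp.single_apply]

lemma zero_apply_eq {d : Fin 2 →₀ ℕ} (h : d = 0) : d 0 = 0 ∧ d 1 = 0 := by
  subst h; simp

lemma apply_le_sum (d : Fin 2 →₀ ℕ) (i : Fin 2) : d i ≤ d 0 + d 1 := by
  fin_cases i <;> simp

lemma sub_single_apply0 (d : Fin 2 →₀ ℕ) (n : ℕ) :
    ((d - Finsupp.single 1 n : Fin 2 →₀ ℕ)) 0 = d 0 := by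
  rw [Finsupp.tsub_apply]
  simp [Finsupp.single_apply]

lemma sub_single_apply1 (d : Fin 2 →₀ ℕ) (n : ℕ) :
    ((d - Finsupp.single 1 n : Fin 2 →₀ ℕ)) 1 = d 1 - n := by
  rw [Finsupp.tsub_apply]
  simp

lemma single_le_iff' (d : Fin 2 →₀ ℕ) (n : ℕ) :
    Finsupp.single (1 : Fin 2) n ≤ d ↔ n ≤ d 1 := Finsupp.single_le_iff

/-! ### The substitution `f(X) ↦ f(XY)` as a ring hom -/

noncomputable def thetaFun (f : PowerSeries κ) : MvPowerSeries (Fin 2) κ :=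
  fun d => if d 0 = d 1 then PowerSeries.coeff (d 0) f else 0

lemma coeff_thetaFun (f : PowerSeries κ) (d : Fin 2 →₀ ℕ) :
    MvPowerSeries.coeff d (thetaFun f) =
      if d 0 = d 1 then PowerSeries.coeff (d 0) f else 0 :=
  rfl

lemma thetaFun_mul (f g : PowerSeries κ) :
    thetaFun (f * g) = thetaFun f * thetaFun g := by
  classical
  ext d
  rw [MvPowerSeries.coeff_mul, coeff_thetaFun]
  have key : ∀ p ∈ Finset.HasAntidiagonal.antidiagonal d,
      MvPowerSeries.coeff p.1 (thetaFun f) * MvPowerSeries.coeff p.2 (thetaFun g)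
      = if p.1 0 = p.1 1 ∧ p.2 0 = p.2 1 then
          PowerSeries.coeff (p.1 0) f * PowerSeries.coeff (p.2 0) g else 0 := by
    intro p hp
    rw [coeff_thetaFun, coeff_thetaFun]
    by_cases h1 : p.1 0 = p.1 1 <;> by_cases h2 : p.2 0 = p.2 1 <;>
      simp [h1, h2]
  rw [Finset.sum_congr rfl key]
  by_cases h : d 0 = d 1
  · rw [if_pos h, PowerSeries.coeff_mul, ← Finset.sum_filter]
    refine (Finset.sum_nbij' (fun p => (p.1 0, p.2 0))
      (fun q => (diag q.1, diag q.2)) ?_ ?_ ?_ ?_ ?_).symm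
    · intro p hp
      simp only [Finset.mem_filter, Finset.HasAntidiagonal.mem_antidiagonal] at hp
      have := congrArg (fun x : Fin 2 →₀ ℕ => x 0) hp.1
      simpa [Finset.HasAntidiagonal.mem_antidiagonal] using this
    · intro q hq
      simp only [Finset.HasAntidiagonal.mem_antidiagonal] at hq
      simp only [Finset.mem_filter, Finset.HasAntidiagonal.mem_antidiagonal]
      refine ⟨?_, by simp⟩
      rw [← diag_add, hq, ← eq_diag h]
    · intro p hp
      simp only [Finset.mem_filter, Finset.HasAntidiagonal.mem_antidiagonal] at hp
      obtain ⟨hsum, h1, h2⟩ := hp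
      have e0 := congrArg (fun x : Fin 2 →₀ ℕ => x 0) hsum
      have e1 := congrArg (fun x : Fin 2 →₀ ℕ => x 1) hsum
      simp only [Finsupp.add_apply] at e0 e1
      ext <;> simp [(eq_diag h1).symm, (eq_diag h2).symm]
    · intro q hq; simp
    · intro p hp
      simp only [Finset.mem_filter, Finset.HasAntidiagonal.mem_antidiagonal] at hp
      simp [hp.2.1, hp.2.2]
  · rw [if_neg h]
    refine (Finset.sum_eq_zero ?_).symm
    intro p hp
    rw [Finset.HasAntidiagonal.mem_antidiagonal] at hp
    rw [if_neg]
    rintro ⟨h1, h2⟩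
    apply h
    have e0 := congrArg (fun x : Fin 2 →₀ ℕ => x 0) hp
    have e1 := congrArg (fun x : Fin 2 →₀ ℕ => x 1) hp
    simp only [Finsupp.add_apply] at e0 e1
    omega

noncomputable def theta : PowerSeries κ →+* MvPowerSeries (Fin 2) κ where
  toFun := thetaFun
  map_one' := by
    classical
    ext d
    rw [coeff_thetaFun, MvPowerSeries.coeff_one, PowerSeries.coeff_one]
    by_cases h : d 0 = d 1
    · by_cases h0 : d 0 = 0
      · have hd : d = 0 := fin2_ext (by simpa) (by simp [← h, h0])
        simp [h, h0, hd]
      · have hd : d ≠ 0 := fun hd => h0 (zero_apply_eq hd).1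
        have h1 : d 1 ≠ 0 := fun hh => h0 (h.trans hh)
        simp [h, h0, hd, h1]
    · have hd : d ≠ 0 := fun hd => h (by simp [(zero_apply_eq hd).1, (zero_apply_eq hd).2])
      simp [h, hd]
  map_mul' := thetaFun_mul
  map_zero' := by
    ext d; simp [coeff_thetaFun]
  map_add' := by
    intro f g
    ext d
    have : MvPowerSeries.coeff d (thetaFun f + thetaFun g)
        = MvPowerSeries.coeff d (thetaFun f) + MvPowerSeries.coeff d (thetaFun g) :=
      map_add _ _ _
    rw [this, coeff_thetaFun, coeff_thetaFun, coeff_thetaFun, map_add]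
    split_ifs <;> simp

lemma coeff_theta (f : PowerSeries κ) (d : Fin 2 →₀ ℕ) :
    MvPowerSeries.coeff d (theta f) =
      if d 0 = d 1 then PowerSeries.coeff (d 0) f else 0 :=
  rfl

lemma theta_X :
    theta (PowerSeries.X : PowerSeries κ) = MvPowerSeries.X 0 * MvPowerSeries.X 1 := by
  classical
  have hX : (MvPowerSeries.X 0 * MvPowerSeries.X 1 : MvPowerSeries (Fin 2) κ)
      = MvPowerSeries.monomial (diag 1) 1 := by
    rw [MvPowerSeries.X, MvPowerSeries.X, MvPowerSeries.monomial_mul_monomial, one_mul, diag]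
  ext d
  rw [coeff_theta, hX, MvPowerSeries.coeff_monomial, PowerSeries.coeff_X]
  by_cases h : d 0 = d 1
  · by_cases h1 : d 0 = 1
    · rw [if_pos h, if_pos h1, if_pos (diag_eq_iff.2 ⟨h, h1⟩)]
    · rw [if_pos h, if_neg h1, if_neg (fun hd => h1 (diag_eq_iff.1 hd).2)]
  · rw [if_neg h, if_neg (fun hd => h (diag_eq_iff.1 hd).1)]

lemma theta_C (r : κ) :
    theta (PowerSeries.C r) = MvPowerSeries.C r := by
  classical
  ext d
  rw [coeff_theta, MvPowerSeries.coeff_C, PowerSeries.coeff_C]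
  by_cases h : d 0 = d 1
  · by_cases h0 : d 0 = 0
    · have hd : d = 0 := fin2_ext (by simpa) (by simp [← h, h0])
      simp [h, h0, hd]
    · have hd : d ≠ 0 := fun hd => h0 (zero_apply_eq hd).1
      have h1 : d 1 ≠ 0 := fun hh => h0 (h.trans hh)
      simp [h, h0, hd, h1]
  · have hd : d ≠ 0 := fun hd => h (by simp [(zero_apply_eq hd).1, (zero_apply_eq hd).2])
    simp [h, hd]

lemma constantCoeff_theta (f : PowerSeries κ) :
    MvPowerSeries.constantCoeff (theta f) = PowerSeries.constantCoeff f := by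
  rw [← MvPowerSeries.coeff_zero_eq_constantCoeff_apply, coeff_theta]
  simp [PowerSeries.coeff_zero_eq_constantCoeff]

/-! ### The series `ψ` with `Y ψ = φ(XY)` -/

noncomputable def psi (φ : PowerSeries κ) : MvPowerSeries (Fin 2) κ :=
  fun d => if d 0 = d 1 + 1 then PowerSeries.coeff (d 0) φ else 0

lemma coeff_psi (φ : PowerSeries κ) (d : Fin 2 →₀ ℕ) :
    MvPowerSeries.coeff d (psi φ) =
      if d 0 = d 1 + 1 then PowerSeries.coeff (d 0) φ else 0 := rfl

lemma supp_psi {φ : PowerSeries κ} {d : Fin 2 →₀ ℕ}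
    (h : MvPowerSeries.coeff d (psi φ) ≠ 0) : d 0 = d 1 + 1 := by
  by_contra hc
  rw [coeff_psi, if_neg hc] at h
  exact h rfl

lemma coeff_X1_mul (g : MvPowerSeries (Fin 2) κ) (d : Fin 2 →₀ ℕ) :
    MvPowerSeries.coeff d (MvPowerSeries.X 1 * g) =
      if Finsupp.single 1 1 ≤ d then MvPowerSeries.coeff (d - Finsupp.single 1 1) g
      else 0 := by
  classical
  rw [MvPowerSeries.X, MvPowerSeries.coeff_monomial_mul]
  split_ifs <;> simp

lemma X1_mul_psi {φ : PowerSeries κ} (hφ0 : PowerSeries.constantCoeff φ = 0) :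
    MvPowerSeries.X 1 * psi φ = theta φ := by
  ext d
  rw [coeff_X1_mul, coeff_theta]
  by_cases hle : Finsupp.single (1 : Fin 2) 1 ≤ d
  · have h1 : 1 ≤ d 1 := (single_le_iff' d 1).mp hle
    rw [if_pos hle, coeff_psi, sub_single_apply0, sub_single_apply1]
    have hiff : (d 0 = d 1 - 1 + 1) ↔ (d 0 = d 1) := by omega
    by_cases h : d 0 = d 1
    · rw [if_pos (hiff.mpr h), if_pos h]
    · rw [if_neg (fun hc => h (hiff.mp hc)), if_neg h]
  · have h1 : d 1 = 0 := by
      have := (single_le_iff' d 1).not.mp hle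
      omega
    rw [if_neg hle]
    by_cases h : d 0 = d 1
    · have h0 : d 0 = 0 := h.trans h1
      rw [if_pos h, h0]
      rw [PowerSeries.coeff_zero_eq_constantCoeff]
      exact hφ0.symm
    · rw [if_neg h]

/-! ### Support lemmas -/

lemma supp_add {g h : MvPowerSeries (Fin 2) κ} {d : Fin 2 →₀ ℕ}
    (hd : MvPowerSeries.coeff d (g + h) ≠ 0) :
    MvPowerSeries.coeff d g ≠ 0 ∨ MvPowerSeries.coeff d h ≠ 0 := by
  by_contra hc
  push_neg at hc
  rw [map_add, hc.1, hc.2, add_zero] at hd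
  exact hd rfl

lemma supp_mul {i j : Fin 2} {g h : MvPowerSeries (Fin 2) κ}
    (hg : ∀ d, MvPowerSeries.coeff d g ≠ 0 → d j ≤ d i)
    (hh : ∀ d, MvPowerSeries.coeff d h ≠ 0 → d j ≤ d i) :
    ∀ d, MvPowerSeries.coeff d (g * h) ≠ 0 → d j ≤ d i := by
  classical
  intro d hd
  rw [MvPowerSeries.coeff_mul] at hd
  obtain ⟨p, hp, hne⟩ := Finset.exists_ne_zero_of_sum_ne_zero hd
  rw [Finset.HasAntidiagonal.mem_antidiagonal] at hp
  have h1 := hg p.1 (left_ne_zero_of_mul hne)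
  have h2 := hh p.2 (right_ne_zero_of_mul hne)
  have ei := congrArg (fun x : Fin 2 →₀ ℕ => x i) hp
  have ej := congrArg (fun x : Fin 2 →₀ ℕ => x j) hp
  simp only [Finsupp.add_apply] at ei ej
  omega

lemma supp_inv {i j : Fin 2} {g : MvPowerSeries (Fin 2) κ}
    (hg : ∀ d, MvPowerSeries.coeff d g ≠ 0 → d j ≤ d i) :
    ∀ d, MvPowerSeries.coeff d g⁻¹ ≠ 0 → d j ≤ d i := by
  classical
  suffices H : ∀ n, ∀ d : Fin 2 →₀ ℕ, d 0 + d 1 ≤ n → d i < d j →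
      MvPowerSeries.coeff d g⁻¹ = 0 by
    intro d hd
    by_contra hlt
    exact hd (H (d 0 + d 1) d le_rfl (lt_of_not_ge hlt))
  intro n
  induction n with
  | zero =>
    intro d hd hlt
    have hi := apply_le_sum d i
    have hj := apply_le_sum d j
    omega
  | succ n ih =>
    intro d hd hlt
    rw [MvPowerSeries.coeff_inv]
    have hd0 : d ≠ 0 := by
      rintro rfl
      simp at hlt
    rw [if_neg hd0]
    have hsum : (∑ x ∈ Finset.HasAntidiagonal.antidiagonal d,
        if x.2 < d then MvPowerSeries.coeff x.1 g * MvPowerSeries.coeff x.2 g⁻¹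
        else 0) = 0 := by
      apply Finset.sum_eq_zero
      intro p hp
      rw [Finset.HasAntidiagonal.mem_antidiagonal] at hp
      split_ifs with hlt2
      · by_cases hg1 : MvPowerSeries.coeff p.1 g = 0
        · rw [hg1, zero_mul]
        · have h1 := hg p.1 hg1
          have ei := congrArg (fun x : Fin 2 →₀ ℕ => x i) hp
          have ej := congrArg (fun x : Fin 2 →₀ ℕ => x j) hp
          have e0 := congrArg (fun x : Fin 2 →₀ ℕ => x 0) hp
          have e1 := congrArg (fun x : Fin 2 →₀ ℕ => x 1) hp
          simp only [Finsupp.add_apply] at ei ej e0 e1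
          obtain ⟨hle, hne⟩ := lt_iff_le_and_ne.mp hlt2
          have hle0 : p.2 0 ≤ d 0 := hle 0
          have hle1 : p.2 1 ≤ d 1 := hle 1
          have hne' : p.2 0 < d 0 ∨ p.2 1 < d 1 := by
            by_contra hc
            push_neg at hc
            exact hne (fin2_ext (by omega) (by omega))
          have : MvPowerSeries.coeff p.2 g⁻¹ = 0 := by
            apply ih p.2 (by omega) (by omega)
          rw [this, mul_zero]
      · rfl
    rw [hsum, mul_zero]

/-! ### Lemmas on `w = (1 - ψ)⁻¹` -/

lemma constantCoeff_one_sub_psi (φ : PowerSeries κ) :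
    MvPowerSeries.constantCoeff (1 - psi φ) = 1 := by
  rw [map_sub, map_one, ← MvPowerSeries.coeff_zero_eq_constantCoeff_apply, coeff_psi]
  norm_num

lemma supp_one_sub_psi (φ : PowerSeries κ) :
    ∀ d, MvPowerSeries.coeff d (1 - psi φ) ≠ 0 → d 1 ≤ d 0 := by
  classical
  intro d h
  rw [map_sub, MvPowerSeries.coeff_one] at h
  by_contra hc
  push_neg at hc
  have h1 : d ≠ 0 := by
    intro hd; rw [hd] at hc; simp at hc
  have h2 : ¬ (d 0 = d 1 + 1) := by omega
  rw [if_neg h1, coeff_psi, if_neg h2] at h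
  simp at h

lemma supp_w (φ : PowerSeries κ) :
    ∀ d, MvPowerSeries.coeff d (1 - psi φ)⁻¹ ≠ 0 → d 1 ≤ d 0 :=
  supp_inv (i := 0) (j := 1) (supp_one_sub_psi φ)

lemma w_eq (φ : PowerSeries κ) :
    (1 - psi φ)⁻¹ = 1 + psi φ * (1 - psi φ)⁻¹ := by
  have h := MvPowerSeries.mul_inv_cancel (σ := Fin 2) (1 - psi φ)
    (by rw [constantCoeff_one_sub_psi]; exact one_ne_zero)
  have h2 : (1 - psi φ) * (1 - psi φ)⁻¹
      = (1 - psi φ)⁻¹ - psi φ * (1 - psi φ)⁻¹ := by ring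
  rw [h2] at h
  linear_combination h

lemma w_diag (φ : PowerSeries κ) (j : ℕ) (hj : 1 ≤ j) :
    MvPowerSeries.coeff (diag j) (1 - psi φ)⁻¹ = 0 := by
  classical
  rw [w_eq φ]
  rw [map_add, MvPowerSeries.coeff_one, if_neg (fun h : diag j = 0 => by
    have := congrArg (fun x : Fin 2 →₀ ℕ => x 0) h
    simp at this; omega), zero_add]
  rw [MvPowerSeries.coeff_mul]
  apply Finset.sum_eq_zero
  intro p hp
  rw [Finset.HasAntidiagonal.mem_antidiagonal] at hp
  by_cases h1 : MvPowerSeries.coeff p.1 (psi φ) = 0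
  · rw [h1, zero_mul]
  · have he := supp_psi h1
    have e0 := congrArg (fun x : Fin 2 →₀ ℕ => x 0) hp
    have e1 := congrArg (fun x : Fin 2 →₀ ℕ => x 1) hp
    simp only [Finsupp.add_apply, diag_apply0, diag_apply1] at e0 e1
    have : MvPowerSeries.coeff p.2 (1 - psi φ)⁻¹ = 0 := by
      by_contra hc
      have := supp_w φ p.2 hc
      omega
    rw [this, mul_zero]

lemma w_constant (φ : PowerSeries κ) :
    MvPowerSeries.coeff 0 (1 - psi φ)⁻¹ = 1 := by
  rw [MvPowerSeries.coeff_zero_eq_constantCoeff_apply, MvPowerSeries.constantCoeff_inv,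
    constantCoeff_one_sub_psi, inv_one]

lemma w_offd (φ : PowerSeries κ) (n : ℕ) (hn : 1 ≤ n) :
    MvPowerSeries.coeff (offd n) (1 - psi φ)⁻¹ = PowerSeries.coeff n φ := by
  classical
  rw [w_eq φ]
  rw [map_add, MvPowerSeries.coeff_one, if_neg (fun h : offd n = 0 => by
    have := congrArg (fun x : Fin 2 →₀ ℕ => x 0) h
    simp at this; omega), zero_add]
  rw [MvPowerSeries.coeff_mul]
  rw [Finset.sum_eq_single (offd n, (0 : Fin 2 →₀ ℕ))]
  · rw [coeff_psi, w_constant, offd_apply0, offd_apply1, if_pos (by omega), mul_one]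
  · intro p hp hne
    rw [Finset.HasAntidiagonal.mem_antidiagonal] at hp
    by_cases h1 : MvPowerSeries.coeff p.1 (psi φ) = 0
    · rw [h1, zero_mul]
    · have he := supp_psi h1
      have e0 := congrArg (fun x : Fin 2 →₀ ℕ => x 0) hp
      have e1 := congrArg (fun x : Fin 2 →₀ ℕ => x 1) hp
      simp only [Finsupp.add_apply, offd_apply0, offd_apply1] at e0 e1
      have hf : p.2 = diag (p.2 0) := fin2_ext (by simp) (by simp; omega)
      by_cases hz : p.2 0 = 0
      · exfalso
        apply hne
        have hf0 : p.2 = 0 := by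
          rw [hf, hz]; apply fin2_ext <;> simp
        have hp1 : p.1 = offd n := by
          apply fin2_ext
          · simp only [offd_apply0]; omega
          · simp only [offd_apply1]; omega
        rw [Prod.ext_iff]
        exact ⟨hp1, hf0⟩
      · rw [hf, w_diag φ (p.2 0) (by omega), mul_zero]
  · intro h
    exfalso
    apply h
    rw [Finset.HasAntidiagonal.mem_antidiagonal, add_zero]

/-! ### Polynomial translation lemmas -/

/-- `MvPolynomial → Polynomial (PowerSeries κ)` sending `X0 ↦ C X`, `X1 ↦ X`. -/
noncomputable def toPoly : MvPolynomial (Fin 2) κ →ₐ[κ] Polynomial (PowerSeries κ) :=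
  aeval ![Polynomial.C PowerSeries.X, Polynomial.X]

lemma toPoly_C (r : κ) : toPoly (MvPolynomial.C r : MvPolynomial (Fin 2) κ)
    = Polynomial.C (PowerSeries.C r) := by
  simp [toPoly, Polynomial.algebraMap_apply, PowerSeries.algebraMap_apply]

lemma eval₂_toPoly (Q : MvPolynomial (Fin 2) κ) :
    Polynomial.eval₂ (theta (κ := κ)) (MvPowerSeries.X 1) (toPoly Q)
      = ((aeval ![(MvPolynomial.X 0 : MvPolynomial (Fin 2) κ) * MvPolynomial.X 1,
            MvPolynomial.X 1] Q : MvPolynomial (Fin 2) κ) :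
          MvPowerSeries (Fin 2) κ) := by
  induction Q using MvPolynomial.induction_on with
  | C r =>
    rw [toPoly_C, Polynomial.eval₂_C, theta_C, aeval_C]
    simp [MvPolynomial.coe_C, MvPolynomial.algebraMap_eq]
  | add p q hp hq =>
    rw [map_add, Polynomial.eval₂_add, map_add, MvPolynomial.coe_add, hp, hq]
  | mul_X p i hp =>
    rw [map_mul, Polynomial.eval₂_mul, map_mul, MvPolynomial.coe_mul, hp]
    congr 1
    fin_cases i
    · simp [toPoly, theta_X, MvPolynomial.coe_mul, MvPolynomial.coe_X]
    · simp [toPoly, MvPolynomial.coe_X]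

lemma toPoly_pderiv (Q : MvPolynomial (Fin 2) κ) :
    toPoly (pderiv 1 Q) = Polynomial.derivative (toPoly Q) := by
  induction Q using MvPolynomial.induction_on with
  | C r => rw [pderiv_C, map_zero, toPoly_C, Polynomial.derivative_C]
  | add p q hp hq => rw [map_add, map_add, hp, hq, map_add, Polynomial.derivative_add]
  | mul_X p i hp =>
    rw [pderiv_mul, map_add, map_mul, map_mul, hp, map_mul, Polynomial.derivative_mul]
    congr 1
    fin_cases i
    · have h1 : pderiv (1 : Fin 2) (MvPolynomial.X (0 : Fin 2) : MvPolynomial (Fin 2) κ) = 0 :=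
        pderiv_X_of_ne (by decide)
      simp [toPoly, h1]
    · have h1 : pderiv (1 : Fin 2) (MvPolynomial.X (1 : Fin 2) : MvPolynomial (Fin 2) κ) = 1 :=
        pderiv_X_self _
      simp [toPoly, h1]

lemma eval_toPoly (φ : PowerSeries κ) (Q : MvPolynomial (Fin 2) κ) :
    Polynomial.eval φ (toPoly Q) = aeval ![PowerSeries.X, φ] Q := by
  induction Q using MvPolynomial.induction_on with
  | C r =>
    rw [toPoly_C, Polynomial.eval_C, aeval_C, PowerSeries.algebraMap_apply]
    simp
  | add p q hp hq => rw [map_add, Polynomial.eval_add, hp, hq, map_add]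
  | mul_X p i hp =>
    rw [map_mul, Polynomial.eval_mul, hp, map_mul]
    congr 1
    fin_cases i
    · simp [toPoly]
    · simp [toPoly]

lemma constantCoeff_coe_aevalXY (Q : MvPolynomial (Fin 2) κ) :
    MvPowerSeries.constantCoeff
      ((aeval ![(MvPolynomial.X 0 : MvPolynomial (Fin 2) κ) * MvPolynomial.X 1,
          MvPolynomial.X 1] Q : MvPolynomial (Fin 2) κ) :
        MvPowerSeries (Fin 2) κ)
      = MvPolynomial.eval (0 : Fin 2 → κ) Q := by
  induction Q using MvPolynomial.induction_on with
  | C r => simp [MvPolynomial.algebraMap_eq, MvPolynomial.coe_C]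
  | add p q hp hq => rw [map_add, MvPolynomial.coe_add, map_add, hp, map_add, hq]
  | mul_X p i hp =>
    rw [map_mul, MvPolynomial.coe_mul, map_mul, hp, map_mul]
    congr 1
    fin_cases i
    · simp [MvPolynomial.coe_mul, MvPolynomial.coe_X]
    · simp [MvPolynomial.coe_X]

lemma aeval_zero_comp (Q : MvPolynomial (Fin 2) κ) :
    aeval ![(MvPolynomial.X 0 : MvPolynomial (Fin 2) κ), 0]
        (aeval ![(MvPolynomial.X 0 : MvPolynomial (Fin 2) κ) * MvPolynomial.X 1,
          MvPolynomial.X 1] Q)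
      = MvPolynomial.C (MvPolynomial.eval (0 : Fin 2 → κ) Q) := by
  induction Q using MvPolynomial.induction_on with
  | C r => simp [MvPolynomial.algebraMap_eq]
  | add p q hp hq => rw [map_add, map_add, hp, hq, map_add, map_add]
  | mul_X p i hp =>
    rw [map_mul, map_mul, hp, map_mul, map_mul]
    congr 1
    fin_cases i
    · simp
    · simp

lemma X1_dvd_sub (p : MvPolynomial (Fin 2) κ) :
    (MvPolynomial.X 1 : MvPolynomial (Fin 2) κ) ∣
      p - aeval ![(MvPolynomial.X 0 : MvPolynomial (Fin 2) κ), 0] p := by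
  induction p using MvPolynomial.induction_on with
  | C r => simp [MvPolynomial.algebraMap_eq]
  | add p q hp hq =>
    have heq : p + q - aeval ![(MvPolynomial.X 0 : MvPolynomial (Fin 2) κ), 0] (p + q)
        = (p - aeval ![(MvPolynomial.X 0 : MvPolynomial (Fin 2) κ), 0] p)
          + (q - aeval ![(MvPolynomial.X 0 : MvPolynomial (Fin 2) κ), 0] q) := by
      rw [map_add]; ring
    rw [heq]
    exact dvd_add hp hq
  | mul_X p i hp =>
    rw [map_mul]
    fin_cases i
    · have heq : p * (MvPolynomial.X 0 : MvPolynomial (Fin 2) κ)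
          - aeval ![(MvPolynomial.X 0 : MvPolynomial (Fin 2) κ), 0] p
            * aeval ![(MvPolynomial.X 0 : MvPolynomial (Fin 2) κ), 0]
                (MvPolynomial.X 0 : MvPolynomial (Fin 2) κ)
          = (p - aeval ![(MvPolynomial.X 0 : MvPolynomial (Fin 2) κ), 0] p)
            * (MvPolynomial.X 0 : MvPolynomial (Fin 2) κ) := by
        simp only [aeval_X, Matrix.cons_val_zero]
        ring
      rw [show ((⟨0, by omega⟩ : Fin 2) : Fin 2) = 0 from rfl, heq]
      exact hp.mul_right _
    · have h0 : aeval ![(MvPolynomial.X 0 : MvPolynomial (Fin 2) κ), 0]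
          (MvPolynomial.X 1 : MvPolynomial (Fin 2) κ) = 0 := by simp
      rw [show ((⟨1, by omega⟩ : Fin 2) : Fin 2) = 1 from rfl, h0, mul_zero, sub_zero]
      exact Dvd.intro p (mul_comm _ _)

lemma constantCoeff_aeval_root (φ : PowerSeries κ)
    (hφ0 : PowerSeries.constantCoeff φ = 0) (Q : MvPolynomial (Fin 2) κ) :
    PowerSeries.constantCoeff (aeval ![PowerSeries.X, φ] Q)
      = MvPolynomial.eval (0 : Fin 2 → κ) Q := by
  induction Q using MvPolynomial.induction_on with
  | C r => simp [PowerSeries.algebraMap_apply]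
  | add p q hp hq => rw [map_add, map_add, hp, hq, map_add]
  | mul_X p i hp =>
    rw [map_mul, map_mul, hp, map_mul]
    congr 1
    fin_cases i
    · simp
    · simpa using hφ0

lemma X1_ne_zero : (MvPowerSeries.X 1 : MvPowerSeries (Fin 2) κ) ≠ 0 := by
  classical
  intro h
  have := congrArg (MvPowerSeries.coeff (Finsupp.single 1 1)) h
  rw [MvPowerSeries.coeff_X, if_pos rfl, map_zero] at this
  exact one_ne_zero this

lemma supp_eval₂ (U : Polynomial (PowerSeries κ)) :
    ∀ d, MvPowerSeries.coeff d
      (Polynomial.eval₂ (theta (κ := κ)) (MvPowerSeries.X 1) U) ≠ 0 → d 0 ≤ d 1 := by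
  classical
  induction U using Polynomial.induction_on' with
  | add p q hp hq =>
    intro d hd
    rw [Polynomial.eval₂_add] at hd
    rcases supp_add hd with h | h
    · exact hp d h
    · exact hq d h
  | monomial k a =>
    intro d hd
    rw [Polynomial.eval₂_monomial] at hd
    refine supp_mul (i := 1) (j := 0) ?_ ?_ d hd
    · intro e he
      rw [coeff_theta] at he
      by_cases h : e 0 = e 1
      · omega
      · rw [if_neg h] at he; exact absurd rfl he
    · intro e he
      rw [MvPowerSeries.X_pow_eq, MvPowerSeries.coeff_monomial] at he
      by_cases h : e = Finsupp.single 1 k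
      · subst h; simp [Finsupp.single_apply]
      · rw [if_neg h] at he; exact absurd rfl he

lemma coeff_diag_X1_sq {g : MvPowerSeries (Fin 2) κ}
    (hg : ∀ d, MvPowerSeries.coeff d g ≠ 0 → d 0 ≤ d 1) (n : ℕ) (hn : 1 ≤ n) :
    MvPowerSeries.coeff (diag n) (MvPowerSeries.X 1 * (MvPowerSeries.X 1 * g)) = 0 := by
  rw [coeff_X1_mul, if_pos (Finsupp.single_le_iff.mpr (by simp [hn]))]
  rw [coeff_X1_mul]
  by_cases h2 : Finsupp.single (1 : Fin 2) 1 ≤ diag n - Finsupp.single 1 1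
  · rw [if_pos h2]
    have hh := Finsupp.single_le_iff.mp h2
    rw [sub_single_apply1] at hh
    simp only [diag_apply1] at hh
    by_contra hc
    have := hg _ hc
    rw [sub_single_apply0, sub_single_apply0, sub_single_apply1, sub_single_apply1] at this
    simp only [diag_apply0, diag_apply1] at this
    omega
  · rw [if_neg h2]

end Furstenberg

open Furstenberg

/-- **Furstenberg's proposition** (Proposition 1 of the paper).
A two-variable polynomial `P(X,Y)` over a field `κ` is encoded as
`MvPolynomial (Fin 2) κ`, with variable `0` playing the role of `X` and
variable `1` the role of `Y`.  If `φ = ∑_{n ≥ 1} c_n X^n` satisfies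
`P(X, φ(X)) = 0` and `∂P/∂Y(0,0) ≠ 0`, then `P(XY,Y) = Y · S(X,Y)` with
`S(0,0) = ∂P/∂Y(0,0) ≠ 0`, `S` invertible as a power series, and `φ` is the
diagonal of `Y · (∂P/∂Y)(XY,Y) · S(X,Y)⁻¹`. -/
theorem furstenberg_diagonal (κ : Type*) [Field κ]
    (P : MvPolynomial (Fin 2) κ)
    (φ : PowerSeries κ)
    (hφ0 : PowerSeries.constantCoeff φ = 0)
    (hroot : MvPolynomial.aeval ![PowerSeries.X, φ] P = 0)
    (hPY : MvPolynomial.eval (0 : Fin 2 → κ) (MvPolynomial.pderiv 1 P) ≠ 0) :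
    ∃ S : MvPolynomial (Fin 2) κ,
      -- `P(XY, Y)` is divisible by `Y`, with quotient `S`
      (MvPolynomial.aeval ![(X 0 : MvPolynomial (Fin 2) κ) * X 1, X 1] P
          = X 1 * S) ∧
      -- `S(0,0) = ∂P/∂Y(0,0)`
      MvPolynomial.eval (0 : Fin 2 → κ) S
          = MvPolynomial.eval (0 : Fin 2 → κ) (MvPolynomial.pderiv 1 P) ∧
      -- hence `S` is invertible as a formal power series
      IsUnit (S : MvPowerSeries (Fin 2) κ) ∧
      -- and `φ` is the diagonal of `Y · (∂P/∂Y)(XY,Y) · S⁻¹`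
      ∀ n : ℕ, 1 ≤ n →
        PowerSeries.coeff n φ =
          MvPowerSeries.coeff (Finsupp.single 0 n + Finsupp.single 1 n)
            (MvPowerSeries.X 1
              * ((MvPolynomial.aeval
                    ![(X 0 : MvPolynomial (Fin 2) κ) * X 1, X 1]
                    (MvPolynomial.pderiv 1 P) : MvPolynomial (Fin 2) κ)
                  : MvPowerSeries (Fin 2) κ)
              * (S : MvPowerSeries (Fin 2) κ)⁻¹) := by
  classical
  -- constant term of `P` vanishes
  have heval0P : MvPolynomial.eval (0 : Fin 2 → κ) P = 0 := by
    have h := congrArg (PowerSeries.constantCoeff) hroot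
    rw [constantCoeff_aeval_root φ hφ0 P] at h
    simpa using h
  -- divisibility by `Y`
  have hdvd : (X 1 : MvPolynomial (Fin 2) κ) ∣
      MvPolynomial.aeval ![(X 0 : MvPolynomial (Fin 2) κ) * X 1, X 1] P := by
    have h1 := X1_dvd_sub (κ := κ)
      (aeval ![(MvPolynomial.X 0 : MvPolynomial (Fin 2) κ) * MvPolynomial.X 1,
        MvPolynomial.X 1] P)
    rw [aeval_zero_comp, heval0P, map_zero, sub_zero] at h1
    exact h1
  obtain ⟨S, hS⟩ := hdvd
  -- root of the associated one-variable polynomial & factor theorem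
  have hroot' : Polynomial.IsRoot (toPoly P) φ := by
    show Polynomial.eval φ (toPoly P) = 0
    rw [eval_toPoly, hroot]
  obtain ⟨U, hU⟩ := (Polynomial.dvd_iff_isRoot).mpr hroot'
  set u : MvPowerSeries (Fin 2) κ :=
    Polynomial.eval₂ theta (MvPowerSeries.X 1) U with hu_def
  set u₂ : MvPowerSeries (Fin 2) κ :=
    Polynomial.eval₂ theta (MvPowerSeries.X 1) (Polynomial.derivative U) with hu₂_def
  -- the image of `P(XY, Y)` in power series
  have hQc : ((MvPolynomial.aeval ![(X 0 : MvPolynomial (Fin 2) κ) * X 1, X 1] P :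
      MvPolynomial (Fin 2) κ) : MvPowerSeries (Fin 2) κ)
      = (MvPowerSeries.X 1 - theta φ) * u := by
    rw [← eval₂_toPoly, hU, Polynomial.eval₂_mul, Polynomial.eval₂_sub,
      Polynomial.eval₂_X, Polynomial.eval₂_C]
  have hpsi : MvPowerSeries.X 1 * psi φ = theta φ := X1_mul_psi hφ0
  -- cancellation of `Y`
  have hSc : ((S : MvPolynomial (Fin 2) κ) : MvPowerSeries (Fin 2) κ)
      = (1 - psi φ) * u := by
    apply mul_left_cancel₀ (X1_ne_zero (κ := κ))
    have hcoe : (MvPowerSeries.X 1 : MvPowerSeries (Fin 2) κ) * (S : MvPowerSeries (Fin 2) κ)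
        = ((MvPolynomial.aeval ![(X 0 : MvPolynomial (Fin 2) κ) * X 1, X 1] P :
            MvPolynomial (Fin 2) κ) : MvPowerSeries (Fin 2) κ) := by
      rw [hS, MvPolynomial.coe_mul, MvPolynomial.coe_X]
    rw [hcoe, hQc, ← hpsi]
    ring
  -- derivative identity
  have hDpoly : toPoly (pderiv 1 P)
      = U + (Polynomial.X - Polynomial.C φ) * Polynomial.derivative U := by
    rw [toPoly_pderiv, hU, Polynomial.derivative_mul, Polynomial.derivative_sub,
      Polynomial.derivative_X, Polynomial.derivative_C, sub_zero, one_mul]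
  have hDc : ((MvPolynomial.aeval ![(X 0 : MvPolynomial (Fin 2) κ) * X 1, X 1]
      (MvPolynomial.pderiv 1 P) : MvPolynomial (Fin 2) κ) : MvPowerSeries (Fin 2) κ)
      = u + (MvPowerSeries.X 1 - theta φ) * u₂ := by
    rw [← eval₂_toPoly, hDpoly, Polynomial.eval₂_add, Polynomial.eval₂_mul,
      Polynomial.eval₂_sub, Polynomial.eval₂_X, Polynomial.eval₂_C]
  -- constant coefficients
  have hccth : MvPowerSeries.constantCoeff (theta φ) = 0 :=
    (constantCoeff_theta φ).trans hφ0
  have hccX1 : MvPowerSeries.constantCoeff (MvPowerSeries.X 1 : MvPowerSeries (Fin 2) κ) = 0 :=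
    MvPowerSeries.constantCoeff_X 1
  have hccu : MvPowerSeries.constantCoeff u
      = MvPolynomial.eval (0 : Fin 2 → κ) (MvPolynomial.pderiv 1 P) := by
    have h := congrArg (MvPowerSeries.constantCoeff) hDc
    rw [constantCoeff_coe_aevalXY, map_add, map_mul, map_sub, hccth, hccX1, sub_zero,
      zero_mul, add_zero] at h
    exact h.symm
  have hccu_ne : MvPowerSeries.constantCoeff u ≠ 0 := by rw [hccu]; exact hPY
  have h1ψ_ne : MvPowerSeries.constantCoeff (1 - psi φ) ≠ 0 := by
    rw [constantCoeff_one_sub_psi]; exact one_ne_zero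
  have hccS : MvPowerSeries.constantCoeff (S : MvPowerSeries (Fin 2) κ)
      = MvPolynomial.eval (0 : Fin 2 → κ) (MvPolynomial.pderiv 1 P) := by
    rw [hSc, map_mul, constantCoeff_one_sub_psi, one_mul, hccu]
  have hccS_eval : MvPowerSeries.constantCoeff (S : MvPowerSeries (Fin 2) κ)
      = MvPolynomial.eval (0 : Fin 2 → κ) S := by
    rw [← MvPowerSeries.coeff_zero_eq_constantCoeff_apply, MvPolynomial.coeff_coe,
      MvPolynomial.eval_zero, MvPolynomial.constantCoeff_eq]
  refine ⟨S, hS, by rw [← hccS_eval, hccS], ?_, ?_⟩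
  · exact MvPowerSeries.isUnit_iff_constantCoeff.mpr
      (by rw [hccS]; exact isUnit_iff_ne_zero.mpr hPY)
  · intro n hn
    -- support facts
    have hu_supp : ∀ d, MvPowerSeries.coeff d u ≠ 0 → d 0 ≤ d 1 := supp_eval₂ U
    have hu2_supp : ∀ d, MvPowerSeries.coeff d u₂ ≠ 0 → d 0 ≤ d 1 :=
      supp_eval₂ (Polynomial.derivative U)
    have huinv_supp : ∀ d, MvPowerSeries.coeff d u⁻¹ ≠ 0 → d 0 ≤ d 1 :=
      supp_inv (i := 1) (j := 0) hu_supp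
    have hg_supp : ∀ d, MvPowerSeries.coeff d (u₂ * u⁻¹) ≠ 0 → d 0 ≤ d 1 :=
      supp_mul (i := 1) (j := 0) hu2_supp huinv_supp
    -- inverse of `S`
    have hSinv : (S : MvPowerSeries (Fin 2) κ)⁻¹ = (1 - psi φ)⁻¹ * u⁻¹ := by
      rw [hSc, MvPowerSeries.mul_inv_rev, mul_comm]
    have hu' : u * u⁻¹ = 1 := MvPowerSeries.mul_inv_cancel _ hccu_ne
    have hw' : (1 - psi φ) * (1 - psi φ)⁻¹ = 1 := MvPowerSeries.mul_inv_cancel _ h1ψ_ne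
    have key : (MvPowerSeries.X 1 : MvPowerSeries (Fin 2) κ)
        * ((MvPolynomial.aeval ![(X 0 : MvPolynomial (Fin 2) κ) * X 1, X 1]
            (MvPolynomial.pderiv 1 P) : MvPolynomial (Fin 2) κ) : MvPowerSeries (Fin 2) κ)
        * (S : MvPowerSeries (Fin 2) κ)⁻¹
        = MvPowerSeries.X 1 * (1 - psi φ)⁻¹
          + MvPowerSeries.X 1 * (MvPowerSeries.X 1 * (u₂ * u⁻¹)) := by
      rw [hDc, ← hpsi, hSinv]
      calc (MvPowerSeries.X 1 : MvPowerSeries (Fin 2) κ)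
            * (u + (MvPowerSeries.X 1 - MvPowerSeries.X 1 * psi φ) * u₂)
            * ((1 - psi φ)⁻¹ * u⁻¹)
          = MvPowerSeries.X 1 * (1 - psi φ)⁻¹ * (u * u⁻¹)
            + (MvPowerSeries.X 1 * (MvPowerSeries.X 1 * (u₂ * u⁻¹)))
              * ((1 - psi φ) * (1 - psi φ)⁻¹) := by ring
        _ = MvPowerSeries.X 1 * (1 - psi φ)⁻¹
            + MvPowerSeries.X 1 * (MvPowerSeries.X 1 * (u₂ * u⁻¹)) := by
            rw [hu', hw', mul_one, mul_one]
    rw [show (Finsupp.single (0 : Fin 2) n + Finsupp.single 1 n) = diag n from rfl, key,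
      map_add, coeff_diag_X1_sq hg_supp n hn, add_zero, coeff_X1_mul,
      if_pos (Finsupp.single_le_iff.mpr (by simp [hn]))]
    rw [show diag n - Finsupp.single 1 1 = offd n from
      fin2_ext (by rw [sub_single_apply0]; simp) (by rw [sub_single_apply1]; simp)]
    rw [w_offd φ n hn]
end

section
/- Let κ be a field of positive characteristic p and let f ∈ κ[[x₁,…,x_m]] be a formal power series in m variables that represents a rational function, i.e., there exist polynomials P, Q ∈ κ[x₁,…,x_m] with Q ≠ 0 (and Q having nonzero constant term) such that Q·f = P in κ[[x₁,…,x_m]]. Then the diagonal 𝒟f(t) = Σ_n a_{n,…,n} tⁿ ∈ κ[[t]] (where f = Σ a_{n₁,…,n_m} x₁^{n₁}⋯x_m^{n_m}) is algebraic over the rational function field κ(t); that is, there exists a nonzero polynomial G(t,Y) with coefficients in κ[t] such that G(t, 𝒟f(t)) = 0 in κ[[t]]. -/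
open Finsupp

namespace FurstAux

noncomputable section

variable {κ : Type*} [Field κ]

/-- The constant exponent vector `(n, …, n)`. -/
def cst (m n : ℕ) : Fin m →₀ ℕ := Finsupp.equivFunOnFinite.symm fun _ => n

lemma cst_apply {m : ℕ} (n : ℕ) (i : Fin m) : cst m n i = n := rfl

lemma smul_cst_add_cst {m : ℕ} (p a b : ℕ) :
    p • cst m a + cst m b = cst m (p * a + b) := by
  ext i
  simp [cst_apply, Finsupp.smul_apply, Finsupp.add_apply, smul_eq_mul]

/-- `Dlev p N g` is the diagonal of `g (x ^ (p^N))`. -/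
def Dlev (p : ℕ) {m : ℕ} (N : ℕ) (g : MvPowerSeries (Fin m) κ) : PowerSeries κ :=
  PowerSeries.mk fun k =>
    if p ^ N ∣ k then MvPowerSeries.coeff (R := κ) (cst m (k / p ^ N)) g else 0

lemma coeff_Dlev (p : ℕ) {m : ℕ} (N k : ℕ) (g : MvPowerSeries (Fin m) κ) :
    PowerSeries.coeff (R := κ) k (Dlev p N g)
      = if p ^ N ∣ k then MvPowerSeries.coeff (R := κ) (cst m (k / p ^ N)) g else 0 :=
  PowerSeries.coeff_mk _ _

lemma Dlev_smul (p : ℕ) {m : ℕ} (N : ℕ) (c : κ) (g : MvPowerSeries (Fin m) κ) :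
    Dlev p N (c • g) = c • Dlev p N g := by
  ext k
  simp only [coeff_Dlev, map_smul, smul_eq_mul, PowerSeries.coeff_smul]
  split <;> simp

lemma Dlev_sum (p : ℕ) {m : ℕ} (N : ℕ) {ι : Type*} (s : Finset ι)
    (g : ι → MvPowerSeries (Fin m) κ) :
    Dlev p N (∑ i ∈ s, g i) = ∑ i ∈ s, Dlev p N (g i) := by
  ext k
  rw [map_sum]
  simp only [coeff_Dlev, map_sum]
  split <;> simp

/-- The (untwisted) diagonal Cartier-type operator. -/
def lamMv (p j : ℕ) {m : ℕ} (g : MvPowerSeries (Fin m) κ) : MvPowerSeries (Fin m) κ :=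
  fun s => MvPowerSeries.coeff (R := κ) (p • s + cst m j) g

lemma coeff_lamMv (p j : ℕ) {m : ℕ} (s : Fin m →₀ ℕ) (g : MvPowerSeries (Fin m) κ) :
    MvPowerSeries.coeff (R := κ) s (lamMv p j g) = MvPowerSeries.coeff (R := κ) (p • s + cst m j) g := rfl

/-- Key decomposition: `Dlev p N g = ∑_{j<p} Dlev p (N+1) (lamMv p j g) · X^{j p^N}`. -/
lemma Dlev_step (p : ℕ) (hp : 0 < p) {m : ℕ} (N : ℕ) (g : MvPowerSeries (Fin m) κ) :
    Dlev p N g = ∑ j ∈ Finset.range p,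
      Dlev p (N + 1) (lamMv p j g) * (PowerSeries.X : PowerSeries κ) ^ (j * p ^ N) := by
  have hpN : 0 < p ^ N := pow_pos hp N
  ext k
  rw [coeff_Dlev, map_sum]
  have hterm : ∀ j, (PowerSeries.coeff (R := κ) k)
      (Dlev p (N + 1) (lamMv p j g) * (PowerSeries.X : PowerSeries κ) ^ (j * p ^ N))
      = if j * p ^ N ≤ k ∧ p ^ (N + 1) ∣ (k - j * p ^ N) then
          MvPowerSeries.coeff (R := κ)
            (p • cst m ((k - j * p ^ N) / p ^ (N + 1)) + cst m j) g else 0 := by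
    intro j
    rw [PowerSeries.coeff_mul_X_pow', coeff_Dlev]
    by_cases h1 : j * p ^ N ≤ k
    · by_cases h2 : p ^ (N + 1) ∣ (k - j * p ^ N)
      · rw [if_pos h1, if_pos h2, if_pos ⟨h1, h2⟩, coeff_lamMv]
      · rw [if_pos h1, if_neg h2, if_neg (by tauto)]
    · rw [if_neg h1, if_neg (by tauto)]
  simp only [hterm]
  by_cases hk : p ^ N ∣ k
  · obtain ⟨q, rfl⟩ := hk
    rw [if_pos (Dvd.intro q rfl), Nat.mul_div_cancel_left q hpN]
    rw [Finset.sum_eq_single_of_mem (q % p) (Finset.mem_range.2 (Nat.mod_lt q hp))]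
    · have h1 : q % p * p ^ N ≤ p ^ N * q := by
        rw [mul_comm (p ^ N) q]
        exact Nat.mul_le_mul_right _ (Nat.mod_le q p)
      have hsub : p ^ N * q - q % p * p ^ N = p ^ (N + 1) * (q / p) := by
        have hqm := Nat.mod_add_div q p
        calc p ^ N * q - q % p * p ^ N = (q - q % p) * p ^ N := by
              rw [mul_comm (p ^ N) q, ← Nat.sub_mul]
          _ = (p * (q / p)) * p ^ N := by congr 1; omega
          _ = p ^ (N + 1) * (q / p) := by ring
      have h2 : p ^ (N + 1) ∣ (p ^ N * q - q % p * p ^ N) := ⟨q / p, by rw [hsub]⟩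
      rw [if_pos ⟨h1, h2⟩, hsub, Nat.mul_div_cancel_left _ (pow_pos hp (N + 1)),
        smul_cst_add_cst, Nat.div_add_mod q p]
    · intro j hj hne
      rw [if_neg]
      rintro ⟨h1, h2⟩
      have hjq : j ≤ q := by
        rw [mul_comm (p ^ N) q] at h1
        exact Nat.le_of_mul_le_mul_right h1 hpN
      have hsub2 : p ^ N * q - j * p ^ N = p ^ N * (q - j) := by
        rw [mul_comm (p ^ N) q, ← Nat.sub_mul, mul_comm]
      rw [hsub2, pow_succ] at h2
      have hdvd : p ∣ q - j := (Nat.mul_dvd_mul_iff_left hpN).1 h2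
      apply hne
      obtain ⟨c, hc⟩ := hdvd
      have : q = j + p * c := by omega
      rw [this, Nat.add_mul_mod_self_left, Nat.mod_eq_of_lt (Finset.mem_range.1 hj)]
  · rw [if_neg hk]
    refine (Finset.sum_eq_zero fun j hj => ?_).symm
    rw [if_neg]
    rintro ⟨h1, h2⟩
    apply hk
    have hd1 : p ^ N ∣ k - j * p ^ N :=
      dvd_trans (pow_dvd_pow p (Nat.le_succ N)) h2
    have hd2 : p ^ N ∣ j * p ^ N := dvd_mul_left _ _
    have hk' : k = (k - j * p ^ N) + j * p ^ N := (Nat.sub_add_cancel h1).symm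
    rw [hk']
    exact dvd_add hd1 hd2


/-- `expand p B` as a sum of monomials. -/
lemma expand_eq_sum (p : ℕ) (hp : 0 < p) {m : ℕ} (B : MvPolynomial (Fin m) κ) :
    MvPolynomial.expand p B
      = ∑ α ∈ B.support, MvPolynomial.monomial (p • α) (B.coeff α) := by
  conv_lhs => rw [B.as_sum, map_sum]
  refine Finset.sum_congr rfl fun α _ => ?_
  rw [MvPolynomial.expand_monomial, MvPolynomial.monomial_eq]

lemma smul_finsupp_cancel {p : ℕ} (hp : 0 < p) {m : ℕ} {a b : Fin m →₀ ℕ}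
    (h : p • a = p • b) : a = b := by
  ext i
  have := DFunLike.congr_fun h i
  simp only [Finsupp.smul_apply, smul_eq_mul] at this
  exact Nat.eq_of_mul_eq_mul_left hp this

lemma coeff_expand_smul (p : ℕ) (hp : 0 < p) {m : ℕ} (B : MvPolynomial (Fin m) κ)
    (l : Fin m →₀ ℕ) :
    MvPolynomial.coeff (p • l) (MvPolynomial.expand p B) = MvPolynomial.coeff l B := by
  rw [expand_eq_sum p hp, MvPolynomial.coeff_sum]
  simp only [MvPolynomial.coeff_monomial]
  have hcongr : ∀ α ∈ B.support,
      (if p • α = p • l then B.coeff α else 0) = if α = l then B.coeff α else 0 := by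
    intro α _
    refine if_congr ⟨fun h => smul_finsupp_cancel hp h, fun h => by rw [h]⟩ rfl rfl
  rw [Finset.sum_congr rfl hcongr, Finset.sum_ite_eq' B.support l]
  by_cases hl : l ∈ B.support
  · rw [if_pos hl]
  · rw [if_neg hl, (MvPolynomial.notMem_support_iff.1 hl)]

lemma coeff_expand_eq_zero (p : ℕ) (hp : 0 < p) {m : ℕ} (B : MvPolynomial (Fin m) κ)
    (x : Fin m →₀ ℕ) (hx : ¬ ∀ i, p ∣ x i) :
    MvPolynomial.coeff x (MvPolynomial.expand p B) = 0 := by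
  rw [expand_eq_sum p hp, MvPolynomial.coeff_sum]
  refine Finset.sum_eq_zero fun α _ => ?_
  rw [MvPolynomial.coeff_monomial, if_neg]
  intro h
  exact hx fun i => ⟨α i, by rw [← h]; simp [Finsupp.smul_apply, mul_comm]⟩

/-- The key semilinearity of `lamMv` with respect to `p`-th power substituted factors. -/
lemma lamMv_expand_mul (p : ℕ) {m : ℕ} (j : ℕ) (hj : j < p)
    (B : MvPolynomial (Fin m) κ) (g : MvPowerSeries (Fin m) κ) :
    lamMv p j (((MvPolynomial.expand p B : MvPolynomial (Fin m) κ) :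
        MvPowerSeries (Fin m) κ) * g)
      = (B : MvPowerSeries (Fin m) κ) * lamMv p j g := by
  have hp : 0 < p := lt_of_le_of_lt (Nat.zero_le j) hj
  ext s
  rw [coeff_lamMv, MvPowerSeries.coeff_mul, MvPowerSeries.coeff_mul]
  set φ : ((Fin m →₀ ℕ) × (Fin m →₀ ℕ)) → ((Fin m →₀ ℕ) × (Fin m →₀ ℕ)) :=
    fun y => (p • y.1, p • y.2 + cst m j) with hφ
  have hinj : Set.InjOn φ (Finset.HasAntidiagonal.antidiagonal s) := by
    intro y _ z _ hyz
    rw [Prod.ext_iff] at hyz ⊢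
    obtain ⟨h1, h2⟩ := hyz
    exact ⟨smul_finsupp_cancel hp h1,
      smul_finsupp_cancel hp (add_right_cancel h2)⟩
  have hsub : Finset.image φ (Finset.HasAntidiagonal.antidiagonal s)
      ⊆ Finset.HasAntidiagonal.antidiagonal (p • s + cst m j) := by
    intro x hx
    obtain ⟨y, hy, rfl⟩ := Finset.mem_image.1 hx
    have hyy := Finset.HasAntidiagonal.mem_antidiagonal.1 hy
    rw [Finset.HasAntidiagonal.mem_antidiagonal, hφ]
    show p • y.1 + (p • y.2 + cst m j) = p • s + cst m j
    rw [← add_assoc, ← smul_add, hyy]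
  have hvan : ∀ x ∈ Finset.HasAntidiagonal.antidiagonal (p • s + cst m j),
      x ∉ Finset.image φ (Finset.HasAntidiagonal.antidiagonal s) →
      (MvPowerSeries.coeff (R := κ) x.1)
          ((MvPolynomial.expand p B : MvPolynomial (Fin m) κ) :
            MvPowerSeries (Fin m) κ) * (MvPowerSeries.coeff (R := κ) x.2) g = 0 := by
    intro x hx hnot
    by_cases hdvd : ∀ i, p ∣ x.1 i
    · exfalso
      apply hnot
      have hxsum := Finset.HasAntidiagonal.mem_antidiagonal.1 hx
      set l : Fin m →₀ ℕ := x.1.mapRange (· / p) (Nat.zero_div _) with hl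
      have hpl : p • l = x.1 := by
        ext i
        simp only [Finsupp.smul_apply, smul_eq_mul, hl, Finsupp.mapRange_apply]
        exact Nat.mul_div_cancel' (hdvd i) 
      have hcomp : ∀ i, p * l i + x.2 i = p * s i + j := by
        intro i
        have := DFunLike.congr_fun hxsum i
        simp only [Finsupp.add_apply, Finsupp.smul_apply, smul_eq_mul, cst_apply] at this
        rw [← this, ← hpl]
        simp [Finsupp.smul_apply, smul_eq_mul]
      have hls : l ≤ s := by
        rw [Finsupp.le_def]
        intro i
        have h1 := hcomp i
        have h2 : p * l i < p * (s i + 1) := by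
          have : p * l i ≤ p * s i + j := by omega
          have : p * s i + j < p * s i + p := by omega
          calc p * l i ≤ p * s i + j := by omega
            _ < p * (s i + 1) := by rw [Nat.mul_add, Nat.mul_one]; omega
        exact Nat.le_of_lt_succ (Nat.lt_of_mul_lt_mul_left h2)
      refine Finset.mem_image.2 ⟨⟨l, s - l⟩, Finset.HasAntidiagonal.mem_antidiagonal.2 ?_, ?_⟩
      · ext i
        simp only [Finsupp.add_apply, Finsupp.tsub_apply]
        have := hls i
        omega
      · rw [hφ]
        have h2 : p • (s - l) + cst m j = x.2 := by
          ext i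
          simp only [Finsupp.add_apply, Finsupp.smul_apply, smul_eq_mul,
            Finsupp.tsub_apply, cst_apply]
          have h1 := hcomp i
          have h3 := hls i
          obtain ⟨c, hc⟩ := Nat.le.dest h3
          have hsl : s i - l i = c := by omega
          rw [hsl]
          have : p * s i = p * l i + p * c := by rw [← hc, Nat.mul_add]
          omega
        show (p • l, p • (s - l) + cst m j) = x
        rw [hpl, h2]
    · rw [MvPolynomial.coeff_coe, coeff_expand_eq_zero p hp B _ hdvd, zero_mul]
  rw [← Finset.sum_subset hsub hvan, Finset.sum_image hinj]
  refine Finset.sum_congr rfl fun y _ => ?_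
  rw [hφ]
  show (MvPowerSeries.coeff (R := κ) (p • y.1)) _ * (MvPowerSeries.coeff (R := κ) (p • y.2 + cst m j)) g = _
  rw [MvPolynomial.coeff_coe, coeff_expand_smul p hp, coeff_lamMv, MvPolynomial.coeff_coe]

/-- Vanishing of coefficients above the degree in one variable. -/
lemma coeff_eq_zero_of_degreeOf_lt {m : ℕ} {W : MvPolynomial (Fin m) κ}
    {γ : Fin m →₀ ℕ} {i : Fin m} (h : W.degreeOf i < γ i) :
    MvPolynomial.coeff γ W = 0 := by
  by_contra hne
  have hmem : γ ∈ W.support := MvPolynomial.mem_support_iff.2 hne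
  have h2 : γ i ≤ W.degreeOf i := by
    simpa [MvPolynomial.degreeOf_eq_sup] using
      Finset.le_sup (f := fun δ : Fin m →₀ ℕ => δ i) hmem
  omega

lemma lamMv_coe_poly (p : ℕ) {m : ℕ} (j D : ℕ) (hj : j < p)
    (W : MvPolynomial (Fin m) κ) (hW : ∀ i, W.degreeOf i ≤ p * D + j) :
    lamMv p j (W : MvPowerSeries (Fin m) κ)
      = ∑ γ ∈ Finset.Iic (cst m D),
          (MvPolynomial.coeff (p • γ + cst m j) W) •
            ((MvPolynomial.monomial γ (1 : κ) : MvPolynomial (Fin m) κ) :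
              MvPowerSeries (Fin m) κ) := by
  have hp : 0 < p := lt_of_le_of_lt (Nat.zero_le j) hj
  ext s
  rw [coeff_lamMv, map_sum]
  simp only [map_smul, smul_eq_mul, MvPolynomial.coeff_coe, MvPolynomial.coeff_monomial,
    mul_ite, mul_one, mul_zero]
  rw [Finset.sum_ite_eq' (Finset.Iic (cst m D)) s]
  by_cases hs : s ∈ Finset.Iic (cst m D)
  · rw [if_pos hs]
  · rw [if_neg hs]
    have hex : ∃ i, D < s i := by
      by_contra hcon
      push_neg at hcon
      exact hs (Finset.mem_Iic.2 (Finsupp.le_def.2 fun i => by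
        have := hcon i; simpa [cst_apply] using this))
    obtain ⟨i, hi⟩ := hex
    refine coeff_eq_zero_of_degreeOf_lt (i := i) ?_
    have h1 : (p • s + cst m j) i = p * s i + j := by
      simp [Finsupp.add_apply, Finsupp.smul_apply, smul_eq_mul, cst_apply]
    rw [h1]
    have := hW i
    have : p * (D + 1) ≤ p * s i := Nat.mul_le_mul_left p hi
    have hpD : p * D + p ≤ p * s i := by
      rw [Nat.mul_add, Nat.mul_one] at this
      omega
    omega

lemma expand_map_frobenius (p : ℕ) [Fact p.Prime] [CharP κ p] {m : ℕ}
    (F : MvPolynomial (Fin m) κ) :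
    MvPolynomial.expand p (MvPolynomial.map (frobenius κ p) F) = F ^ p := by
  have h : ((MvPolynomial.expand p (R := κ) (σ := Fin m)).toRingHom.comp
      (MvPolynomial.map (frobenius κ p)))
      = frobenius (MvPolynomial (Fin m) κ) p := by
    apply MvPolynomial.ringHom_ext
    · intro a
      simp [frobenius_def, map_pow]
    · intro i
      simp [frobenius_def, MvPolynomial.expand_X]
  have := DFunLike.congr_fun h F
  simpa [frobenius_def] using this

section QSetup

variable {m : ℕ}

/-- Frobenius twists of the denominator. -/
def PN (p : ℕ) [Fact p.Prime] [CharP κ p] (Q : MvPolynomial (Fin m) κ) (N : ℕ) :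
    MvPolynomial (Fin m) κ :=
  MvPolynomial.map (iterateFrobenius κ p N) Q

variable (p : ℕ) [Fact p.Prime] [CharP κ p] (Q : MvPolynomial (Fin m) κ)
  (hQ0 : MvPolynomial.coeff 0 Q ≠ 0)

lemma PN_succ (N : ℕ) :
    MvPolynomial.map (frobenius κ p) (PN p Q N) = PN p Q (N + 1) := by
  rw [PN, PN, MvPolynomial.map_map]
  have h : (frobenius κ p).comp (iterateFrobenius κ p N) = iterateFrobenius κ p (N + 1) := by
    ext a
    simp only [RingHom.coe_comp, Function.comp_apply, iterateFrobenius_def, frobenius_def]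
    rw [← pow_mul, pow_succ]
  rw [h]

include hQ0 in
lemma PN_coeff_zero_ne (N : ℕ) : MvPolynomial.coeff 0 (PN p Q N) ≠ 0 := by
  rw [PN, MvPolynomial.coeff_map, iterateFrobenius_def]
  exact pow_ne_zero _ hQ0

include hQ0 in
lemma PN_constantCoeff_ne (N : ℕ) :
    MvPowerSeries.constantCoeff (σ := Fin m) (R := κ) ((PN p Q N : MvPolynomial (Fin m) κ) :
      MvPowerSeries (Fin m) κ) ≠ 0 := by
  rw [← MvPowerSeries.coeff_zero_eq_constantCoeff_apply, MvPolynomial.coeff_coe]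
  exact PN_coeff_zero_ne p Q hQ0 N

/-- The generators `x^β / Q_N`. -/
def hgen (N : ℕ) (β : Fin m →₀ ℕ) : MvPowerSeries (Fin m) κ :=
  ((MvPolynomial.monomial β (1 : κ) : MvPolynomial (Fin m) κ) : MvPowerSeries (Fin m) κ)
    * ((PN p Q N : MvPolynomial (Fin m) κ) : MvPowerSeries (Fin m) κ)⁻¹

include hQ0 in
lemma PN_mul_inv (N : ℕ) :
    ((PN p Q N : MvPolynomial (Fin m) κ) : MvPowerSeries (Fin m) κ)
      * ((PN p Q N : MvPolynomial (Fin m) κ) : MvPowerSeries (Fin m) κ)⁻¹ = 1 :=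
  MvPowerSeries.mul_inv_cancel _ (PN_constantCoeff_ne p Q hQ0 N)

/-- The numerators appearing in the Cartier recursion. -/
def Wpoly (N : ℕ) (β : Fin m →₀ ℕ) : MvPolynomial (Fin m) κ :=
  MvPolynomial.monomial β (1 : κ) * (PN p Q N) ^ (p - 1)

include hQ0 in
lemma mul_lamMv_hgen (N : ℕ) (β : Fin m →₀ ℕ) (j : ℕ) (hj : j < p) :
    ((PN p Q (N + 1) : MvPolynomial (Fin m) κ) : MvPowerSeries (Fin m) κ)
        * lamMv p j (hgen p Q N β)
      = lamMv p j ((Wpoly p Q N β : MvPolynomial (Fin m) κ) : MvPowerSeries (Fin m) κ) := by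
  have hp : 0 < p := lt_of_le_of_lt (Nat.zero_le j) hj
  rw [← lamMv_expand_mul p j hj (PN p Q (N + 1)) (hgen p Q N β)]
  refine congrArg (lamMv p j) ?_
  rw [← PN_succ p Q N, expand_map_frobenius p (PN p Q N), MvPolynomial.coe_pow, hgen, Wpoly,
    MvPolynomial.coe_mul, MvPolynomial.coe_pow]
  set A : MvPowerSeries (Fin m) κ := ((PN p Q N : MvPolynomial (Fin m) κ) :
    MvPowerSeries (Fin m) κ) with hA
  set Mo : MvPowerSeries (Fin m) κ :=
    ((MvPolynomial.monomial β (1 : κ) : MvPolynomial (Fin m) κ) :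
      MvPowerSeries (Fin m) κ) with hMo
  have hppred : A ^ p = A ^ (p - 1) * A := by
    conv_lhs => rw [← Nat.succ_pred_eq_of_pos hp]
    rw [pow_succ, Nat.pred_eq_sub_one]
  rw [hppred]
  calc A ^ (p - 1) * A * (Mo * A⁻¹)
      = Mo * A ^ (p - 1) * (A * A⁻¹) := by ring
    _ = Mo * A ^ (p - 1) := by
        rw [hA, PN_mul_inv p Q hQ0 N, mul_one]

lemma degreeOf_PN_le (N : ℕ) (i : Fin m) :
    (PN p Q N).degreeOf i ≤ Q.degreeOf i := by
  rw [MvPolynomial.degreeOf_eq_sup, MvPolynomial.degreeOf_eq_sup]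
  exact Finset.sup_mono (MvPolynomial.support_map_subset _ _)

lemma degreeOf_Wpoly_le (D : ℕ) (hD : Q.totalDegree ≤ D) (N : ℕ) (β : Fin m →₀ ℕ)
    (hβ : β ∈ Finset.Iic (cst m D)) (j : ℕ) (hj : j < p) (i : Fin m) :
    (Wpoly p Q N β).degreeOf i ≤ p * D + j := by
  have hp : 0 < p := lt_of_le_of_lt (Nat.zero_le j) hj
  have h1 : (MvPolynomial.monomial β (1 : κ)).degreeOf i ≤ β i := by
    rw [MvPolynomial.degreeOf_eq_sup]
    refine Finset.sup_le fun γ hγ => ?_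
    classical
    rw [MvPolynomial.support_monomial, if_neg one_ne_zero] at hγ
    rw [Finset.mem_singleton.1 hγ]
  have h2 : (PN p Q N).degreeOf i ≤ D :=
    le_trans (degreeOf_PN_le p Q N i)
      (le_trans (MvPolynomial.degreeOf_le_totalDegree Q i) hD)
  have h3 : ((PN p Q N) ^ (p - 1)).degreeOf i ≤ (p - 1) * D :=
    le_trans (MvPolynomial.degreeOf_pow_le i _ _) (Nat.mul_le_mul_left _ h2)
  have h4 : β i ≤ D := by
    have := (Finset.mem_Iic.1 hβ) i
    simpa [cst_apply] using this
  have h5 := MvPolynomial.degreeOf_mul_le i (MvPolynomial.monomial β (1 : κ))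
    ((PN p Q N) ^ (p - 1))
  have h6 : (p - 1) * D = p * D - D := Nat.sub_one_mul p D
  have h7 : D ≤ p * D := Nat.le_mul_of_pos_left D hp
  rw [Wpoly]
  omega

include hQ0 in
lemma lamMv_hgen (D : ℕ) (hD : Q.totalDegree ≤ D) (N : ℕ) (β : Fin m →₀ ℕ)
    (hβ : β ∈ Finset.Iic (cst m D)) (j : ℕ) (hj : j < p) :
    lamMv p j (hgen p Q N β)
      = ∑ γ ∈ Finset.Iic (cst m D),
          (MvPolynomial.coeff (p • γ + cst m j) (Wpoly p Q N β)) • hgen p Q (N + 1) γ := by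
  have hstep := mul_lamMv_hgen p Q hQ0 N β j hj
  have hval := lamMv_coe_poly p j D hj (Wpoly p Q N β)
    (degreeOf_Wpoly_le p Q D hD N β hβ j hj)
  have hx : lamMv p j (hgen p Q N β)
      = ((PN p Q (N + 1) : MvPolynomial (Fin m) κ) : MvPowerSeries (Fin m) κ)⁻¹
        * (((PN p Q (N + 1) : MvPolynomial (Fin m) κ) : MvPowerSeries (Fin m) κ)
          * lamMv p j (hgen p Q N β)) := by
    rw [← mul_assoc, mul_comm
      (((PN p Q (N + 1) : MvPolynomial (Fin m) κ) : MvPowerSeries (Fin m) κ))⁻¹,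
      PN_mul_inv p Q hQ0 (N + 1), one_mul]
  rw [hx, hstep, hval, Finset.mul_sum]
  refine Finset.sum_congr rfl fun γ _ => ?_
  rw [hgen, mul_smul_comm]
  congr 1
  ring

end QSetup

section Gsection

variable {m : ℕ} (p : ℕ) [Fact p.Prime] [CharP κ p] (Q : MvPolynomial (Fin m) κ)
  (hQ0 : MvPolynomial.coeff 0 Q ≠ 0)

/-- The one-variable generator series. -/
def Ggen (N : ℕ) (β : Fin m →₀ ℕ) : PowerSeries κ :=
  Dlev p N (hgen p Q N β)

include hQ0 in
lemma Ggen_step (D : ℕ) (hD : Q.totalDegree ≤ D) (N : ℕ) (β : Fin m →₀ ℕ)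
    (hβ : β ∈ Finset.Iic (cst m D)) :
    Ggen p Q N β = ∑ j ∈ Finset.range p, ∑ γ ∈ Finset.Iic (cst m D),
      ((Polynomial.C (MvPolynomial.coeff (p • γ + cst m j) (Wpoly p Q N β)) *
        Polynomial.X ^ (j * p ^ N) : Polynomial κ) : PowerSeries κ) * Ggen p Q (N + 1) γ := by
  have hp : 0 < p := (Fact.out : p.Prime).pos
  rw [Ggen, Dlev_step p hp N]
  refine Finset.sum_congr rfl fun j hj => ?_
  rw [lamMv_hgen p Q hQ0 D hD N β hβ j (Finset.mem_range.1 hj), Dlev_sum, Finset.sum_mul]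
  refine Finset.sum_congr rfl fun γ _ => ?_
  rw [Dlev_smul]
  rw [Polynomial.coe_mul, Polynomial.coe_pow, Polynomial.coe_C, Polynomial.coe_X,
    PowerSeries.smul_eq_C_mul]
  show PowerSeries.C (R := κ) _ * Ggen p Q (N + 1) γ * _ = _
  ring

/-- Coefficients of `p`-th powers of one-variable power series in characteristic `p`. -/
lemma coeff_pow_char (g : PowerSeries κ) (k : ℕ) :
    PowerSeries.coeff (R := κ) k (g ^ p)
      = if p ∣ k then (PowerSeries.coeff (R := κ) (k / p) g) ^ p else 0 := by
  have hp : 0 < p := (Fact.out : p.Prime).pos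
  haveI : CharP (PowerSeries κ) p := charP_of_injective_ringHom PowerSeries.C_injective p
  set T := PowerSeries.trunc (k + 1) g with hT
  have hdvd : (PowerSeries.X : PowerSeries κ) ^ (k + 1) ∣ (g - ↑T) := by
    rw [PowerSeries.X_pow_dvd_iff]
    intro n hn
    rw [map_sub, Polynomial.coeff_coe, PowerSeries.coeff_trunc, if_pos hn, sub_self]
  have hsplit : g ^ p = (↑T : PowerSeries κ) ^ p + (g - ↑T) ^ p := by
    conv_lhs => rw [show g = ↑T + (g - ↑T) by ring]
    rw [add_pow_char]
  obtain ⟨w, hw⟩ := hdvd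
  rw [hsplit, map_add, hw, mul_pow, ← pow_mul]
  have hx : (PowerSeries.X : PowerSeries κ) ^ (k + 1) ∣
      (PowerSeries.X : PowerSeries κ) ^ ((k + 1) * p) * w ^ p :=
    dvd_mul_of_dvd_left (pow_dvd_pow _ (Nat.le_mul_of_pos_right _ hp)) _
  rw [PowerSeries.X_pow_dvd_iff.1 hx k (Nat.lt_succ_self k), add_zero]
  rw [← Polynomial.coe_pow, Polynomial.coeff_coe, ← Polynomial.map_frobenius_expand,
    Polynomial.coeff_map, Polynomial.coeff_expand hp]
  split
  · rw [frobenius_def]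
    congr 1
    rw [hT, PowerSeries.coeff_trunc, if_pos (Nat.lt_succ_of_le (Nat.div_le_self k p))]
  · rw [map_zero]

include hQ0 in
lemma map_frobenius_hgen (N : ℕ) (β : Fin m →₀ ℕ) :
    MvPowerSeries.map (σ := Fin m) (frobenius κ p) (hgen p Q N β) = hgen p Q (N + 1) β := by
  rw [hgen, map_mul, hgen]
  have hmapPN : MvPowerSeries.map (σ := Fin m) (frobenius κ p)
      ((PN p Q N : MvPolynomial (Fin m) κ) : MvPowerSeries (Fin m) κ)
      = ((PN p Q (N + 1) : MvPolynomial (Fin m) κ) : MvPowerSeries (Fin m) κ) := by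
    ext s
    rw [MvPowerSeries.coeff_map, MvPolynomial.coeff_coe, MvPolynomial.coeff_coe,
      ← PN_succ p Q N, MvPolynomial.coeff_map]
  congr 1
  · ext s
    rw [MvPowerSeries.coeff_map, MvPolynomial.coeff_coe, MvPolynomial.coeff_monomial]
    split <;> simp [frobenius_def, (Fact.out : p.Prime).ne_zero]
  · have h1 : ((PN p Q (N + 1) : MvPolynomial (Fin m) κ) : MvPowerSeries (Fin m) κ)
        * MvPowerSeries.map (σ := Fin m) (frobenius κ p)
          (((PN p Q N : MvPolynomial (Fin m) κ) : MvPowerSeries (Fin m) κ))⁻¹ = 1 := by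
      rw [← hmapPN, ← map_mul, PN_mul_inv p Q hQ0 N, map_one]
    calc MvPowerSeries.map (σ := Fin m) (frobenius κ p)
          (((PN p Q N : MvPolynomial (Fin m) κ) : MvPowerSeries (Fin m) κ))⁻¹
        = (((PN p Q (N + 1) : MvPolynomial (Fin m) κ) : MvPowerSeries (Fin m) κ))⁻¹
          * (((PN p Q (N + 1) : MvPolynomial (Fin m) κ) : MvPowerSeries (Fin m) κ)
            * MvPowerSeries.map (σ := Fin m) (frobenius κ p)
              (((PN p Q N : MvPolynomial (Fin m) κ) : MvPowerSeries (Fin m) κ))⁻¹) := by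
          rw [← mul_assoc,
            MvPowerSeries.inv_mul_cancel _ (PN_constantCoeff_ne p Q hQ0 (N + 1)), one_mul]
      _ = (((PN p Q (N + 1) : MvPolynomial (Fin m) κ) : MvPowerSeries (Fin m) κ))⁻¹ := by
          rw [h1, mul_one]

include hQ0 in
lemma Ggen_pow (N : ℕ) (β : Fin m →₀ ℕ) :
    Ggen p Q N β ^ p = Ggen p Q (N + 1) β := by
  have hp : 0 < p := (Fact.out : p.Prime).pos
  ext k
  rw [coeff_pow_char p, Ggen, Ggen, coeff_Dlev, coeff_Dlev]
  by_cases h1 : p ∣ k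
  · rw [if_pos h1]
    by_cases h2 : p ^ N ∣ k / p
    · have h3 : p ^ (N + 1) ∣ k := by
        obtain ⟨a, ha⟩ := h1
        obtain ⟨b, hb⟩ := h2
        have : a = p ^ N * b := by
          rw [← hb, ha, Nat.mul_div_cancel_left a hp]
        exact ⟨b, by rw [ha, this, pow_succ]; ring⟩
      have h4 : k / p / p ^ N = k / p ^ (N + 1) := by
        rw [Nat.div_div_eq_div_mul, ← pow_succ']
      rw [if_pos h2, if_pos h3, h4, ← map_frobenius_hgen p Q hQ0 N β,
        MvPowerSeries.coeff_map, frobenius_def]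
    · have h3 : ¬ p ^ (N + 1) ∣ k := by
        intro hcon
        obtain ⟨c, hc⟩ := hcon
        apply h2
        refine ⟨c, ?_⟩
        rw [hc, pow_succ']
        rw [mul_assoc, Nat.mul_div_cancel_left _ hp]
      rw [if_neg h2, if_neg h3, zero_pow hp.ne']
  · have h3 : ¬ p ^ (N + 1) ∣ k := fun h =>
      h1 (dvd_trans (dvd_pow_self p (Nat.succ_ne_zero N)) h)
    rw [if_neg h1, if_neg h3]

include hQ0 in
lemma Ggen_pow_pow (N s : ℕ) (β : Fin m →₀ ℕ) :
    Ggen p Q N β ^ (p ^ s) = Ggen p Q (N + s) β := by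
  induction s with
  | zero => rw [pow_zero, pow_one, Nat.add_zero]
  | succ s ih =>
      rw [pow_succ, pow_mul, ih, Ggen_pow p Q hQ0]
      congr 1

end Gsection


section MainInduction

variable {m : ℕ} (p : ℕ) [Fact p.Prime] [CharP κ p] (Q : MvPolynomial (Fin m) κ)
  (hQ0 : MvPolynomial.coeff 0 Q ≠ 0)

include hQ0 in
lemma main_expand (D : ℕ) (hD : Q.totalDegree ≤ D) (P : MvPolynomial (Fin m) κ)
    (hP : P.totalDegree ≤ D) (f : MvPowerSeries (Fin m) κ)
    (hf : (Q : MvPowerSeries (Fin m) κ) * f = (P : MvPowerSeries (Fin m) κ)) (N : ℕ) :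
    ∃ c : (Fin m →₀ ℕ) → Polynomial κ,
      Dlev p 0 f = ∑ β ∈ Finset.Iic (cst m D),
        ((c β : Polynomial κ) : PowerSeries κ) * Ggen p Q N β := by
  have hcoe : ∀ F : MvPolynomial (Fin m) κ,
      (F : MvPowerSeries (Fin m) κ) = MvPolynomial.coeToMvPowerSeries.ringHom F :=
    fun F => rfl
  induction N with
  | zero =>
    refine ⟨fun β => Polynomial.C (MvPolynomial.coeff β P), ?_⟩
    have hPN0 : PN p Q 0 = Q := by rw [PN, iterateFrobenius_zero, MvPolynomial.map_id]
    have hQc : MvPowerSeries.constantCoeff (σ := Fin m) (R := κ) (Q : MvPowerSeries (Fin m) κ) ≠ 0 := by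
      have h := PN_constantCoeff_ne p Q hQ0 0
      rwa [hPN0] at h
    have hPsum : (P : MvPowerSeries (Fin m) κ)
        = ∑ β ∈ Finset.Iic (cst m D), MvPolynomial.coeff β P •
            ((MvPolynomial.monomial β (1 : κ) : MvPolynomial (Fin m) κ) :
              MvPowerSeries (Fin m) κ) := by
      have hsupp : P.support ⊆ Finset.Iic (cst m D) := by
        intro α hα
        rw [Finset.mem_Iic, Finsupp.le_def]
        intro i
        calc α i ≤ P.degreeOf i := by
              rw [MvPolynomial.degreeOf_eq_sup]
              exact Finset.le_sup (f := fun δ : Fin m →₀ ℕ => δ i) hα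
          _ ≤ D := le_trans (MvPolynomial.degreeOf_le_totalDegree P i) hP
      conv_lhs => rw [P.as_sum]
      rw [← Finset.sum_subset hsupp (fun β _ hβ => by
        rw [MvPolynomial.notMem_support_iff.1 hβ, zero_smul])]
      rw [hcoe, map_sum]
      refine Finset.sum_congr rfl fun β _ => ?_
      rw [← hcoe, show (MvPolynomial.monomial β (MvPolynomial.coeff β P))
          = MvPolynomial.C (MvPolynomial.coeff β P) * MvPolynomial.monomial β (1 : κ) by
            rw [MvPolynomial.C_mul_monomial, mul_one],
        MvPolynomial.coe_mul, MvPolynomial.coe_C, MvPowerSeries.smul_eq_C_mul]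
    have hfe : f = ∑ β ∈ Finset.Iic (cst m D),
        MvPolynomial.coeff β P • hgen p Q 0 β := by
      have hf2 : f = ((Q : MvPowerSeries (Fin m) κ))⁻¹ * ↑P := by
        calc f = (((Q : MvPowerSeries (Fin m) κ))⁻¹ * ↑Q) * f := by
              rw [MvPowerSeries.inv_mul_cancel _ hQc, one_mul]
          _ = ((Q : MvPowerSeries (Fin m) κ))⁻¹ * (↑Q * f) := by rw [mul_assoc]
          _ = ((Q : MvPowerSeries (Fin m) κ))⁻¹ * ↑P := by rw [hf]
      rw [hf2, hPsum, Finset.mul_sum]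
      refine Finset.sum_congr rfl fun β _ => ?_
      rw [hgen, hPN0, mul_smul_comm]
      exact congrArg _ (mul_comm _ _)
    rw [hfe, Dlev_sum]
    refine Finset.sum_congr rfl fun β _ => ?_
    rw [Dlev_smul, PowerSeries.smul_eq_C_mul, Polynomial.coe_C, Ggen]
  | succ N ih =>
    obtain ⟨c, hc⟩ := ih
    refine ⟨fun γ => ∑ β ∈ Finset.Iic (cst m D), ∑ j ∈ Finset.range p,
      c β * (Polynomial.C (MvPolynomial.coeff (p • γ + cst m j) (Wpoly p Q N β))
        * Polynomial.X ^ (j * p ^ N)), ?_⟩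
    rw [hc]
    have hstep : ∀ β ∈ Finset.Iic (cst m D),
        ((c β : Polynomial κ) : PowerSeries κ) * Ggen p Q N β
          = ∑ γ ∈ Finset.Iic (cst m D), ∑ j ∈ Finset.range p,
              ((c β * (Polynomial.C (MvPolynomial.coeff (p • γ + cst m j) (Wpoly p Q N β))
                * Polynomial.X ^ (j * p ^ N)) : Polynomial κ) : PowerSeries κ)
                * Ggen p Q (N + 1) γ := by
      intro β hβ
      rw [Ggen_step p Q hQ0 D hD N β hβ, Finset.mul_sum, Finset.sum_comm]
      refine Finset.sum_congr rfl fun γ _ => ?_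
      rw [Finset.mul_sum]
      refine Finset.sum_congr rfl fun j _ => ?_
      simp only [Polynomial.coe_mul]
      ring
    rw [Finset.sum_congr rfl hstep, Finset.sum_comm]
    refine Finset.sum_congr rfl fun γ _ => ?_
    have hcoe1 : ∀ q : Polynomial κ, (q : PowerSeries κ)
        = Polynomial.coeToPowerSeries.ringHom q := fun q => rfl
    simp only [hcoe1, map_sum, Finset.sum_mul]

end MainInduction


end

end FurstAux

open FurstAux

/-- **Furstenberg's theorem** (Theorem 1 of the paper).
Over a field `κ` of positive characteristic `p`, the diagonal of an
`m`-variable formal power series representing a rational function is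
algebraic over `κ(t)`.  The diagonal of `f = ∑ a_{n₁,…,n_m} x₁^{n₁}⋯x_m^{n_m}`
is `∑ a_{n,…,n} tⁿ`, and algebraicity is witnessed by a nonzero polynomial
`G(t,Y)` (encoded as an element of `(κ[t])[Y]`) vanishing at the diagonal. -/
theorem furstenberg_diagonal_algebraic (κ : Type*) [Field κ]
    (p : ℕ) (hp : 0 < p) [CharP κ p]
    (m : ℕ) (f : MvPowerSeries (Fin m) κ)
    (P Q : MvPolynomial (Fin m) κ) (hQ : Q ≠ 0)
    (hQ0 : MvPolynomial.eval (0 : Fin m → κ) Q ≠ 0)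
    (hrat : (Q : MvPowerSeries (Fin m) κ) * f = (P : MvPowerSeries (Fin m) κ)) :
    ∃ G : Polynomial (Polynomial κ), G ≠ 0 ∧
      Polynomial.eval₂ Polynomial.coeToPowerSeries.ringHom
        (PowerSeries.mk fun n =>
          MvPowerSeries.coeff (R := κ) (Finsupp.equivFunOnFinite.symm fun _ => n) f)
        G = 0 := by
  classical
  haveI : NeZero p := ⟨hp.ne'⟩
  haveI hfact : Fact p.Prime := CharP.char_is_prime_of_pos κ p
  haveI : CharP (PowerSeries κ) p := charP_of_injective_ringHom PowerSeries.C_injective p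
  have hQc : MvPolynomial.coeff 0 Q ≠ 0 := by
    rwa [← MvPolynomial.constantCoeff_eq, ← MvPolynomial.eval_zero]
  set D := max P.totalDegree Q.totalDegree with hD
  set L := Finset.Iic (cst m D) with hL
  set r := L.card with hr
  set u : PowerSeries κ := PowerSeries.mk fun n =>
    MvPowerSeries.coeff (R := κ) (Finsupp.equivFunOnFinite.symm fun _ => n) f with hu
  have hu' : u = Dlev p 0 f := by
    ext k
    rw [hu, PowerSeries.coeff_mk, coeff_Dlev, pow_zero, if_pos (one_dvd k), Nat.div_one]
    rfl
  have hpow : ∀ s : ℕ, s ≤ r → ∃ e : (Fin m →₀ ℕ) → Polynomial κ,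
      u ^ (p ^ s) = ∑ β ∈ L, ((e β : Polynomial κ) : PowerSeries κ) * Ggen p Q r β := by
    intro s hs
    obtain ⟨c, hc⟩ := main_expand p Q hQc D (le_max_right _ _) P (le_max_left _ _)
      f hrat (r - s)
    refine ⟨fun β => c β ^ p ^ s, ?_⟩
    rw [hu', hc, sum_pow_char_pow]
    refine Finset.sum_congr rfl fun β _ => ?_
    rw [mul_pow, Ggen_pow_pow p Q hQc, Nat.sub_add_cancel hs, ← Polynomial.coe_pow]
  choose e he using fun s : Fin (r + 1) => hpow s.1 (Nat.lt_succ_iff.1 s.2)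
  set F := FractionRing (Polynomial κ) with hF
  set v : Fin (r + 1) → (L → F) := fun s β => algebraMap (Polynomial κ) F (e s β.1) with hv
  have hnli : ¬ LinearIndependent F v := by
    intro hli
    have h1 := hli.fintype_card_le_finrank
    rw [Module.finrank_fintype_fun_eq_card, Fintype.card_fin, Fintype.card_coe] at h1
    omega
  obtain ⟨g, hgsum, i0, hgi0⟩ := Fintype.not_linearIndependent_iff.1 hnli
  obtain ⟨b, hb⟩ := IsLocalization.exist_integer_multiples
    (nonZeroDivisors (Polynomial κ)) Finset.univ g
  choose b' hb' using fun s : Fin (r + 1) => hb s (Finset.mem_univ s)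
  have hinj := IsFractionRing.injective (Polynomial κ) F
  have hbne : (b : Polynomial κ) ≠ 0 := nonZeroDivisors.ne_zero b.2
  have hbF : algebraMap (Polynomial κ) F (b : Polynomial κ) ≠ 0 := fun hh =>
    hbne (hinj (by rw [hh, map_zero]))
  have hb4 : b' i0 ≠ 0 := by
    intro h0
    have h5 := hb' i0
    rw [h0, map_zero, Algebra.smul_def] at h5
    rcases mul_eq_zero.1 h5.symm with h | h
    · exact hbF h
    · exact hgi0 h
  have hrel : ∀ β ∈ L, ∑ s : Fin (r + 1), b' s * e s β = 0 := by
    intro β hβ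
    apply hinj
    rw [map_sum, map_zero]
    have h2 := congrFun hgsum ⟨β, hβ⟩
    rw [Finset.sum_apply] at h2
    simp only [Pi.smul_apply, smul_eq_mul, Pi.zero_apply, hv] at h2
    calc ∑ s : Fin (r + 1), algebraMap (Polynomial κ) F (b' s * e s β)
        = algebraMap (Polynomial κ) F (b : Polynomial κ)
          * ∑ s : Fin (r + 1), g s * algebraMap (Polynomial κ) F (e s β) := by
          rw [Finset.mul_sum]
          refine Finset.sum_congr rfl fun s _ => ?_
          rw [map_mul, hb' s, Algebra.smul_def]
          ring
      _ = 0 := by rw [h2, mul_zero]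
  refine ⟨∑ s : Fin (r + 1), Polynomial.C (b' s) * Polynomial.X ^ (p ^ (s : ℕ)), ?_, ?_⟩
  · intro hzero
    have hcoeff := congrArg (fun q => Polynomial.coeff q (p ^ (i0 : ℕ))) hzero
    simp only [Polynomial.finset_sum_coeff, Polynomial.coeff_C_mul, Polynomial.coeff_X_pow,
      Polynomial.coeff_zero] at hcoeff
    rw [Finset.sum_eq_single i0 (fun s _ hs => ?_) (fun hmem => ?_)] at hcoeff
    · rw [if_pos rfl, mul_one] at hcoeff
      exact hb4 hcoeff
    · rw [if_neg (fun hcon => hs ?_), mul_zero]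
      exact Fin.ext (Nat.pow_right_injective hfact.out.two_le hcon.symm)
    · exact absurd (Finset.mem_univ i0) hmem
  · rw [Polynomial.eval₂_finset_sum]
    have hev : ∀ s : Fin (r + 1),
        Polynomial.eval₂ Polynomial.coeToPowerSeries.ringHom u
            (Polynomial.C (b' s) * Polynomial.X ^ (p ^ (s : ℕ)))
          = ((b' s : Polynomial κ) : PowerSeries κ) * u ^ (p ^ (s : ℕ)) := by
      intro s
      rw [Polynomial.eval₂_mul, Polynomial.eval₂_C, Polynomial.eval₂_X_pow]
      rfl
    rw [Finset.sum_congr rfl fun s _ => by rw [hev s, he s]]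
    have hcoe1 : ∀ q : Polynomial κ, (q : PowerSeries κ)
        = Polynomial.coeToPowerSeries.ringHom q := fun q => rfl
    calc ∑ s : Fin (r + 1), ((b' s : Polynomial κ) : PowerSeries κ)
          * ∑ β ∈ L, ((e s β : Polynomial κ) : PowerSeries κ) * Ggen p Q r β
        = ∑ β ∈ L, ((∑ s : Fin (r + 1), b' s * e s β : Polynomial κ) : PowerSeries κ)
            * Ggen p Q r β := by
          simp only [Finset.mul_sum]
          rw [Finset.sum_comm]
          refine Finset.sum_congr rfl fun β _ => ?_
          simp only [hcoe1, map_sum, map_mul, Finset.sum_mul]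
          refine Finset.sum_congr rfl fun s _ => ?_
          ring
      _ = 0 := by
          refine Finset.sum_eq_zero fun β hβ => ?_
          rw [hrel β hβ]
          simp
end

section
/- Let 𝔽_q be a finite field of characteristic p and let P(X,Y), Q(X,Y) ∈ 𝔽_q[X,Y] be polynomials where Q has nonzero constant term Q(0,0) ≠ 0 (so Q is invertible in 𝔽_q[[X,Y]]). Let u : ℕ² → 𝔽_q be the coefficient double sequence of the formal power series P·Q^{-1} ∈ 𝔽_q[[X,Y]], i.e., u(m,n) = [X^m Y^n](P·Q^{-1}). Then the p-kernel of u, namely the set of double sequences { (m,n) ↦ u(m·p^k + r, n·p^k + s) : k ∈ ℕ, 0 ≤ r, s < p^k }, is finite. -/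
open MvPowerSeries

namespace KernelAux

variable {F : Type*} [Field F]

/-- The Cartier-type operator on two-variable power series. -/
noncomputable def Lam (p : ℕ) (c : Fin 2 →₀ ℕ) (f : MvPowerSeries (Fin 2) F) :
    MvPowerSeries (Fin 2) F := fun e => f (p • e + c)

lemma coeff_Lam (p : ℕ) (c d : Fin 2 →₀ ℕ) (f : MvPowerSeries (Fin 2) F) :
    MvPowerSeries.coeff (R := F) d (Lam p c f) = MvPowerSeries.coeff (R := F) (p • d + c) f := rfl

/-- componentwise division by `p`. -/
noncomputable def pdiv (p : ℕ) (e : Fin 2 →₀ ℕ) : Fin 2 →₀ ℕ :=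
  e.mapRange (· / p) (Nat.zero_div p)

lemma pdiv_apply (p : ℕ) (e : Fin 2 →₀ ℕ) (i : Fin 2) : pdiv p e i = e i / p :=
  Finsupp.mapRange_apply

lemma pdiv_smul {p : ℕ} (hp : p ≠ 0) (d : Fin 2 →₀ ℕ) : pdiv p (p • d) = d := by
  ext i
  rw [pdiv_apply, Finsupp.smul_apply, smul_eq_mul,
    Nat.mul_div_cancel_left _ (Nat.pos_of_ne_zero hp)]

lemma pdiv_le (p : ℕ) (e : Fin 2 →₀ ℕ) : pdiv p e ≤ e := by
  rw [Finsupp.le_def]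
  intro i
  rw [pdiv_apply]
  exact Nat.div_le_self _ _

lemma coeff_pow_eq_zero {f : MvPowerSeries (Fin 2) F} {e : Fin 2 →₀ ℕ}
    (h : ∀ a ≤ e, MvPowerSeries.coeff (R := F) a f = 0) {n : ℕ} (hn : n ≠ 0) :
    MvPowerSeries.coeff (R := F) e (f ^ n) = 0 := by
  classical
  obtain ⟨m, rfl⟩ := Nat.exists_eq_succ_of_ne_zero hn
  rw [pow_succ, mul_comm, MvPowerSeries.coeff_mul]
  apply Finset.sum_eq_zero
  rintro ⟨a, b⟩ hab
  rw [Finset.HasAntidiagonal.mem_antidiagonal] at hab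
  have ha : a ≤ e := hab ▸ le_self_add
  rw [h a ha, zero_mul]

noncomputable def Psi (p : ℕ) (f : MvPowerSeries (Fin 2) F) : MvPowerSeries (Fin 2) F := by
  classical
  exact fun e => if p • pdiv p e = e then (f (pdiv p e)) ^ p else 0

lemma coeff_Psi [DecidableEq (Fin 2 →₀ ℕ)] (p : ℕ) (f : MvPowerSeries (Fin 2) F)
    (e : Fin 2 →₀ ℕ) :
    MvPowerSeries.coeff (R := F) e (Psi p f) =
      if p • pdiv p e = e then (MvPowerSeries.coeff (R := F) (pdiv p e) f) ^ p else 0 := by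
  simp only [Psi, MvPowerSeries.coeff_apply]
  congr

instance charP_mvPowerSeries (p : ℕ) [CharP F p] : CharP (MvPowerSeries (Fin 2) F) p := by
  have hinj : Function.Injective ((MvPowerSeries.C (σ := Fin 2) (R := F))) := fun a b h => by
    simpa using congrArg (MvPowerSeries.constantCoeff (σ := Fin 2) (R := F)) h
  exact charP_of_injective_ringHom hinj p

lemma poly_pow_char (p : ℕ) [Fact p.Prime] [CharP F p] (t : MvPolynomial (Fin 2) F) :
    ((t : MvPowerSeries (Fin 2) F)) ^ p = Psi p (t : MvPowerSeries (Fin 2) F) := by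
  classical
  have hp0 : p ≠ 0 := (Fact.out : p.Prime).ne_zero
  induction t using MvPolynomial.induction_on' with
  | monomial d a =>
    rw [← MvPolynomial.coe_pow, MvPolynomial.monomial_pow]
    ext e
    rw [MvPolynomial.coeff_coe, MvPolynomial.coeff_monomial, coeff_Psi]
    by_cases h1 : p • d = e
    · rw [if_pos h1, ← h1, pdiv_smul hp0, if_pos rfl, MvPolynomial.coeff_coe,
        MvPolynomial.coeff_monomial, if_pos rfl]
    · rw [if_neg h1]
      by_cases h2 : p • pdiv p e = e
      · rw [if_pos h2, MvPolynomial.coeff_coe, MvPolynomial.coeff_monomial, if_neg, zero_pow hp0]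
        intro hd
        exact h1 (hd ▸ h2)
      · rw [if_neg h2]
  | add f g hf hg =>
    rw [MvPolynomial.coe_add, add_pow_char, hf, hg]
    ext e
    rw [map_add, coeff_Psi, coeff_Psi, coeff_Psi, map_add]
    split_ifs
    · exact (add_pow_char _ _ _).symm
    · rw [add_zero]

lemma pow_char_coeff (p : ℕ) [Fact p.Prime] [CharP F p] (g : MvPowerSeries (Fin 2) F)
    (e : Fin 2 →₀ ℕ) :
    MvPowerSeries.coeff (R := F) e (g ^ p) =
      if p • pdiv p e = e then (MvPowerSeries.coeff (R := F) (pdiv p e) g) ^ p else 0 := by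
  classical
  have hp0 : p ≠ 0 := (Fact.out : p.Prime).ne_zero
  set n : Fin 2 →₀ ℕ := e + (Finsupp.single 0 1 + Finsupp.single 1 1) with hn
  have hen : e < n := by
    refine lt_of_le_of_ne le_self_add ?_
    intro h
    have h0 := congrArg (fun t : Fin 2 →₀ ℕ => t 0) h
    simp [hn] at h0
  have hlt : ∀ a : Fin 2 →₀ ℕ, a ≤ e → a < n := fun a ha => lt_of_le_of_lt ha hen
  set t := MvPowerSeries.trunc F n g with ht
  have hco : ∀ a ≤ e, MvPowerSeries.coeff (R := F) a (g - ↑t) = 0 := by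
    intro a ha
    rw [map_sub, MvPolynomial.coeff_coe, ht, MvPowerSeries.coeff_trunc, if_pos (hlt a ha),
      sub_self]
  have hg : g = ↑t + (g - ↑t) := by ring
  have h2 : MvPowerSeries.coeff (R := F) (pdiv p e) (↑t : MvPowerSeries (Fin 2) F) =
      MvPowerSeries.coeff (R := F) (pdiv p e) g := by
    rw [MvPolynomial.coeff_coe, ht, MvPowerSeries.coeff_trunc, if_pos (hlt _ (pdiv_le p e))]
  conv_lhs => rw [hg, add_pow_char, map_add, coeff_pow_eq_zero hco hp0, add_zero,
    poly_pow_char, coeff_Psi]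
  split_ifs with h
  · rw [h2]
  · rfl

lemma Lam_mul_pow (p : ℕ) [Fact p.Prime] [CharP F p] {c : Fin 2 →₀ ℕ} (hc : ∀ i, c i < p)
    (f g : MvPowerSeries (Fin 2) F) :
    Lam p c (f * g ^ p) =
      Lam p c f * MvPowerSeries.map (σ := Fin 2) (frobenius F p) g := by
  classical
  have hp0 : p ≠ 0 := (Fact.out : p.Prime).ne_zero
  ext d
  rw [coeff_Lam, MvPowerSeries.coeff_mul, MvPowerSeries.coeff_mul]
  have key : ∀ a b : Fin 2 →₀ ℕ, a + b = p • d + c → p • pdiv p b = b →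
      pdiv p b ≤ d ∧ a = p • (d - pdiv p b) + c := by
    intro a b hab hb
    have hcomp : ∀ i : Fin 2, a i + b i = p * d i + c i := by
      intro i
      have := congrArg (fun t : Fin 2 →₀ ℕ => t i) hab
      simpa [Finsupp.add_apply, Finsupp.smul_apply, smul_eq_mul] using this
    have hbcomp : ∀ i : Fin 2, p * (b i / p) = b i := by
      intro i
      have := congrArg (fun t : Fin 2 →₀ ℕ => t i) hb
      simpa [Finsupp.smul_apply, smul_eq_mul, pdiv_apply] using this
    constructor
    · rw [Finsupp.le_def]
      intro i
      rw [pdiv_apply]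
      have h1 := hcomp i
      have h2 := hbcomp i
      have h3 := hc i
      nlinarith [Nat.zero_le (a i)]
    · ext i
      have h1 := hcomp i
      have h2 := hbcomp i
      have h3 := hc i
      have hle : b i / p ≤ d i := by nlinarith [Nat.zero_le (a i)]
      simp only [Finsupp.add_apply, Finsupp.smul_apply, smul_eq_mul, Finsupp.tsub_apply,
        pdiv_apply]
      have h4 : p * (d i - b i / p) + p * (b i / p) = p * d i := by
        rw [← Nat.mul_add]
        congr 1
        omega
      omega
  refine Finset.sum_bij_ne_zero (fun x _ _ => (d - pdiv p x.2, pdiv p x.2)) ?_ ?_ ?_ ?_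
  · rintro ⟨a, b⟩ h1 h2
    rw [Finset.HasAntidiagonal.mem_antidiagonal] at h1 ⊢
    have hb : p • pdiv p b = b := by
      by_contra hcon
      rw [pow_char_coeff, if_neg hcon, mul_zero] at h2
      exact h2 rfl
    obtain ⟨hle, -⟩ := key a b h1 hb
    exact tsub_add_cancel_of_le hle
  · rintro ⟨a₁, b₁⟩ h₁₁ h₁₂ ⟨a₂, b₂⟩ h₂₁ h₂₂ heq
    rw [Finset.HasAntidiagonal.mem_antidiagonal] at h₁₁ h₂₁
    have hb₁ : p • pdiv p b₁ = b₁ := by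
      by_contra hcon
      rw [pow_char_coeff, if_neg hcon, mul_zero] at h₁₂
      exact h₁₂ rfl
    have hb₂ : p • pdiv p b₂ = b₂ := by
      by_contra hcon
      rw [pow_char_coeff, if_neg hcon, mul_zero] at h₂₂
      exact h₂₂ rfl
    have h2 : pdiv p b₁ = pdiv p b₂ := (Prod.mk.injEq _ _ _ _ ▸ heq).2
    have hb : b₁ = b₂ := by rw [← hb₁, ← hb₂, h2]
    have ha : a₁ = a₂ := by
      have h3 := h₁₁.trans h₂₁.symm
      rw [hb] at h3
      exact add_right_cancel h3
    exact Prod.ext ha hb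
  · rintro ⟨x, y⟩ hxy hne
    rw [Finset.HasAntidiagonal.mem_antidiagonal] at hxy
    refine ⟨(p • x + c, p • y), ?_, ?_, ?_⟩
    · rw [Finset.HasAntidiagonal.mem_antidiagonal, ← hxy]
      ext i
      simp only [Finsupp.add_apply, Finsupp.smul_apply, smul_eq_mul]
      ring
    · rw [pow_char_coeff, pdiv_smul hp0, if_pos rfl]
      simpa only [coeff_Lam, MvPowerSeries.coeff_map, frobenius_def] using hne
    · simp only [pdiv_smul hp0]
      have : d - y = x := by
        ext i
        have := congrArg (fun t : Fin 2 →₀ ℕ => t i) hxy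
        simp only [Finsupp.add_apply] at this
        simp only [Finsupp.tsub_apply]
        omega
      rw [this]
  · rintro ⟨a, b⟩ h1 h2
    rw [Finset.HasAntidiagonal.mem_antidiagonal] at h1
    have hb : p • pdiv p b = b := by
      by_contra hcon
      rw [pow_char_coeff, if_neg hcon, mul_zero] at h2
      exact h2 rfl
    obtain ⟨hle, ha⟩ := key a b h1 hb
    rw [coeff_Lam, MvPowerSeries.coeff_map, frobenius_def, ← ha,
      pow_char_coeff, if_pos hb]

end KernelAux

namespace KernelAux2
open KernelAux

variable {F : Type*} [Field F]

/-- total degree of an exponent on two variables -/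
def deg (e : Fin 2 →₀ ℕ) : ℕ := e 0 + e 1

/-- bounded-degree predicate for power series -/
def Bnd (D : ℕ) (f : MvPowerSeries (Fin 2) F) : Prop :=
  ∀ e : Fin 2 →₀ ℕ, D < deg e → MvPowerSeries.coeff (R := F) e f = 0

lemma deg_add (a b : Fin 2 →₀ ℕ) : deg (a + b) = deg a + deg b := by
  simp only [deg, Finsupp.add_apply]; ring

lemma bnd_mono {D D' : ℕ} (h : D ≤ D') {f : MvPowerSeries (Fin 2) F} (hf : Bnd D f) :
    Bnd D' f := fun e he => hf e (lt_of_le_of_lt h he)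

lemma bnd_mul {D E : ℕ} {f g : MvPowerSeries (Fin 2) F} (hf : Bnd D f) (hg : Bnd E g) :
    Bnd (D + E) (f * g) := by
  classical
  intro e he
  rw [MvPowerSeries.coeff_mul]
  apply Finset.sum_eq_zero
  rintro ⟨a, b⟩ hab
  rw [Finset.HasAntidiagonal.mem_antidiagonal] at hab
  have hd : deg a + deg b = deg e := by rw [← deg_add, hab]
  rcases Nat.lt_or_ge D (deg a) with h | h
  · rw [hf a h, zero_mul]
  · have : E < deg b := by omega
    rw [hg b this, mul_zero]

lemma bnd_one : Bnd 0 (1 : MvPowerSeries (Fin 2) F) := by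
  classical
  intro e he
  rw [MvPowerSeries.coeff_one, if_neg]
  intro h
  rw [h] at he
  simp [deg] at he

lemma bnd_pow {E : ℕ} {g : MvPowerSeries (Fin 2) F} (hg : Bnd E g) (n : ℕ) :
    Bnd (n * E) (g ^ n) := by
  induction n with
  | zero => simpa using bnd_one
  | succ n ih =>
    rw [pow_succ]
    have := bnd_mul ih hg
    refine bnd_mono ?_ this
    ring_nf
    omega

lemma bnd_Lam {p D : ℕ} (hp : 0 < p) {c : Fin 2 →₀ ℕ} {f : MvPowerSeries (Fin 2) F}
    (hf : Bnd (p * D) f) : Bnd D (Lam p c f) := by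
  intro e he
  rw [coeff_Lam]
  apply hf
  have h1 : deg (p • e + c) = p * deg e + deg c := by
    simp only [deg, Finsupp.add_apply, Finsupp.smul_apply, smul_eq_mul]
    ring
  have h2 : p * (D + 1) ≤ p * deg e := Nat.mul_le_mul_left p (by omega)
  have h3 : p * (D + 1) = p * D + p := by ring
  omega

lemma bnd_map {D : ℕ} {f : MvPowerSeries (Fin 2) F} (hf : Bnd D f)
    (φ : F →+* F) : Bnd D (MvPowerSeries.map (σ := Fin 2) φ f) := by
  intro e he
  rw [MvPowerSeries.coeff_map, hf e he, map_zero]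

lemma deg_eq_sum (e : Fin 2 →₀ ℕ) : (∑ i ∈ e.support, e i) = deg e := by
  rw [show (∑ i ∈ e.support, e i) = e.sum (fun _ n => n) from rfl,
    Finsupp.sum_fintype _ _ (fun _ => rfl)]
  simp [deg, Fin.sum_univ_two]

lemma bnd_coe (t : MvPolynomial (Fin 2) F) :
    Bnd t.totalDegree (t : MvPowerSeries (Fin 2) F) := by
  intro e he
  rw [MvPolynomial.coeff_coe]
  apply MvPolynomial.coeff_eq_zero_of_totalDegree_lt
  rwa [deg_eq_sum]

lemma single_add_single (e : Fin 2 →₀ ℕ) :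
    Finsupp.single (0 : Fin 2) (e 0) + Finsupp.single 1 (e 1) = e := by
  ext i
  fin_cases i <;> simp [Finsupp.single_apply]

lemma bnd_finite [Fintype F] (D : ℕ) : {f : MvPowerSeries (Fin 2) F | Bnd D f}.Finite := by
  classical
  have hsub : {f : MvPowerSeries (Fin 2) F | Bnd D f} ⊆
      Set.range (fun v : Fin (D + 1) → Fin (D + 1) → F =>
        (fun e => if h : e 0 ≤ D ∧ e 1 ≤ D then v ⟨e 0, by omega⟩ ⟨e 1, by omega⟩ else 0 :
          MvPowerSeries (Fin 2) F)) := by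
    intro f hf
    refine ⟨fun i j => MvPowerSeries.coeff (R := F)
      (Finsupp.single 0 (i : ℕ) + Finsupp.single 1 (j : ℕ)) f, ?_⟩
    ext e
    change (if h : e 0 ≤ D ∧ e 1 ≤ D then MvPowerSeries.coeff (R := F)
      (Finsupp.single 0 (e 0) + Finsupp.single 1 (e 1)) f else 0) = MvPowerSeries.coeff (R := F) e f
    by_cases h : e 0 ≤ D ∧ e 1 ≤ D
    · simp only [dif_pos h]
      rw [single_add_single]
    · simp only [dif_neg h]
      have : D < deg e := by
        simp only [deg]
        omega
      exact (hf e this).symm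
  exact (Set.finite_range _).subset hsub

end KernelAux2

open KernelAux KernelAux2 in
/-- **Proposition 2 of the paper.**
For polynomials `P, Q ∈ 𝔽_q[X,Y]` with `Q(0,0) ≠ 0`, the `p`-kernel of the
coefficient double sequence of the power series `P·Q⁻¹ ∈ 𝔽_q[[X,Y]]` is
finite.  Two-variable polynomials are encoded as `MvPolynomial (Fin 2) F`
(variable `0` is `X`, variable `1` is `Y`), and `u(m,n)` is the coefficient
of `X^m Y^n` in `P·Q⁻¹`. -/
theorem kernel_of_rational_finite
    (F : Type*) [Field F] [Fintype F] (p : ℕ) [Fact p.Prime] [CharP F p]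
    (P Q : MvPolynomial (Fin 2) F)
    (hQ0 : MvPolynomial.eval (0 : Fin 2 → F) Q ≠ 0)
    (u : ℕ → ℕ → F)
    (hu : ∀ m n : ℕ, u m n =
      MvPowerSeries.coeff (R := F) (Finsupp.single 0 m + Finsupp.single 1 n)
        ((P : MvPowerSeries (Fin 2) F) * (Q : MvPowerSeries (Fin 2) F)⁻¹)) :
    {v : ℕ → ℕ → F | ∃ k r s : ℕ, r < p ^ k ∧ s < p ^ k ∧
        v = fun m n => u (m * p ^ k + r) (n * p ^ k + s)}.Finite := by
  classical
  have hp : p.Prime := Fact.out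
  have hp0 : p ≠ 0 := hp.ne_zero
  have hp1 : 0 < p := hp.pos
  obtain ⟨fplus, -, hcard⟩ := FiniteField.card F p
  set fn : ℕ := (fplus : ℕ) with hfn
  have hfn1 : 1 ≤ fn := fplus.one_le
  set Φ : MvPowerSeries (Fin 2) F → MvPowerSeries (Fin 2) F :=
    ⇑(MvPowerSeries.map (σ := Fin 2) (frobenius F p)) with hΦ
  -- coefficients of iterates of Φ
  have coeff_iter : ∀ (j : ℕ) (g : MvPowerSeries (Fin 2) F) (e : Fin 2 →₀ ℕ),
      MvPowerSeries.coeff (R := F) e (Φ^[j] g) = (frobenius F p)^[j] (MvPowerSeries.coeff (R := F) e g) := by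
    intro j
    induction j with
    | zero => intro g e; simp
    | succ j ih =>
      intro g e
      rw [Function.iterate_succ_apply', Function.iterate_succ_apply', hΦ,
        MvPowerSeries.coeff_map, ih]
  have hfix : ∀ g : MvPowerSeries (Fin 2) F, Φ^[fn] g = g := by
    intro g
    ext e
    rw [coeff_iter, iterate_frobenius, ← hcard, FiniteField.pow_card]
  set hQser : ℕ → MvPowerSeries (Fin 2) F :=
    fun j => Φ^[j] (Q : MvPowerSeries (Fin 2) F) with hQser_def
  -- the normalized denominator
  set Qt : MvPowerSeries (Fin 2) F := ∏ j ∈ Finset.range fn, hQser j with hQt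
  -- constant coefficients
  have hQc : MvPowerSeries.constantCoeff (σ := Fin 2) (R := F) (Q : MvPowerSeries (Fin 2) F) ≠ 0 := by
    rw [← MvPowerSeries.coeff_zero_eq_constantCoeff_apply, MvPolynomial.coeff_coe,
      ← MvPolynomial.constantCoeff_eq, ← MvPolynomial.eval_zero]
    exact hQ0
  have hQjc : ∀ j : ℕ, MvPowerSeries.constantCoeff (σ := Fin 2) (R := F) (hQser j) ≠ 0 := by
    intro j
    simp only [hQser_def]
    rw [← MvPowerSeries.coeff_zero_eq_constantCoeff_apply, coeff_iter,
      iterate_frobenius, MvPowerSeries.coeff_zero_eq_constantCoeff_apply]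
    exact pow_ne_zero _ hQc
  have hQt0 : MvPowerSeries.constantCoeff (σ := Fin 2) (R := F) Qt ≠ 0 := by
    rw [hQt, map_prod, Finset.prod_ne_zero_iff]
    exact fun j _ => hQjc j
  -- Φ is multiplicative (it is a ring hom applied pointwise)
  have hΦmul : ∀ g h : MvPowerSeries (Fin 2) F, Φ (g * h) = Φ g * Φ h :=
    fun g h => map_mul (MvPowerSeries.map (σ := Fin 2) (frobenius F p)) g h
  have hΦone : Φ 1 = 1 := map_one (MvPowerSeries.map (σ := Fin 2) (frobenius F p))
  obtain ⟨m, hm⟩ : ∃ m, fn = m + 1 := ⟨fn - 1, by omega⟩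
  -- Qt is Φ-invariant
  have hΦQt : Φ Qt = Qt := by
    have h1 : Φ Qt = ∏ j ∈ Finset.range fn, hQser (j + 1) := by
      have h2 : Φ (∏ j ∈ Finset.range fn, hQser j) = ∏ j ∈ Finset.range fn, Φ (hQser j) :=
        map_prod (MvPowerSeries.map (σ := Fin 2) (frobenius F p)) hQser (Finset.range fn)
      rw [hQt, h2]
      refine Finset.prod_congr rfl fun j _ => ?_
      rw [hQser_def]
      exact (Function.iterate_succ_apply' Φ j _).symm
    have h3 : hQser fn = hQser 0 := by
      simp only [hQser_def]
      rw [hfix, Function.iterate_zero_apply]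
    rw [h1, hm, Finset.prod_range_succ, ← hm, h3, ← Finset.prod_range_succ', ← hm, hQt]
  -- Φ fixes Qt⁻¹
  have hΦQtinv : Φ (Qt⁻¹) = Qt⁻¹ := by
    rw [MvPowerSeries.eq_inv_iff_mul_eq_one hQt0]
    calc Φ (Qt⁻¹) * Qt = Φ (Qt⁻¹) * Φ Qt := by rw [hΦQt]
      _ = Φ (Qt⁻¹ * Qt) := (hΦmul _ _).symm
      _ = Φ 1 := by rw [MvPowerSeries.inv_mul_cancel _ hQt0]
      _ = 1 := hΦone
  -- degree bounds
  set E : ℕ := Q.totalDegree with hE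
  set D : ℕ := P.totalDegree + fn * E with hD
  have hbQj : ∀ j : ℕ, Bnd E (hQser j) := by
    intro j
    simp only [hQser_def]
    induction j with
    | zero => simpa using bnd_coe Q
    | succ j ih =>
      rw [Function.iterate_succ_apply', hΦ]
      exact bnd_map ih _
  have hbndprod : ∀ (n : ℕ) (g : ℕ → ℕ), Bnd (n * E)
      (∏ j ∈ Finset.range n, hQser (g j)) := by
    intro n g
    induction n with
    | zero => simpa using bnd_one
    | succ n ih =>
      rw [Finset.prod_range_succ]
      refine bnd_mono (by ring_nf; omega) (bnd_mul ih (hbQj (g n)))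
  have hbQt : Bnd (fn * E) Qt := by
    have := hbndprod fn id
    simpa [hQt] using this
  have hED : fn * E ≤ D := by omega
  -- numerator
  set R : MvPowerSeries (Fin 2) F := ∏ j ∈ Finset.range m, hQser (j + 1) with hR
  have hQtfact : Qt = R * (Q : MvPowerSeries (Fin 2) F) := by
    have h0 : hQser 0 = (Q : MvPowerSeries (Fin 2) F) := Function.iterate_zero_apply Φ _
    rw [hQt, hm, Finset.prod_range_succ', hR, h0]
  set P' : MvPowerSeries (Fin 2) F := (P : MvPowerSeries (Fin 2) F) * R with hP'
  have hbR : Bnd (m * E) R := hbndprod m (· + 1)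
  have hbP' : Bnd D P' := by
    rw [hP']
    refine bnd_mono ?_ (bnd_mul (bnd_coe P) hbR)
    have : m * E ≤ fn * E := Nat.mul_le_mul_right E (by omega)
    omega
  -- the fraction identity
  have hfrac : (P : MvPowerSeries (Fin 2) F) * (Q : MvPowerSeries (Fin 2) F)⁻¹ = P' * Qt⁻¹ := by
    rw [MvPowerSeries.eq_mul_inv_iff_mul_eq hQt0]
    calc (P : MvPowerSeries (Fin 2) F) * (Q : MvPowerSeries (Fin 2) F)⁻¹ * Qt
        = ((P : MvPowerSeries (Fin 2) F) * R) *
          ((Q : MvPowerSeries (Fin 2) F)⁻¹ * (Q : MvPowerSeries (Fin 2) F)) := by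
          rw [hQtfact]; ring
      _ = P' := by rw [MvPowerSeries.inv_mul_cancel _ hQc, mul_one, hP']
  -- the invariant finite set
  set S : Set (MvPowerSeries (Fin 2) F) :=
    (fun A => A * Qt⁻¹) '' {A : MvPowerSeries (Fin 2) F | Bnd D A} with hS
  have hSfin : S.Finite := (bnd_finite D).image _
  -- closure of S under the Cartier operators
  have hstep : ∀ g ∈ S, ∀ c : Fin 2 →₀ ℕ, (∀ i, c i < p) → Lam p c g ∈ S := by
    rintro g ⟨A, hA, rfl⟩ c hc
    have hkey : A * Qt⁻¹ = (A * Qt ^ (p - 1)) * (Qt⁻¹) ^ p := by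
      have hps : p = (p - 1) + 1 := by omega
      have h8 : Qt ^ (p - 1) * (Qt⁻¹) ^ (p - 1) = 1 := by
        rw [← mul_pow, MvPowerSeries.mul_inv_cancel _ hQt0, one_pow]
      calc A * Qt⁻¹ = A * (Qt ^ (p - 1) * (Qt⁻¹) ^ (p - 1)) * Qt⁻¹ := by
            rw [h8, mul_one]
        _ = (A * Qt ^ (p - 1)) * ((Qt⁻¹) ^ (p - 1) * Qt⁻¹) := by ring
        _ = (A * Qt ^ (p - 1)) * (Qt⁻¹) ^ p := by
            rw [← pow_succ, ← hps]
    show Lam p c (A * Qt⁻¹) ∈ S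
    rw [hkey, Lam_mul_pow p hc, ← hΦ, hΦQtinv]
    refine ⟨Lam p c (A * Qt ^ (p - 1)), ?_, rfl⟩
    have hb1 : Bnd (D + (p - 1) * (fn * E)) (A * Qt ^ (p - 1)) :=
      bnd_mul hA (bnd_pow hbQt (p - 1))
    have hb2 : Bnd (p * D) (A * Qt ^ (p - 1)) := by
      refine bnd_mono ?_ hb1
      have h4 : (p - 1) * (fn * E) ≤ (p - 1) * D := Nat.mul_le_mul_left _ hED
      have h5 : D + (p - 1) * D = p * D := by
        have : p - 1 + 1 = p := by omega
        calc D + (p - 1) * D = ((p - 1) + 1) * D := by ring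
          _ = p * D := by rw [this]
      omega
    exact bnd_Lam hp1 hb2
  -- the coefficient-extraction map
  set coeffMap : MvPowerSeries (Fin 2) F → (ℕ → ℕ → F) :=
    fun g => fun m n => MvPowerSeries.coeff (R := F)
      (Finsupp.single 0 m + Finsupp.single 1 n) g with hcoeffMap
  -- main induction: every kernel element comes from S
  have main : ∀ k r s : ℕ, r < p ^ k → s < p ^ k → ∃ g ∈ S, ∀ m n : ℕ,
      u (m * p ^ k + r) (n * p ^ k + s) =
        MvPowerSeries.coeff (R := F) (Finsupp.single 0 m + Finsupp.single 1 n) g := by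
    intro k
    induction k with
    | zero =>
      intro r s hr hs
      have hr0 : r = 0 := by simpa using hr
      have hs0 : s = 0 := by simpa using hs
      refine ⟨P' * Qt⁻¹, ⟨P', hbP', rfl⟩, fun m n => ?_⟩
      rw [hr0, hs0]
      simpa [hfrac] using hu m n
    | succ k ih =>
      intro r s hr hs
      have hpk : 0 < p ^ k := Nat.pow_pos (n := k) hp1
      obtain ⟨g, hgS, hg⟩ := ih (r % p ^ k) (s % p ^ k) (Nat.mod_lt _ hpk) (Nat.mod_lt _ hpk)
      set a : ℕ := r / p ^ k with ha_def
      set b : ℕ := s / p ^ k with hb_def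
      have ha : a < p := by
        rw [ha_def, Nat.div_lt_iff_lt_mul hpk]
        exact lt_of_lt_of_eq hr (pow_succ' p k)
      have hb : b < p := by
        rw [hb_def, Nat.div_lt_iff_lt_mul hpk]
        exact lt_of_lt_of_eq hs (pow_succ' p k)
      set c : Fin 2 →₀ ℕ := Finsupp.single 0 a + Finsupp.single 1 b with hc_def
      have hc : ∀ i : Fin 2, c i < p := by
        intro i
        fin_cases i
        · simpa [hc_def] using ha
        · simpa [hc_def] using hb
      refine ⟨Lam p c g, hstep g hgS c hc, fun m n => ?_⟩
      have h6 : p ^ k * a + r % p ^ k = r := Nat.div_add_mod r (p ^ k)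
      have h6' : p ^ k * b + s % p ^ k = s := Nat.div_add_mod s (p ^ k)
      have harith1 : m * p ^ (k + 1) + r = (m * p + a) * p ^ k + r % p ^ k := by
        calc m * p ^ (k + 1) + r = m * (p ^ k * p) + (p ^ k * a + r % p ^ k) := by
              conv_lhs => rw [pow_succ, ← h6]
          _ = (m * p + a) * p ^ k + r % p ^ k := by ring
      have harith2 : n * p ^ (k + 1) + s = (n * p + b) * p ^ k + s % p ^ k := by
        calc n * p ^ (k + 1) + s = n * (p ^ k * p) + (p ^ k * b + s % p ^ k) := by
              conv_lhs => rw [pow_succ, ← h6']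
          _ = (n * p + b) * p ^ k + s % p ^ k := by ring
      have hidx : p • (Finsupp.single (0 : Fin 2) m + Finsupp.single 1 n) + c =
          Finsupp.single (0 : Fin 2) (m * p + a) + Finsupp.single 1 (n * p + b) := by
        ext i
        fin_cases i <;> simp [hc_def, Finsupp.single_apply] <;> ring
      rw [harith1, harith2, hg (m * p + a) (n * p + b), coeff_Lam, hidx]
  -- conclusion
  refine (hSfin.image coeffMap).subset ?_
  rintro v ⟨k, r, s, hr, hs, rfl⟩
  obtain ⟨g, hgS, hg⟩ := main k r s hr hs
  refine ⟨g, hgS, ?_⟩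
  funext m n
  rw [hcoeffMap]
  exact (hg m n).symm
end

section
/- Let p be a prime, s ≥ 1 an integer, and q = p^s. For any sequence u : ℕ → A taking values in any type A, the p-kernel of u, namely { n ↦ u(n·p^k + r) : k ∈ ℕ, 0 ≤ r < p^k }, is finite if and only if the q-kernel of u, namely { n ↦ u(n·q^k + r) : k ∈ ℕ, 0 ≤ r < q^k }, is finite. -/
/-- The `p`-kernel of a sequence is finite if and only if its `q`-kernel is
finite, for `q = p^s` a power of the prime `p` (final remark in the proof of
Proposition 2 of the paper). -/
theorem pKernel_finite_iff_qKernel_finite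
    (p : ℕ) (hp : p.Prime) (s : ℕ) (hs : 1 ≤ s) (q : ℕ) (hq : q = p ^ s)
    (A : Type*) (u : ℕ → A) :
    {v : ℕ → A | ∃ k r : ℕ, r < p ^ k ∧ v = fun n => u (n * p ^ k + r)}.Finite ↔
    {v : ℕ → A | ∃ k r : ℕ, r < q ^ k ∧ v = fun n => u (n * q ^ k + r)}.Finite := by
  have hp1 : 1 ≤ p := hp.one_lt.le
  constructor
  · intro hP
    refine hP.subset ?_
    rintro v ⟨k, r, hr, rfl⟩
    refine ⟨s * k, r, ?_, ?_⟩
    · rwa [hq, ← pow_mul] at hr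
    · rw [pow_mul, ← hq]
  · intro hQ
    have hfin : (⋃ j ∈ Finset.range s, ⋃ t ∈ Finset.range (p ^ s),
        (fun (w : ℕ → A) => fun n => w (n * p ^ j + t)) ''
          {v : ℕ → A | ∃ k r : ℕ, r < q ^ k ∧ v = fun n => u (n * q ^ k + r)}).Finite := by
      refine Set.Finite.biUnion (Finset.range s).finite_toSet fun j _ => ?_
      exact Set.Finite.biUnion (Finset.range (p ^ s)).finite_toSet fun t _ => hQ.image _
    refine hfin.subset ?_
    rintro v ⟨k, r, hr, rfl⟩
    set m := k / s with hm
    set j := k % s with hj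
    have hjs : j < s := Nat.mod_lt _ (by omega)
    have hk : s * m + j = k := Nat.div_add_mod k s
    have hqm : q ^ m = p ^ (s * m) := by rw [hq, ← pow_mul]
    have hqmpos : 0 < q ^ m := by rw [hqm]; positivity
    set r' := r % q ^ m with hr'
    set t := r / q ^ m with ht
    have hrr : q ^ m * t + r' = r := Nat.div_add_mod r (q ^ m)
    have hr'lt : r' < q ^ m := Nat.mod_lt _ hqmpos
    have htlt : t < p ^ j := by
      have : r < p ^ j * q ^ m := by
        rw [hqm, ← pow_add]
        rwa [show j + s * m = k by omega]
      exact Nat.div_lt_of_lt_mul (by rwa [mul_comm] at this)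
    have htlt' : t < p ^ s := lt_of_lt_of_le htlt (Nat.pow_le_pow_right hp1 hjs.le)
    refine Set.mem_biUnion (Finset.mem_range.mpr hjs) ?_
    refine Set.mem_biUnion (Finset.mem_range.mpr htlt') ?_
    refine ⟨fun n => u (n * q ^ m + r'), ⟨m, r', hr'lt, rfl⟩, ?_⟩
    funext n
    simp only
    congr 1
    have : p ^ j * q ^ m = p ^ k := by rw [hqm, ← pow_add]; congr 1; omega
    calc (n * p ^ j + t) * q ^ m + r'
        = n * (p ^ j * q ^ m) + (q ^ m * t + r') := by ring
      _ = n * p ^ k + r := by rw [this, hrr]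
end

section
/- Let p be a prime and let u : ℕ² → A be a double sequence with values in any type A. If the p-kernel of u, namely the set of double sequences { (m,n) ↦ u(m·p^k + r, n·p^k + s) : k ∈ ℕ, 0 ≤ r, s < p^k }, is finite, then the p-kernel of the diagonal sequence n ↦ u(n,n), namely { n ↦ u(n·p^k + r, n·p^k + r) : k ∈ ℕ, 0 ≤ r < p^k }, is also finite. -/
/-- If the `p`-kernel of a double sequence `u : ℕ² → A` is finite, then the
`p`-kernel of its diagonal sequence `n ↦ u(n,n)` is finite (used in the proof
of Corollary 1 of the paper). -/
theorem diagonal_kernel_finite_of_kernel_finite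
    (p : ℕ) (hp : p.Prime) (A : Type*) (u : ℕ → ℕ → A)
    (hker : {v : ℕ → ℕ → A | ∃ k r s : ℕ, r < p ^ k ∧ s < p ^ k ∧
        v = fun m n => u (m * p ^ k + r) (n * p ^ k + s)}.Finite) :
    {w : ℕ → A | ∃ k r : ℕ, r < p ^ k ∧
        w = fun n => u (n * p ^ k + r) (n * p ^ k + r)}.Finite := by
  apply Set.Finite.subset (hker.image (fun v => fun n => v n n))
  rintro w ⟨k, r, hr, rfl⟩
  exact ⟨_, ⟨k, r, r, hr, hr, rfl⟩, rfl⟩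
end

section
/- Let 𝔽_q be a finite field with q elements and let f = Σ_{n≥0} u_n Xⁿ ∈ 𝔽_q[[X]] be a power series whose q-kernel { n ↦ u(n·q^k + r) : k ∈ ℕ, 0 ≤ r < q^k } is finite, of cardinality d. Then f, f^q, f^{q²}, …, f^{q^d} are linearly dependent over 𝔽_q(X): there exist polynomials B₀, B₁, …, B_d ∈ 𝔽_q[X], not all zero, such that Σ_{i=0}^{d} Bᵢ(X) · f(X)^{qⁱ} = 0 in 𝔽_q[[X]]. -/
open PowerSeries Polynomial
open scoped RatFunc

section Aux
variable {F : Type*} [Field F] [Fintype F]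

/-- coefficient of the `q`-th power of a power series over `𝔽_q`. -/
lemma coeff_pow_fieldCard (q : ℕ) (hq : Fintype.card F = q) (f : PowerSeries F) (m : ℕ) :
    PowerSeries.coeff m (f ^ q) =
      if q ∣ m then (PowerSeries.coeff (m / q) f) ^ q else 0 := by
  have : CharP F (ringChar F) := ringChar.charP F
  obtain ⟨e, hp, hcard⟩ := FiniteField.card F (ringChar F)
  set p := ringChar F
  haveI : Fact p.Prime := ⟨hp⟩
  haveI : ExpChar F p := ExpChar.prime hp
  have hqpe : q = p ^ (e : ℕ) := by rw [← hq, hcard]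
  have hq0 : 0 < q := by rw [hqpe]; exact pow_pos hp.pos _
  have key : ∀ g : F[X], (g ^ q).coeff m = if q ∣ m then (g.coeff (m / q)) ^ q else 0 := by
    intro g
    have h1 : g ^ q = (Polynomial.expand F q g).map (frobenius F p ^ (e : ℕ)) := by
      rw [hqpe, ← Polynomial.map_iterateFrobenius_expand (p := p)]
      congr 1
      ext a
      rw [RingHom.coe_pow, iterate_frobenius, iterateFrobenius_def]
    rw [h1, Polynomial.coeff_map]
    have h2 : ∀ a : F, (frobenius F p ^ (e : ℕ)) a = a ^ q := by
      intro a
      rw [hqpe]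
      have := iterate_frobenius (R := F) (p := p) (n := (e : ℕ)) (x := a)
      rw [← this, ← RingHom.coe_pow]
    rw [h2, Polynomial.coeff_expand hq0]
    split_ifs with h
    · rfl
    · exact zero_pow hq0.ne'
  have h1 : PowerSeries.coeff m (f ^ q)
      = PowerSeries.coeff m (((trunc (m + 1) f : F[X]) : PowerSeries F) ^ q) := by
    conv_lhs => rw [← coeff_coe_trunc_of_lt (Nat.lt_succ_self m)]
    rw [← trunc_trunc_pow f (m + 1) q, coeff_coe_trunc_of_lt (Nat.lt_succ_self m)]
  rw [h1, ← Polynomial.coe_pow, Polynomial.coeff_coe, key]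
  have : (trunc (m + 1) f).coeff (m / q) = PowerSeries.coeff (m / q) f := by
    rw [coeff_trunc, if_pos (Nat.lt_succ_of_le (Nat.div_le_self m q))]
  rw [this]

lemma mk_decomp (q : ℕ) (hq : Fintype.card F = q) (v : ℕ → F) :
    PowerSeries.mk v = ∑ r ∈ Finset.range q,
      (PowerSeries.X ^ r) * (PowerSeries.mk (fun n => v (n * q + r))) ^ q := by
  have hq1 : 1 < q := hq ▸ Fintype.one_lt_card
  have hq0 : 0 < q := one_pos.trans hq1
  ext m
  rw [coeff_mk, map_sum, Finset.sum_eq_single (m % q)]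
  · have hr : m % q ≤ m := Nat.mod_le m q
    rw [PowerSeries.coeff_X_pow_mul' _ _ _, if_pos hr, coeff_pow_fieldCard q hq]
    have hdvd : q ∣ m - m % q := by
      refine ⟨m / q, ?_⟩
      have := Nat.mod_add_div m q
      omega
    rw [if_pos hdvd]
    have hdiv : (m - m % q) / q = m / q := by
      obtain ⟨t, ht⟩ := hdvd
      have h2 := Nat.mod_add_div m q
      have : t = m / q := by
        have : q * t = q * (m / q) := by omega
        exact Nat.eq_of_mul_eq_mul_left hq0 this
      rw [ht, this, Nat.mul_div_cancel_left _ hq0]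
    rw [hdiv, coeff_mk]
    have harg : m / q * q + m % q = m := by
      rw [mul_comm]; exact Nat.div_add_mod m q
    rw [harg, ← hq, FiniteField.pow_card]
  · intro r hrq hne
    rw [Finset.mem_range] at hrq
    rw [PowerSeries.coeff_X_pow_mul' _ _ _]
    split_ifs with hle
    · rw [coeff_pow_fieldCard q hq, if_neg]
      intro ⟨t, ht⟩
      apply hne
      have : m = q * t + r := by omega
      rw [this, Nat.mul_add_mod, Nat.mod_eq_of_lt hrq]
    · rfl
  · intro h
    exact absurd (Finset.mem_range.2 (Nat.mod_lt m hq0)) h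

end Aux

/-- **Section 4.1 of the paper.**  If the `q`-kernel of the coefficient
sequence `u` of `f = ∑ u_n Xⁿ ∈ 𝔽_q[[X]]` is finite of cardinality `d`, then
`f, f^q, f^{q²}, …, f^{q^d}` are linearly dependent over `𝔽_q(X)`: there are
polynomials `B₀, …, B_d ∈ 𝔽_q[X]`, not all zero, with
`∑_{i=0}^{d} Bᵢ(X)·f^{qⁱ} = 0`. -/
theorem linear_relation_of_kernel_finite
    (F : Type*) [Field F] [Fintype F] (q : ℕ) (hq : Fintype.card F = q)
    (u : ℕ → F) (d : ℕ)
    (hfin : {v : ℕ → F | ∃ k r : ℕ, r < q ^ k ∧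
        v = fun n => u (n * q ^ k + r)}.Finite)
    (hcard : {v : ℕ → F | ∃ k r : ℕ, r < q ^ k ∧
        v = fun n => u (n * q ^ k + r)}.ncard = d) :
    ∃ B : Fin (d + 1) → Polynomial F, B ≠ 0 ∧
      ∑ i : Fin (d + 1),
        ((B i : PowerSeries F) * (PowerSeries.mk u) ^ q ^ (i : ℕ)) = 0 := by
  classical
  set S := {v : ℕ → F | ∃ k r : ℕ, r < q ^ k ∧ v = fun n => u (n * q ^ k + r)} with hS
  set K := RatFunc F
  set L := LaurentSeries F
  set ι : PowerSeries F →+* L := HahnSeries.ofPowerSeries ℤ F with hι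
  -- characteristic facts
  have hchar : CharP F (ringChar F) := ringChar.charP F
  obtain ⟨e, hp, hcardF⟩ := FiniteField.card F (ringChar F)
  set p := ringChar F
  haveI : Fact p.Prime := ⟨hp⟩
  have hqpe : q = p ^ (e : ℕ) := by rw [← hq, hcardF]
  have hq1 : 1 < q := hq ▸ Fintype.one_lt_card
  haveI : CharP L p := charP_of_injective_algebraMap (algebraMap F L).injective p
  -- the basic families
  set G : ℕ → (ℕ → F) → L := fun k w => (ι (PowerSeries.mk w)) ^ q ^ k with hG
  -- kernel closure
  have hSclosed : ∀ v ∈ S, ∀ r < q, (fun n => v (n * q + r)) ∈ S := by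
    rintro v ⟨k, r₀, hr₀, rfl⟩ r hr
    refine ⟨k + 1, r * q ^ k + r₀, ?_, ?_⟩
    · calc r * q ^ k + r₀ < r * q ^ k + q ^ k := by omega
        _ = (r + 1) * q ^ k := by ring
        _ ≤ q * q ^ k := Nat.mul_le_mul_right _ hr
        _ = q ^ (k + 1) := by ring
    · funext n; simp only; congr 1; ring
  have hu : u ∈ S := ⟨0, 0, by norm_num, by funext n; simp⟩
  -- Frobenius on L
  have hfrob : ∀ k : ℕ, ∀ x : L, iterateFrobenius L p ((e : ℕ) * k) x = x ^ q ^ k := by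
    intro k x
    rw [iterateFrobenius_def, hqpe, ← pow_mul]
  -- the span chain
  have hXmap : (algebraMap K L) RatFunc.X = ι PowerSeries.X := by
    rw [hι, HahnSeries.ofPowerSeries_X]; exact RatFunc.coe_X
  have hstep : ∀ k : ℕ, Submodule.span K (G k '' S) ≤ Submodule.span K (G (k + 1) '' S) := by
    intro k
    rw [Submodule.span_le]
    rintro x ⟨w, hw, rfl⟩
    have hdec := congrArg ι (mk_decomp q hq w)
    simp only [map_sum, map_mul, map_pow] at hdec
    have hGk : G k w = ∑ r ∈ Finset.range q,
        (RatFunc.X ^ (r * q ^ k) : K) • G (k + 1) (fun n => w (n * q + r)) := by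
      calc G k w = iterateFrobenius L p ((e : ℕ) * k) (ι (PowerSeries.mk w)) := (hfrob k _).symm
        _ = ∑ r ∈ Finset.range q, iterateFrobenius L p ((e : ℕ) * k)
              (ι PowerSeries.X ^ r * ι (PowerSeries.mk (fun n => w (n * q + r))) ^ q) := by
            rw [hdec, map_sum]
        _ = ∑ r ∈ Finset.range q,
              (RatFunc.X ^ (r * q ^ k) : K) • G (k + 1) (fun n => w (n * q + r)) := by
            refine Finset.sum_congr rfl fun r _ => ?_
            rw [map_mul, hfrob, hfrob, Algebra.smul_def]
            congr 1
            · rw [map_pow, hXmap, ← pow_mul]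
            · rw [hG]
              simp only
              rw [← pow_mul, ← pow_succ']
    rw [hGk]
    refine Submodule.sum_mem _ fun r hr => Submodule.smul_mem _ _ (Submodule.subset_span ?_)
    exact ⟨_, hSclosed w hw r (Finset.mem_range.mp hr), rfl⟩
  have hchain : ∀ i j : ℕ, i ≤ j →
      Submodule.span K (G i '' S) ≤ Submodule.span K (G j '' S) := by
    intro i j hij
    induction j, hij using Nat.le_induction with
    | base => exact le_refl _
    | succ j hij ih => exact ih.trans (hstep j)
  -- finite spanning set and finrank bound
  set T : Finset L := hfin.toFinset.image (G d) with hT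
  set M : Submodule K L := Submodule.span K (T : Set L) with hM
  haveI : FiniteDimensional K M := FiniteDimensional.span_of_finite K T.finite_toSet
  have hfr : Module.finrank K M ≤ d := by
    have h1 := finrank_span_finset_le_card (R := K) T
    rw [Set.finrank] at h1
    refine le_trans h1 (le_trans Finset.card_image_le ?_)
    rw [← hcard, Set.ncard_eq_toFinset_card S hfin]
  have hTS : (T : Set L) = G d '' S := by
    rw [hT, Finset.coe_image, Set.Finite.coe_toFinset]
  have hmem : ∀ i : Fin (d + 1), G (i : ℕ) u ∈ M := by
    intro i
    rw [hM, hTS]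
    exact hchain i d (Nat.lt_succ_iff.mp i.isLt) (Submodule.subset_span ⟨u, hu, rfl⟩)
  have hnli : ¬ LinearIndependent K (fun i : Fin (d + 1) => (⟨G (i : ℕ) u, hmem i⟩ : M)) := by
    intro h
    have h2 := h.fintype_card_le_finrank
    rw [Fintype.card_fin] at h2
    omega
  obtain ⟨c, hcsum, i₀, hci₀⟩ := Fintype.not_linearIndependent_iff.mp hnli
  have hcsumL : ∑ i : Fin (d + 1), c i • G (i : ℕ) u = 0 := by
    have h3 := congrArg (Subtype.val) hcsum
    simpa using h3
  -- clear denominators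
  set s0 : Polynomial F := ∏ j : Fin (d + 1), (c j).denom with hs0
  have hdne : ∀ j : Fin (d + 1), (c j).denom ≠ 0 := fun j => RatFunc.denom_ne_zero _
  set B : Fin (d + 1) → Polynomial F :=
    fun i => (c i).num * ∏ j ∈ Finset.univ.erase i, (c j).denom with hB
  have hBalg : ∀ i, algebraMap (Polynomial F) K (B i) = c i * algebraMap (Polynomial F) K s0 := by
    intro i
    have hnum : (algebraMap (Polynomial F) K (c i).num)
        = c i * algebraMap (Polynomial F) K (c i).denom := by
      have h4 := RatFunc.num_div_denom (c i)
      have hd : algebraMap (Polynomial F) K (c i).denom ≠ 0 :=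
        RatFunc.algebraMap_ne_zero (hdne i)
      rw [div_eq_iff hd] at h4
      rw [h4]
    rw [hB, hs0]
    simp only [map_mul, map_prod]
    rw [← Finset.mul_prod_erase _ _ (Finset.mem_univ i), hnum]
    ring
  -- the relation over Laurent series
  have hrelL : ∑ i : Fin (d + 1), ι ((B i : PowerSeries F)) * G (i : ℕ) u = 0 := by
    have hcoe : ∀ i, ι ((B i : PowerSeries F))
        = algebraMap K L (c i) * algebraMap K L (algebraMap (Polynomial F) K s0) := by
      intro i
      have h5 : ι ((B i : PowerSeries F)) = algebraMap K L ((B i : K)) := by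
        rw [hι]
        exact RatFunc.coe_coe (B i)
      rw [h5]
      show algebraMap K L (algebraMap (Polynomial F) K (B i)) = _
      rw [hBalg i, map_mul]
    calc ∑ i : Fin (d + 1), ι ((B i : PowerSeries F)) * G (i : ℕ) u
        = algebraMap K L (algebraMap (Polynomial F) K s0)
            * ∑ i : Fin (d + 1), c i • G (i : ℕ) u := by
          rw [Finset.mul_sum]
          refine Finset.sum_congr rfl fun i _ => ?_
          rw [hcoe i, Algebra.smul_def]
          ring
      _ = 0 := by rw [hcsumL, mul_zero]
  refine ⟨B, ?_, ?_⟩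
  · intro h0
    have h6 : B i₀ = 0 := congrFun h0 i₀
    have h7 : B i₀ ≠ 0 := by
      rw [hB]
      exact mul_ne_zero (RatFunc.num_ne_zero hci₀)
        (Finset.prod_ne_zero_iff.mpr fun j _ => hdne j)
    exact h7 h6
  · apply HahnSeries.ofPowerSeries_injective (R := F) (Γ := ℤ)
    rw [map_sum, map_zero]
    have h8 : ∀ i : Fin (d + 1),
        (HahnSeries.ofPowerSeries ℤ F) ((B i : PowerSeries F) * (PowerSeries.mk u) ^ q ^ (i : ℕ))
          = ι ((B i : PowerSeries F)) * G (i : ℕ) u := by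
      intro i
      rw [map_mul, map_pow, hι, hG]
    rw [Finset.sum_congr rfl fun i _ => h8 i]
    exact hrelL
end

section
/- Let t : ℕ → 𝔽₂ be the Thue–Morse sequence, where t_n is the parity of the number of 1's in the binary expansion of n, and let f = Σ_{n≥0} t_n Xⁿ ∈ 𝔽₂[[X]]. Then (1+X)³ f² + (1+X)² f + X = 0 in 𝔽₂[[X]]. -/
open PowerSeries

private lemma tm_aux_sum (t : ℕ → ZMod 2) (n : ℕ) :
    ∑ p ∈ Finset.HasAntidiagonal.antidiagonal n, t p.1 * t p.2 =
      if Even n then t (n / 2) else 0 := by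
  rcases Nat.even_or_odd n with ⟨m, hm⟩ | ⟨m, hm⟩
  · subst hm
    rw [if_pos ⟨m, rfl⟩]
    have hmem : ((m, m) : ℕ × ℕ) ∈ Finset.HasAntidiagonal.antidiagonal (m + m) := by simp
    rw [← Finset.add_sum_erase _ _ hmem]
    have hz : ∑ p ∈ (Finset.HasAntidiagonal.antidiagonal (m + m)).erase (m, m), t p.1 * t p.2 = 0 := by
      refine Finset.sum_involution (fun p _ => (p.2, p.1)) ?_ ?_ ?_ ?_
      · intro p _
        rw [mul_comm]
        exact CharTwo.add_self_eq_zero _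
      · intro p hp _ hcontra
        have hcontra' : (p.2, p.1) = p := hcontra
        have h1 : p.2 = p.1 := congrArg Prod.fst hcontra'
        have h2 := Finset.mem_erase.1 hp
        apply h2.1
        have h3 := Finset.HasAntidiagonal.mem_antidiagonal.1 h2.2
        have h4 : p.1 = m := by omega
        have h5 : p.2 = m := by omega
        exact Prod.ext h4 h5
      · intro p hp
        have h2 := Finset.mem_erase.1 hp
        have h3 := Finset.HasAntidiagonal.mem_antidiagonal.1 h2.2
        show (p.2, p.1) ∈ (Finset.HasAntidiagonal.antidiagonal (m + m)).erase (m, m)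
        refine Finset.mem_erase.2 ⟨?_, Finset.HasAntidiagonal.mem_antidiagonal.2 (by omega)⟩
        intro hcontra
        apply h2.1
        have h4 : p.2 = m := congrArg Prod.fst hcontra
        have h5 : p.1 = m := congrArg Prod.snd hcontra
        exact Prod.ext h5 h4
      · intro p _; rfl
    rw [hz, add_zero]
    have hsq : ∀ a : ZMod 2, a * a = a := by decide
    have hm2 : (m + m) / 2 = m := by omega
    rw [hm2]
    exact hsq (t m)
  · subst hm
    rw [if_neg (by simp only [Nat.even_iff]; omega)]
    refine Finset.sum_involution (fun p _ => (p.2, p.1)) ?_ ?_ ?_ ?_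
    · intro p _
      rw [mul_comm]
      exact CharTwo.add_self_eq_zero _
    · intro p hp _ hcontra
      have hcontra' : (p.2, p.1) = p := hcontra
      have h1 : p.2 = p.1 := congrArg Prod.fst hcontra'
      have h3 := Finset.HasAntidiagonal.mem_antidiagonal.1 hp
      omega
    · intro p hp
      have h3 := Finset.HasAntidiagonal.mem_antidiagonal.1 hp
      show (p.2, p.1) ∈ Finset.HasAntidiagonal.antidiagonal (2 * m + 1)
      exact Finset.HasAntidiagonal.mem_antidiagonal.2 (by omega)
    · intro p _; rfl

private lemma tm_step (t : ℕ → ZMod 2) (ht : ∀ n, t n = ((Nat.digits 2 n).sum : ZMod 2))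
    (n : ℕ) (hn : 0 < n) : t n = ((n % 2 : ℕ) : ZMod 2) + t (n / 2) := by
  rw [ht n, ht (n / 2), Nat.digits_def' (by norm_num) hn]
  push_cast [List.sum_cons]
  ring

/-- **Example 1 of the paper.**  The generating series `f = ∑ t_n Xⁿ` of the
Thue–Morse sequence `t` over `𝔽₂` (where `t_n` is the parity of the number of
`1`'s in the binary expansion of `n`) satisfies
`(1+X)³ f² + (1+X)² f + X = 0` in `𝔽₂[[X]]`. -/
theorem thue_morse_algebraic
    (t : ℕ → ZMod 2) (ht : ∀ n, t n = ((Nat.digits 2 n).sum : ZMod 2))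
    (f : PowerSeries (ZMod 2)) (hf : f = PowerSeries.mk t) :
    (1 + PowerSeries.X) ^ 3 * f ^ 2 + (1 + PowerSeries.X) ^ 2 * f
        + PowerSeries.X = 0 := by
  subst hf
  have h2 : (2 : PowerSeries (ZMod 2)) = 0 := by
    have h : (2 : PowerSeries (ZMod 2)) = PowerSeries.C (R := ZMod 2) 2 := by
      simp [map_ofNat]
    rw [h, show (2 : ZMod 2) = 0 by decide, map_zero]
  have key : (1 + X) ^ 3 * (mk t) ^ 2 + (1 + X) ^ 2 * (mk t) + X
      = (mk t * mk t + mk t * mk t * X ^ 1 + mk t * mk t * X ^ 2 + mk t * mk t * X ^ 3)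
        + (mk t + mk t * X ^ 2) + X := by
    linear_combination (X * (mk t : PowerSeries (ZMod 2)) ^ 2
      + X ^ 2 * (mk t : PowerSeries (ZMod 2)) ^ 2 + X * (mk t : PowerSeries (ZMod 2))) * h2
  rw [key]
  have hq : ∀ d : ℕ, (coeff (R := ZMod 2) d) (mk t * mk t) = if Even d then t (d / 2) else 0 := by
    intro d
    rw [coeff_mul]
    simp only [coeff_mk]
    exact tm_aux_sum t d
  have teven : ∀ m : ℕ, 0 < m → t (2 * m) = t m := by
    intro m hm
    rw [tm_step t ht (2 * m) (by omega), show 2 * m % 2 = 0 by omega,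
      show 2 * m / 2 = m by omega]
    simp
  have todd : ∀ m : ℕ, t (2 * m + 1) = 1 + t m := by
    intro m
    rw [tm_step t ht (2 * m + 1) (by omega), show (2 * m + 1) % 2 = 1 by omega,
      show (2 * m + 1) / 2 = m by omega]
    simp
  have t0 : t 0 = 0 := by rw [ht]; simp
  have t1 : t 1 = 1 := by rw [ht]; simp
  have t2 : t 2 = 1 := by rw [ht]; norm_num
  ext n
  simp only [map_add, coeff_mul_X_pow', hq, map_zero, coeff_X, coeff_mk]
  match n with
  | 0 => simp [t0]
  | 1 => simp [Nat.even_iff, t0, t1]; decide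
  | 2 => simp [Nat.even_iff, t0, t1, t2]; decide
  | (k + 3) =>
    rcases Nat.even_or_odd k with ⟨j, hj⟩ | ⟨j, hj⟩
    · -- n = 2j + 3, odd
      subst hj
      have e1 : ¬ Even (j + j + 3) := by simp only [Nat.even_iff]; omega
      have e2 : Even (j + j + 3 - 1) := by simp only [Nat.even_iff]; omega
      have e3 : ¬ Even (j + j + 3 - 2) := by simp only [Nat.even_iff]; omega
      have e4 : Even (j + j + 3 - 3) := by simp only [Nat.even_iff]; omega
      simp only [if_neg e1, if_pos e2, if_neg e3, if_pos e4,
        if_pos (by omega : (1:ℕ) ≤ j + j + 3), if_pos (by omega : (2:ℕ) ≤ j + j + 3),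
        if_pos (by omega : (3:ℕ) ≤ j + j + 3), if_neg (by omega : ¬ j + j + 3 = 1)]
      rw [show (j + j + 3 - 1) / 2 = j + 1 by omega, show (j + j + 3 - 3) / 2 = j by omega,
        show j + j + 3 = 2 * (j + 1) + 1 by ring, todd,
        show 2 * (j + 1) + 1 - 2 = 2 * j + 1 by omega, todd]
      generalize t (j + 1) = a
      generalize t j = b
      revert a b; decide
    · -- n = 2j + 4, even
      subst hj
      have e1 : Even (2 * j + 1 + 3) := by simp only [Nat.even_iff]; omega
      have e2 : ¬ Even (2 * j + 1 + 3 - 1) := by simp only [Nat.even_iff]; omega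
      have e3 : Even (2 * j + 1 + 3 - 2) := by simp only [Nat.even_iff]; omega
      have e4 : ¬ Even (2 * j + 1 + 3 - 3) := by simp only [Nat.even_iff]; omega
      simp only [if_pos e1, if_neg e2, if_pos e3, if_neg e4,
        if_pos (by omega : (1:ℕ) ≤ 2 * j + 1 + 3), if_pos (by omega : (2:ℕ) ≤ 2 * j + 1 + 3),
        if_pos (by omega : (3:ℕ) ≤ 2 * j + 1 + 3), if_neg (by omega : ¬ 2 * j + 1 + 3 = 1)]
      rw [show (2 * j + 1 + 3) / 2 = j + 2 by omega, show (2 * j + 1 + 3 - 2) / 2 = j + 1 by omega,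
        show 2 * j + 1 + 3 = 2 * (j + 2) by ring, teven _ (by omega),
        show 2 * (j + 2) - 2 = 2 * (j + 1) by omega, teven _ (by omega)]
      generalize t (j + 2) = a
      generalize t (j + 1) = b
      revert a b; decide
end
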